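/- arXiv:1701.08593 — 6 statements merged into one kernel-verified Lean document; each statement's English description precedes it below -/
import Mathlib

section
/- Let X be a separable metric space carrying a measure μ which is s-regular on X, let 0 < t < s, and let A ⊆ X be a t-regular set (with a measure ν which is t-regular on A, with constants a_ν, b_ν, r_ν, and ν(X∖A)=0). Then A is uniformly ρ-porous for some ρ > 0 which depends only on s, t, a_μ, b_μ, a_ν and b_ν. -/
set_option maxHeartbeats 1000000


open Metric MeasureTheory Set Filter
open scoped ENNReal NNReal Topology

/-- `por A x r`: the porosity of `A` at the point `x` at scale `r`, defined as
`sup {ρ ≥ 0 : ∃ y, B(y, ρr) ∩ A = ∅ and ρr + d(x,y) ≤ r}` (closed balls). -/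
noncomputable def por {X : Type*} [MetricSpace X] (A : Set X) (x : X) (r : ℝ) : ℝ :=
  sSup {ρ : ℝ | 0 ≤ ρ ∧ ∃ y : X, closedBall y (ρ * r) ∩ A = ∅ ∧ ρ * r + dist x y ≤ r}

/-- `porAt A x = liminf_{r ↓ 0} por A x r`. -/
noncomputable def porAt {X : Type*} [MetricSpace X] (A : Set X) (x : X) : ℝ :=
  Filter.liminf (fun r => por A x r) (nhdsWithin (0 : ℝ) (Set.Ioi 0))

/-- `porosity A = inf_{x ∈ A} porAt A x`. -/
noncomputable def porosity {X : Type*} [MetricSpace X] (A : Set X) : ℝ :=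
  sInf (porAt A '' A)

/-- `A` is uniformly `ρ`-porous with porosity scale `rp`:
`por A x r ≥ ρ` for all `x ∈ A` and `0 < r < rp`. -/
def UniformlyPorousWith {X : Type*} [MetricSpace X] (A : Set X) (ρ rp : ℝ) : Prop :=
  ∀ x ∈ A, ∀ r : ℝ, 0 < r → r < rp → ρ ≤ por A x r

/-- `μ` is `s`-regular on `E` with constants `a ≤ b` and scale `rμ`:
`a r^s ≤ μ(B(x,r)) ≤ b r^s` for all `x ∈ E` and `0 < r < rμ`. -/
def IsRegularOn {X : Type*} [MetricSpace X] [MeasurableSpace X]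
    (μ : Measure X) (s : ℝ) (E : Set X) (a b rμ : ℝ) : Prop :=
  ∀ x ∈ E, ∀ r : ℝ, 0 < r → r < rμ →
    ENNReal.ofReal (a * r ^ s) ≤ μ (closedBall x r) ∧
      μ (closedBall x r) ≤ ENNReal.ofReal (b * r ^ s)

lemma enn_le₁ (k : ℕ) (c d : ℝ) (hc : 0 ≤ c) (hd : 0 ≤ d)
    (h : (k : ℝ≥0∞) * ENNReal.ofReal c ≤ ENNReal.ofReal d) : (k : ℝ) * c ≤ d := by
  rw [show ((k : ℝ≥0∞)) = ENNReal.ofReal (k : ℝ) by simp,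
    ← ENNReal.ofReal_mul (by positivity)] at h
  exact (ENNReal.ofReal_le_ofReal_iff hd).mp h

lemma enn_le₂ (k : ℕ) (c d : ℝ) (hd : 0 ≤ d)
    (h : ENNReal.ofReal c ≤ (k : ℝ≥0∞) * ENNReal.ofReal d) : c ≤ (k : ℝ) * d := by
  rw [show ((k : ℝ≥0∞)) = ENNReal.ofReal (k : ℝ) by simp,
    ← ENNReal.ofReal_mul (by positivity)] at h
  exact (ENNReal.ofReal_le_ofReal_iff (by positivity)).mp h

lemma count_le {X : Type*} [MetricSpace X] [MeasurableSpace X] [BorelSpace X]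
    (μ : Measure X) (F : Finset X) (g : X → X) (e : ℝ) (S : Set X) (c : ℝ≥0∞)
    (hdisj : (↑F : Set X).PairwiseDisjoint (fun z => closedBall (g z) e))
    (hlow : ∀ z ∈ F, c ≤ μ (closedBall (g z) e))
    (hsub : ∀ z ∈ F, closedBall (g z) e ⊆ S) :
    (F.card : ℝ≥0∞) * c ≤ μ S := by
  calc (F.card : ℝ≥0∞) * c = ∑ _z ∈ F, c := by rw [Finset.sum_const, nsmul_eq_mul]
  _ ≤ ∑ z ∈ F, μ (closedBall (g z) e) := Finset.sum_le_sum hlow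
  _ = μ (⋃ z ∈ F, closedBall (g z) e) :=
      (measure_biUnion_finset hdisj fun _ _ => measurableSet_closedBall).symm
  _ ≤ μ S := measure_mono (Set.iUnion₂_subset hsub)

/-- If `μ` is `s`-regular on a separable metric space `X`, `0 < t < s`,
and `A ⊆ X` is a `t`-regular set (witnessed by `ν` with constants `a_ν, b_ν, r_ν` and
`ν(X ∖ A) = 0`), then `A` is uniformly `ρ`-porous for some `ρ > 0` depending only on
`s, t, a_μ, b_μ, a_ν, b_ν`. -/
theorem stmt3 (s t a b aν bν : ℝ) (ht : 0 < t) (hts : t < s)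
    (ha : 0 < a) (hab : a ≤ b) (haν : 0 < aν) (habν : aν ≤ bν) :
    ∃ ρ : ℝ, 0 < ρ ∧
      ∀ (X : Type*) [MetricSpace X] [TopologicalSpace.SeparableSpace X]
        [MeasurableSpace X] [BorelSpace X]
        (μ ν : Measure X) (rμ rν : ℝ) (A : Set X), 0 < rμ → 0 < rν →
        IsRegularOn μ s (Set.univ : Set X) a b rμ →
        IsRegularOn ν t A aν bν rν → ν Aᶜ = 0 →
        ∃ rp : ℝ, 0 < rp ∧ UniformlyPorousWith A ρ rp := by
  have hb : 0 < b := lt_of_lt_of_le ha hab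
  have hbν : 0 < bν := lt_of_lt_of_le haν habν
  set K : ℝ := a * aν / (b * bν * (32 : ℝ) ^ s) with hKdef
  have hK : 0 < K := by positivity
  set ρ : ℝ := min (1/16) ((K/2) ^ (1/(s-t))) with hρdef
  have hst : (0:ℝ) < s - t := by linarith
  have hρ : 0 < ρ := lt_min (by norm_num) (Real.rpow_pos_of_pos (by positivity) _)
  have hρ16 : ρ ≤ 1/16 := min_le_left _ _
  have hρK : ρ ^ (s - t) < K := by
    have h1 : ρ ≤ (K/2) ^ (1/(s-t)) := min_le_right _ _
    have h2 : ρ ^ (s-t) ≤ ((K/2) ^ (1/(s-t))) ^ (s-t) :=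
      Real.rpow_le_rpow hρ.le h1 hst.le
    rw [← Real.rpow_mul (by positivity), one_div_mul_cancel hst.ne', Real.rpow_one] at h2
    linarith
  refine ⟨ρ, hρ, ?_⟩
  intro X _ _ _ _ μ ν rμ rν A hrμ hrν hμ hν _hνA
  refine ⟨min rμ rν, lt_min hrμ hrν, ?_⟩
  intro x hx r hr hrp
  have hrμ' : r < rμ := hrp.trans_le (min_le_left _ _)
  have hrν' : r < rν := hrp.trans_le (min_le_right _ _)
  have hρr : 0 < ρ * r := mul_pos hρ hr
  have hρr16 : ρ * r ≤ r / 16 := by nlinarith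
  -- reduce to producing a witness ball
  have hbdd : BddAbove {ρ' : ℝ | 0 ≤ ρ' ∧ ∃ y : X,
      closedBall y (ρ' * r) ∩ A = ∅ ∧ ρ' * r + dist x y ≤ r} := by
    refine ⟨1, fun p hp => ?_⟩
    obtain ⟨hp0, y, -, hy⟩ := hp
    have hd : 0 ≤ dist x y := dist_nonneg
    nlinarith
  suffices hex : ∃ y : X, closedBall y (ρ * r) ∩ A = ∅ ∧ ρ * r + dist x y ≤ r by
    exact le_csSup hbdd ⟨hρ.le, hex⟩
  by_contra hcon
  push_neg at hcon
  -- density of A at scale ρr in B(x, r/2)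
  have density : ∀ z ∈ closedBall x (r/2), ∃ p, p ∈ closedBall z (ρ * r) ∧ p ∈ A := by
    intro z hz
    rcases Set.eq_empty_or_nonempty (closedBall z (ρ * r) ∩ A) with he | hne
    · exfalso
      have h1 := hcon z he
      have h2 : dist z x ≤ r/2 := mem_closedBall.mp hz
      rw [dist_comm] at h2
      nlinarith
    · obtain ⟨p, hp⟩ := hne
      exact ⟨p, hp.1, hp.2⟩
  choose! f hf1 hf2 using density
  -- Vitali covering
  obtain ⟨u, hu, hdisj, hcov⟩ :=
    Vitali.exists_disjoint_subfamily_covering_enlargement_closedBall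
      (closedBall x (r/2)) (id : X → X) (fun _ => 4 * (ρ * r)) (4 * (ρ * r))
      (fun _ _ => le_rfl) 4 (by norm_num)
  have hzmem : ∀ z ∈ u, dist z x ≤ r/2 := fun z hz => mem_closedBall.mp (hu hz)
  -- finiteness of u, with the cardinality bound
  have key : ∀ F : Finset X, ↑F ⊆ u → (F.card : ℝ) * (a * (4*(ρ*r)) ^ s) ≤ b * r ^ s := by
    intro F hF
    refine enn_le₁ _ _ _ (by positivity) (by positivity) ?_
    refine (count_le μ F id (4*(ρ*r)) (closedBall x r) _ ?_ ?_ ?_).trans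
      (hμ x (Set.mem_univ x) r hr hrμ').2
    · exact hdisj.subset hF
    · exact fun z _ => (hμ z (Set.mem_univ z) _ (by positivity) (by linarith)).1
    · intro z hz
      refine closedBall_subset_closedBall' ?_
      have := hzmem z (hF hz)
      simp only [id]
      linarith
  have hufin : u.Finite := by
    by_contra hinf
    obtain ⟨F, hFu, hcard⟩ := Set.Infinite.exists_subset_card_eq hinf
      (⌈(b * r ^ s) / (a * (4*(ρ*r)) ^ s)⌉₊ + 1)
    have h := key F hFu
    rw [hcard] at h
    have hc : 0 < a * (4*(ρ*r)) ^ s := by positivity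
    have hceil := Nat.le_ceil ((b * r ^ s) / (a * (4*(ρ*r)) ^ s))
    rw [div_le_iff₀ hc] at hceil
    push_cast at h
    nlinarith
  set F : Finset X := hufin.toFinset with hFdef
  have hFu : ∀ z, z ∈ F ↔ z ∈ u := fun z => hufin.mem_toFinset
  set N : ℕ := F.card with hNdef
  -- ν counting bound
  have hν_count : (N : ℝ) * (aν * (ρ*r) ^ t) ≤ bν * r ^ t := by
    refine enn_le₁ _ _ _ (by positivity) (by positivity) ?_
    refine (count_le ν F f (ρ*r) (closedBall x r) (ENNReal.ofReal (aν * (ρ*r) ^ t))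
      ?_ ?_ ?_).trans (hν x hx r hr hrν').2
    · intro z hz z' hz' hne
      have hsub : ∀ w ∈ u, closedBall (f w) (ρ*r) ⊆ closedBall w (4*(ρ*r)) := by
        intro w hw
        refine closedBall_subset_closedBall' ?_
        have := mem_closedBall.mp (hf1 w (hu hw))
        linarith
      have hd := hdisj ((hFu z).mp hz) ((hFu z').mp hz') hne
      exact hd.mono (hsub z ((hFu z).mp hz)) (hsub z' ((hFu z').mp hz'))
    · intro z hz
      exact (hν (f z) (hf2 z (hu ((hFu z).mp hz))) (ρ*r) hρr (by linarith)).1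
    · intro z hz
      have hzu := hu ((hFu z).mp hz)
      have h1 : dist (f z) z ≤ ρ * r := mem_closedBall.mp (hf1 z hzu)
      have h2 : dist z x ≤ r/2 := mem_closedBall.mp hzu
      refine closedBall_subset_closedBall' ?_
      have h3 : dist (f z) x ≤ dist (f z) z + dist z x := dist_triangle _ _ _
      linarith
  -- μ covering bound
  have hcover : closedBall x (r/2) ⊆ ⋃ z ∈ F, closedBall z (16*(ρ*r)) := by
    intro y hy
    obtain ⟨z, hz, hsub⟩ := hcov y hy
    refine Set.mem_iUnion₂.2 ⟨z, (hFu z).mpr hz, ?_⟩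
    have hy' : y ∈ closedBall (id y) (4*(ρ*r)) := mem_closedBall_self (by positivity)
    have := hsub hy'
    simpa [show (4:ℝ) * (4*(ρ*r)) = 16*(ρ*r) by ring] using this
  have hμ_cover : a * (r/2) ^ s ≤ (N : ℝ) * (b * (16*(ρ*r)) ^ s) := by
    refine enn_le₂ _ _ _ (by positivity) ?_
    calc ENNReal.ofReal (a * (r/2) ^ s) ≤ μ (closedBall x (r/2)) :=
          (hμ x (Set.mem_univ x) (r/2) (by linarith) (by linarith)).1
    _ ≤ ∑ z ∈ F, μ (closedBall z (16*(ρ*r))) :=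
          (measure_mono hcover).trans (measure_biUnion_finset_le _ _)
    _ ≤ ∑ _z ∈ F, ENNReal.ofReal (b * (16*(ρ*r)) ^ s) :=
          Finset.sum_le_sum fun z _ =>
            (hμ z (Set.mem_univ z) _ (by positivity) (by linarith)).2
    _ = (N : ℝ≥0∞) * ENNReal.ofReal (b * (16*(ρ*r)) ^ s) := by
          rw [Finset.sum_const, nsmul_eq_mul]
  -- final arithmetic contradiction
  have hrs : (0:ℝ) < r ^ s := Real.rpow_pos_of_pos hr s
  have hrt : (0:ℝ) < r ^ t := Real.rpow_pos_of_pos hr t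
  have hρs : (0:ℝ) < ρ ^ s := Real.rpow_pos_of_pos hρ s
  have hρt : (0:ℝ) < ρ ^ t := Real.rpow_pos_of_pos hρ t
  have h2s : (0:ℝ) < (2:ℝ) ^ s := Real.rpow_pos_of_pos (by norm_num) s
  have h16s : (0:ℝ) < (16:ℝ) ^ s := Real.rpow_pos_of_pos (by norm_num) s
  have e1 : (r/2) ^ s = r ^ s / 2 ^ s := Real.div_rpow hr.le (by norm_num : (0:ℝ) ≤ 2) s
  have e2 : (16*(ρ*r)) ^ s = 16 ^ s * (ρ ^ s * r ^ s) := by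
    rw [Real.mul_rpow (by norm_num) (by positivity), Real.mul_rpow hρ.le hr.le]
  have e3 : (ρ*r) ^ t = ρ ^ t * r ^ t := Real.mul_rpow hρ.le hr.le
  have e4 : (32:ℝ) ^ s = 2 ^ s * 16 ^ s := by
    rw [show (32:ℝ) = 2 * 16 by norm_num, Real.mul_rpow (by norm_num) (by norm_num)]
  have e5 : ρ ^ (s - t) = ρ ^ s / ρ ^ t := Real.rpow_sub hρ s t
  rw [e5, hKdef, e4] at hρK
  have hρK' : ρ ^ s * (b * bν * (2 ^ s * 16 ^ s)) < a * aν * ρ ^ t := by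
    rw [div_lt_div_iff₀ hρt (by positivity)] at hρK
    nlinarith
  rw [e1] at hμ_cover
  rw [e2] at hμ_cover
  rw [e3] at hν_count
  have h6 : a / 2 ^ s ≤ (N : ℝ) * (b * 16 ^ s * ρ ^ s) := by
    refine le_of_mul_le_mul_right ?_ hrs
    calc (a / 2 ^ s) * r ^ s = a * (r ^ s / 2 ^ s) := by ring
    _ ≤ (N : ℝ) * (b * (16 ^ s * (ρ ^ s * r ^ s))) := hμ_cover
    _ = ((N : ℝ) * (b * 16 ^ s * ρ ^ s)) * r ^ s := by ring
  have h7 : (N : ℝ) * (aν * ρ ^ t) ≤ bν := by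
    refine le_of_mul_le_mul_right ?_ hrt
    calc ((N : ℝ) * (aν * ρ ^ t)) * r ^ t = (N : ℝ) * (aν * (ρ ^ t * r ^ t)) := by ring
    _ ≤ bν * r ^ t := hν_count
  have h6' : a ≤ (N : ℝ) * (b * 16 ^ s * ρ ^ s) * 2 ^ s := by
    rw [div_le_iff₀ h2s] at h6; linarith
  nlinarith [mul_le_mul_of_nonneg_right h6' (by positivity : (0:ℝ) ≤ aν * ρ ^ t),
    mul_le_mul_of_nonneg_right h7 (by positivity : (0:ℝ) ≤ b * 16 ^ s * ρ ^ s * 2 ^ s)]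
end

section
/- Let X be a separable metric space carrying a doubling measure μ with doubling constant c_μ and scale r_μ, and let A ⊆ X be uniformly ρ-porous with porosity scale r_p (0 < ρ ≤ 1). Let x_0 ∈ X and 0 < r_0 < (ρ/12) min{r_p, r_μ}. Then there is a constant C_3 > 0 depending only on c_μ such that μ((A ∩ B(x_0,r_0))(r)) ≤ C_3 c_μ^{−log ρ / log 2} μ(B(x_0,r_0)) (r/r_0)^δ for all 0 < r < r_0, where t = log c_μ / log 2 and δ = c (log(1/ρ))^{-1} ρ^t with c > 0 depending only on c_μ. -/
open Metric MeasureTheory Set Filter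
open scoped ENNReal NNReal Topology

/-- `μ` is doubling with constant `cμ` and scale `rμ`:
`0 < μ(B(x,2r)) ≤ cμ μ(B(x,r)) < ∞` for all `x` and `0 < r < rμ`. -/
def IsDoubling {X : Type*} [MetricSpace X] [MeasurableSpace X]
    (μ : Measure X) (cμ rμ : ℝ) : Prop :=
  ∀ (x : X) (r : ℝ), 0 < r → r < rμ →
    0 < μ (closedBall x (2 * r)) ∧
      μ (closedBall x (2 * r)) ≤ ENNReal.ofReal cμ * μ (closedBall x r) ∧
        ENNReal.ofReal cμ * μ (closedBall x r) < ⊤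

section Aux

variable {X : Type*} [MetricSpace X]

lemma hole_of_porous {A : Set X} {ρ rp : ℝ} (hρ : 0 < ρ)
    (hA : UniformlyPorousWith A ρ rp) {x : X} (hx : x ∈ A) {s : ℝ} (hs : 0 < s)
    (hsr : s < rp) :
    ∃ y : X, closedBall y (ρ / 2 * s) ∩ A = ∅ ∧ ρ / 2 * s + dist x y ≤ s := by
  have hpor := hA x hx s hs hsr
  rw [por] at hpor
  set S := {ρ' : ℝ | 0 ≤ ρ' ∧ ∃ y : X, closedBall y (ρ' * s) ∩ A = ∅ ∧ ρ' * s + dist x y ≤ s}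
    with hS
  have hne : S.Nonempty := by
    by_contra h
    rw [Set.not_nonempty_iff_eq_empty] at h
    rw [h, Real.sSup_empty] at hpor
    linarith
  obtain ⟨ρ'', hρ''S, hρ''⟩ := exists_lt_of_lt_csSup hne
    (show ρ / 2 < sSup S from lt_of_lt_of_le (by linarith) hpor)
  obtain ⟨hρ''0, y, hy1, hy2⟩ := hρ''S
  refine ⟨y, ?_, ?_⟩
  · apply Set.eq_empty_of_subset_empty
    rw [← hy1]
    exact Set.inter_subset_inter (closedBall_subset_closedBall (by nlinarith)) Set.Subset.rfl
  · nlinarith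

lemma por_le_half {A : Set X} {x : X} (hx : x ∈ A) {r : ℝ} (hr : 0 < r) :
    por A x r ≤ 1 / 2 := by
  apply Real.sSup_le _ (by norm_num)
  rintro ρ' ⟨hρ'0, y, hy1, hy2⟩
  have hxy : ρ' * r < dist x y := by
    by_contra h
    push_neg at h
    have : x ∈ closedBall y (ρ' * r) ∩ A := ⟨mem_closedBall.2 h, hx⟩
    simp [hy1] at this
  nlinarith

lemma por_mono {A B : Set X} (hBA : B ⊆ A) (x : X) {r : ℝ} (hr : 0 < r) :
    por A x r ≤ por B x r := by
  rcases Set.eq_empty_or_nonempty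
      {ρ' : ℝ | 0 ≤ ρ' ∧ ∃ y : X, closedBall y (ρ' * r) ∩ A = ∅ ∧ ρ' * r + dist x y ≤ r}
    with h | h
  · rw [por, h, Real.sSup_empty, por]
    apply Real.sSup_nonneg
    rintro ρ' ⟨h0, _⟩
    exact h0
  · apply csSup_le_csSup ?_ h
    · rintro ρ' ⟨h0, y, hy1, hy2⟩
      refine ⟨h0, y, ?_, hy2⟩
      apply Set.eq_empty_of_subset_empty
      rw [← hy1]
      exact Set.inter_subset_inter Set.Subset.rfl hBA
    · refine ⟨1, ?_⟩
      rintro ρ' ⟨h0, y, hy1, hy2⟩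
      nlinarith [dist_nonneg (x := x) (y := y)]

lemma doubling_iterate {X : Type*} [MetricSpace X] [MeasurableSpace X] {μ : Measure X}
    {cμ rμ : ℝ} (hμ : IsDoubling μ cμ rμ) (y : X) {u : ℝ} (hu : 0 < u) :
    ∀ n : ℕ, 2 ^ n * u < 2 * rμ →
      μ (closedBall y (2 ^ n * u)) ≤ ENNReal.ofReal cμ ^ n * μ (closedBall y u) := by
  intro n
  induction n with
  | zero => simp
  | succ n ih =>
    intro h
    have hp : (0:ℝ) < 2 ^ n := by positivity
    have he : (2:ℝ) ^ (n + 1) = 2 * 2 ^ n := by ring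
    have h2 : (2:ℝ) ^ n * u < rμ := by nlinarith
    have hd := (hμ y (2 ^ n * u) (by positivity) h2).2.1
    have hrμ : (0:ℝ) < rμ := lt_trans (by positivity) h2
    have e2 : (2:ℝ) ^ (n + 1) * u = 2 * (2 ^ n * u) := by ring
    rw [e2]
    calc μ (closedBall y (2 * (2 ^ n * u)))
        ≤ ENNReal.ofReal cμ * μ (closedBall y (2 ^ n * u)) := hd
      _ ≤ ENNReal.ofReal cμ * (ENNReal.ofReal cμ ^ n * μ (closedBall y u)) :=
          mul_le_mul_right (ih (by nlinarith)) _
      _ = ENNReal.ofReal cμ ^ (n + 1) * μ (closedBall y u) := by ring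

end Aux

section OneStep

lemma one_step {X : Type*} [MetricSpace X] [TopologicalSpace.SeparableSpace X]
    [MeasurableSpace X] [BorelSpace X] {μ : Measure X} {cμ rμ : ℝ} (hc : 1 ≤ cμ)
    (hμ : IsDoubling μ cμ rμ) {A : Set X} {ρ rp : ℝ} (hρ : 0 < ρ) (hρ1 : ρ ≤ 1)
    (hA : UniformlyPorousWith A ρ rp) {s : ℝ} (hs : 0 < s) (hsrp : s / 2 < rp)
    {m : ℕ} (hm1 : (24:ℝ) / ρ ≤ 2 ^ m) (hm2 : (2:ℝ) ^ m * (ρ * s / 8) < 2 * rμ) :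
    (1 + ENNReal.ofReal (cμ ^ m)⁻¹) * μ (thickening (ρ / 8 * s) A) ≤
      μ (thickening s A) := by
  classical
  have hcμ0 : (0:ℝ) < cμ := lt_of_lt_of_le one_pos hc
  -- maximal s-separated subset of A
  set Sep : Set (Set X) := {T : Set X | T ⊆ A ∧ ∀ x ∈ T, ∀ y ∈ T, x ≠ y → s < dist x y}
    with hSep
  have hzorn : ∀ c ⊆ Sep, IsChain (· ⊆ ·) c → c.Nonempty →
      ∃ ub ∈ Sep, ∀ t ∈ c, t ⊆ ub := by
    intro c hcS hchain _
    refine ⟨⋃₀ c, ⟨?_, ?_⟩, fun t ht => Set.subset_sUnion_of_mem ht⟩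
    · exact Set.sUnion_subset fun t ht => (hcS ht).1
    · rintro x ⟨t₁, ht₁, hx⟩ z ⟨t₂, ht₂, hz⟩ hxz
      rcases hchain.total ht₁ ht₂ with hsub | hsub
      · exact (hcS ht₂).2 x (hsub hx) z hz hxz
      · exact (hcS ht₁).2 x hx z (hsub hz) hxz
  obtain ⟨T, hTsub, hTmax⟩ :=
    zorn_subset_nonempty Sep hzorn ∅ ⟨Set.empty_subset _, by simp⟩
  obtain ⟨hTA, hTsep⟩ := hTmax.prop
  -- coverage
  have hcover : ∀ z ∈ A, ∃ x ∈ T, dist z x ≤ s := by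
    intro z hz
    by_contra h
    push_neg at h
    have hzT : z ∉ T := fun hzT => by
      have := h z hzT
      simp at this
      linarith
    have hTz : insert z T ∈ Sep := by
      refine ⟨Set.insert_subset hz hTA, ?_⟩
      rintro x (rfl | hx) y (rfl | hy) hxy
      · simp at hxy
      · simpa [dist_comm] using h y hy
      · simpa [dist_comm] using h x hx
      · exact hTsep x hx y hy hxy
    have := hTmax.le_of_ge hTz (Set.subset_insert z T)
    exact hzT (this (Set.mem_insert z T))
  -- countability
  have hTcount : T.Countable := by
    apply Set.PairwiseDisjoint.countable_of_isOpen (s := fun x => ball x (s / 2))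
    · intro x hx y hy hxy
      exact ball_disjoint_ball (by have := hTsep x hx y hy hxy; linarith)
    · exact fun x _ => isOpen_ball
    · exact fun x _ => ⟨x, mem_ball_self (by linarith)⟩
  -- holes
  have hhole : ∀ x, x ∈ T → ∃ y : X,
      closedBall y (ρ / 2 * (s / 2)) ∩ A = ∅ ∧ ρ / 2 * (s / 2) + dist x y ≤ s / 2 :=
    fun x hx => hole_of_porous hρ hA (hTA hx) (by linarith) hsrp
  choose! y hy1 hy2 using hhole
  set h : X → Set X := fun x => closedBall (y x) (ρ * s / 8) with hh
  set N' := thickening (ρ / 8 * s) A with hN'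
  set N := thickening s A with hN
  have hrq : ρ / 2 * (s / 2) = ρ * s / 4 := by ring
  -- (a) h x ∩ N' = ∅
  have ha : ∀ x ∈ T, Disjoint (h x) N' := by
    intro x hx
    rw [Set.disjoint_left]
    intro z hz hzN'
    obtain ⟨a, haA, hdza⟩ := mem_thickening_iff.1 hzN'
    have hza : dist z (y x) ≤ ρ * s / 8 := mem_closedBall.1 hz
    have : a ∈ closedBall (y x) (ρ / 2 * (s / 2)) ∩ A := by
      refine ⟨mem_closedBall.2 ?_, haA⟩
      rw [hrq]
      calc dist a (y x) ≤ dist a z + dist z (y x) := dist_triangle _ _ _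
        _ ≤ ρ * s / 8 + ρ * s / 8 := by
            rw [dist_comm a z]; exact add_le_add (by linarith) hza
        _ = ρ * s / 4 := by ring
    rw [hy1 x hx] at this
    exact this
  -- (b) h x ⊆ closedBall x (s/2)
  have hb : ∀ x ∈ T, h x ⊆ closedBall x (s / 2) := by
    intro x hx z hz
    have h2 := hy2 x hx
    rw [hrq] at h2
    have hza : dist z (y x) ≤ ρ * s / 8 := mem_closedBall.1 hz
    have : dist z x ≤ dist z (y x) + dist (y x) x := dist_triangle _ _ _
    rw [dist_comm (y x) x] at this
    refine mem_closedBall.2 (by nlinarith)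
  -- (c) pairwise disjoint holes
  have hcdisj : T.PairwiseDisjoint h := by
    intro x hx x' hx' hxx'
    have hsep := hTsep x hx x' hx' hxx'
    refine Set.disjoint_left.2 fun z hz hz' => ?_
    have h1 := mem_closedBall.1 (hb x hx hz)
    have h2 := mem_closedBall.1 (hb x' hx' hz')
    have : dist x x' ≤ dist x z + dist z x' := dist_triangle _ _ _
    rw [dist_comm x z] at this
    linarith
  -- (d) h x ⊆ N
  have hd : ∀ x ∈ T, h x ⊆ N := by
    intro x hx z hz
    refine mem_thickening_iff.2 ⟨x, hTA hx, ?_⟩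
    have := mem_closedBall.1 (hb x hx hz)
    linarith
  -- (e) coverage of N'
  have he : N' ⊆ ⋃ x ∈ T, closedBall x (2 * s) := by
    intro z hz
    obtain ⟨a, haA, hdza⟩ := mem_thickening_iff.1 hz
    obtain ⟨x, hxT, hax⟩ := hcover a haA
    refine Set.mem_biUnion hxT (mem_closedBall.2 ?_)
    have : dist z x ≤ dist z a + dist a x := dist_triangle _ _ _
    nlinarith
  -- (f) measure of covering balls vs holes
  have hf : ∀ x ∈ T, μ (closedBall x (2 * s)) ≤ ENNReal.ofReal cμ ^ m * μ (h x) := by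
    intro x hx
    have h2 := hy2 x hx
    rw [hrq] at h2
    have hd1 : dist x (y x) ≤ s / 2 := by nlinarith
    have hsub : closedBall x (2 * s) ⊆ closedBall (y x) (2 ^ m * (ρ * s / 8)) := by
      apply closedBall_subset_closedBall'
      have h3 : (3:ℝ) * s ≤ 2 ^ m * (ρ * s / 8) := by
        have := mul_le_mul_of_nonneg_right hm1 (le_of_lt (show (0:ℝ) < ρ * s / 8 by positivity))
        calc (3:ℝ) * s = 24 / ρ * (ρ * s / 8) := by field_simp; ring
          _ ≤ 2 ^ m * (ρ * s / 8) := this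
      linarith
    calc μ (closedBall x (2 * s)) ≤ μ (closedBall (y x) (2 ^ m * (ρ * s / 8))) :=
          measure_mono hsub
      _ ≤ ENNReal.ofReal cμ ^ m * μ (closedBall (y x) (ρ * s / 8)) :=
          doubling_iterate hμ (y x) (by positivity) m hm2
  -- sum of holes
  have hmeas : ∀ x ∈ T, MeasurableSet (h x) := fun x _ => measurableSet_closedBall
  have hsum : μ (⋃ x ∈ T, h x) = ∑' x : T, μ (h x) := measure_biUnion hTcount hcdisj hmeas
  -- measure of N' bounded by sum of covers
  have hN'le : μ N' ≤ ENNReal.ofReal cμ ^ m * ∑' x : T, μ (h x) := by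
    calc μ N' ≤ μ (⋃ x ∈ T, closedBall x (2 * s)) := measure_mono he
      _ ≤ ∑' x : T, μ (closedBall x (2 * s)) := measure_biUnion_le μ hTcount _
      _ ≤ ∑' x : T, ENNReal.ofReal cμ ^ m * μ (h x) :=
          ENNReal.tsum_le_tsum fun x => hf x x.2
      _ = ENNReal.ofReal cμ ^ m * ∑' x : T, μ (h x) := ENNReal.tsum_mul_left
  -- N' and union of holes are disjoint subsets of N
  have hdisjU : Disjoint N' (⋃ x ∈ T, h x) := by
    rw [Set.disjoint_right]
    intro z hz
    obtain ⟨x, hxT, hzx⟩ := Set.mem_iUnion₂.1 hz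
    exact fun hzN' => Set.disjoint_left.1 (ha x hxT) hzx hzN'
  have hsubN : N' ∪ (⋃ x ∈ T, h x) ⊆ N := by
    apply Set.union_subset
    · exact thickening_mono (by nlinarith) A
    · exact Set.iUnion₂_subset hd
  have hkey : μ N' + ∑' x : T, μ (h x) ≤ μ N := by
    rw [← hsum, ← measure_union hdisjU (MeasurableSet.biUnion hTcount hmeas)]
    exact measure_mono hsubN
  -- conclude
  have hCm0 : ENNReal.ofReal cμ ^ m ≠ 0 := by
    apply pow_ne_zero
    simp [ENNReal.ofReal_eq_zero]
    linarith
  have hCmt : ENNReal.ofReal cμ ^ m ≠ ⊤ := by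
    exact ENNReal.pow_ne_top ENNReal.ofReal_ne_top
  have hinv : ENNReal.ofReal (cμ ^ m)⁻¹ = (ENNReal.ofReal cμ ^ m)⁻¹ := by
    rw [ENNReal.ofReal_inv_of_pos (by positivity), ENNReal.ofReal_pow (by linarith)]
  have hstep : ENNReal.ofReal (cμ ^ m)⁻¹ * μ N' ≤ ∑' x : T, μ (h x) := by
    rw [hinv]
    calc (ENNReal.ofReal cμ ^ m)⁻¹ * μ N'
        ≤ (ENNReal.ofReal cμ ^ m)⁻¹ * (ENNReal.ofReal cμ ^ m * ∑' x : T, μ (h x)) :=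
          mul_le_mul_right hN'le _
      _ = ((ENNReal.ofReal cμ ^ m)⁻¹ * ENNReal.ofReal cμ ^ m) * ∑' x : T, μ (h x) := by
          rw [mul_assoc]
      _ = ∑' x : T, μ (h x) := by rw [ENNReal.inv_mul_cancel hCm0 hCmt, one_mul]
  calc (1 + ENNReal.ofReal (cμ ^ m)⁻¹) * μ N'
      = μ N' + ENNReal.ofReal (cμ ^ m)⁻¹ * μ N' := by rw [add_mul, one_mul]
    _ ≤ μ N' + ∑' x : T, μ (h x) := add_le_add_right hstep _
    _ ≤ μ N := hkey

end OneStep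

section Calc

/-- Choice of the doubling iteration count `m`. -/
lemma exists_m {cμ ρ : ℝ} (hc : 1 ≤ cμ) (hρ : 0 < ρ) (hρ2 : ρ ≤ 1 / 2) :
    ∃ m : ℕ, (24:ℝ) / ρ ≤ 2 ^ m ∧ (2:ℝ) ^ m ≤ 48 / ρ ∧
      (cμ ^ (6:ℕ))⁻¹ * ρ ^ (Real.log cμ / Real.log 2) ≤ (cμ ^ m)⁻¹ := by
  have hcμ0 : (0:ℝ) < cμ := lt_of_lt_of_le one_pos hc
  have hlog2 : (0:ℝ) < Real.log 2 := Real.log_pos one_lt_two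
  set L : ℝ := Real.log (1 / ρ) with hLdef
  have hLlog : L = -Real.log ρ := by rw [hLdef, one_div, Real.log_inv]
  have hL2 : Real.log 2 ≤ L := by
    rw [hLdef]
    have h2ρ : (2:ℝ) ≤ 1 / ρ := by rw [le_div_iff₀ hρ]; linarith
    exact (Real.log_le_log_iff two_pos (by positivity)).2 h2ρ
  have hL0 : 0 < L := lt_of_lt_of_le hlog2 hL2
  set xm : ℝ := Real.logb 2 (24 / ρ) with hxmdef
  set m : ℕ := ⌈xm⌉₊ with hmdef
  have h24ρ : (1:ℝ) < 24 / ρ := by rw [lt_div_iff₀ hρ]; linarith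
  have hxm0 : 0 < xm := Real.logb_pos one_lt_two h24ρ
  have hxmm : xm ≤ (m:ℝ) := Nat.le_ceil xm
  have hmx1 : (m:ℝ) ≤ xm + 1 := (Nat.ceil_lt_add_one hxm0.le).le
  have h2x : (2:ℝ) ^ xm = 24 / ρ := Real.rpow_logb two_pos (by norm_num) (by positivity)
  have hm1 : (24:ℝ) / ρ ≤ 2 ^ m := by
    have := Real.rpow_le_rpow_of_exponent_le one_le_two hxmm
    rwa [h2x, Real.rpow_natCast] at this
  have hm2' : (2:ℝ) ^ m ≤ 48 / ρ := by
    have := Real.rpow_le_rpow_of_exponent_le one_le_two hmx1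
    rw [Real.rpow_natCast, Real.rpow_add two_pos, h2x, Real.rpow_one] at this
    calc (2:ℝ) ^ m ≤ 24 / ρ * 2 := this
      _ = 48 / ρ := by ring
  refine ⟨m, hm1, hm2', ?_⟩
  -- bound m by 6 + L / log 2
  have hlog24 : Real.log (24 / ρ) = Real.log 24 + L := by
    rw [Real.log_div (by norm_num) hρ.ne', hLlog]; ring
  have hlog24' : Real.log 24 ≤ 5 * Real.log 2 := by
    have h32 : Real.log 24 ≤ Real.log 32 :=
      (Real.log_le_log_iff (by norm_num) (by norm_num)).2 (by norm_num)
    have h32' : Real.log 32 = 5 * Real.log 2 := by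
      rw [show (32:ℝ) = 2 ^ (5:ℕ) by norm_num, Real.log_pow]; norm_num
    linarith
  have hxmle : xm ≤ 5 + L / Real.log 2 := by
    rw [hxmdef, Real.logb, hlog24]
    rw [div_le_iff₀ hlog2]
    have hexp2 : (5 + L / Real.log 2) * Real.log 2 = 5 * Real.log 2 + L := by
      rw [add_mul, div_mul_cancel₀ L hlog2.ne']
    linarith
  have hmle : (m:ℝ) ≤ 6 + L / Real.log 2 := by linarith
  have hcm : (cμ:ℝ) ^ m ≤ cμ ^ (6:ℕ) * Real.exp (L / Real.log 2 * Real.log cμ) := by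
    have h1 : (cμ:ℝ) ^ m = cμ ^ ((m:ℕ):ℝ) := (Real.rpow_natCast cμ m).symm
    have h2 : cμ ^ ((m:ℕ):ℝ) ≤ cμ ^ ((6:ℝ) + L / Real.log 2) :=
      Real.rpow_le_rpow_of_exponent_le hc (by exact_mod_cast hmle)
    have h3 : cμ ^ ((6:ℝ) + L / Real.log 2) =
        cμ ^ (6:ℝ) * cμ ^ (L / Real.log 2) := Real.rpow_add hcμ0 _ _
    have h4 : cμ ^ (6:ℝ) = cμ ^ (6:ℕ) := by
      rw [show (6:ℝ) = ((6:ℕ):ℝ) by norm_num, Real.rpow_natCast]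
    have h5 : cμ ^ (L / Real.log 2) = Real.exp (L / Real.log 2 * Real.log cμ) := by
      rw [Real.rpow_def_of_pos hcμ0]; ring_nf
    rw [h1]
    rw [h3, h4, h5] at h2
    exact h2
  have hlogρ : Real.log ρ = -L := by rw [hLlog]; ring
  have hρtexp : ρ ^ (Real.log cμ / Real.log 2) =
      Real.exp (-(L / Real.log 2 * Real.log cμ)) := by
    rw [Real.rpow_def_of_pos hρ, hlogρ]
    congr 1
    ring
  have hinv : (cμ ^ (6:ℕ) * Real.exp (L / Real.log 2 * Real.log cμ))⁻¹ ≤ (cμ ^ m)⁻¹ :=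
    inv_anti₀ (by positivity) hcm
  have heq : (cμ ^ (6:ℕ))⁻¹ * ρ ^ (Real.log cμ / Real.log 2) =
      (cμ ^ (6:ℕ) * Real.exp (L / Real.log 2 * Real.log cμ))⁻¹ := by
    rw [mul_inv, hρtexp, Real.exp_neg]
  rw [heq]
  exact hinv

/-- The final real-number computation. -/
lemma final_calc {cμ ρ r r₀ ε : ℝ} (k : ℕ) (hc : 1 ≤ cμ) (hρ : 0 < ρ) (hρ2 : ρ ≤ 1 / 2)
    (hr : 0 < r) (hr₀ : 0 < r₀) (hε0 : 0 < ε) (hε1 : ε ≤ 1)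
    (hεa : (cμ ^ (6:ℕ))⁻¹ * ρ ^ (Real.log cμ / Real.log 2) ≤ ε)
    (hk1 : (ρ / 8) ^ (k + 1) * r₀ < r) :
    ((1 + ε) ^ k)⁻¹ * cμ ≤ 2 * cμ * cμ ^ (-Real.log ρ / Real.log 2) *
      (r / r₀) ^ ((cμ ^ (6:ℕ))⁻¹ / 8 * (Real.log (1 / ρ))⁻¹ *
        ρ ^ (Real.log cμ / Real.log 2)) := by
  have hcμ0 : (0:ℝ) < cμ := lt_of_lt_of_le one_pos hc
  have hlog2 : (0:ℝ) < Real.log 2 := Real.log_pos one_lt_two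
  set a : ℝ := (cμ ^ (6:ℕ))⁻¹ with hadef
  have ha0 : 0 < a := by positivity
  set t : ℝ := Real.log cμ / Real.log 2 with htdef
  have ht0 : 0 ≤ t := div_nonneg (Real.log_nonneg hc) hlog2.le
  set ρt : ℝ := ρ ^ t with hρtdef
  have hρt0 : 0 < ρt := Real.rpow_pos_of_pos hρ t
  have hρt1 : ρt ≤ 1 := Real.rpow_le_one hρ.le (by linarith) ht0
  set L : ℝ := Real.log (1 / ρ) with hLdef
  have hLlog : L = -Real.log ρ := by rw [hLdef, one_div, Real.log_inv]
  have hL2 : Real.log 2 ≤ L := by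
    rw [hLdef]
    have h2ρ : (2:ℝ) ≤ 1 / ρ := by rw [le_div_iff₀ hρ]; linarith
    exact (Real.log_le_log_iff two_pos (by positivity)).2 h2ρ
  have hL0 : 0 < L := lt_of_lt_of_le hlog2 hL2
  set δ : ℝ := a / 8 * L⁻¹ * ρt with hδdef
  have hδ0 : 0 ≤ δ := by positivity
  have hP0 : 0 < r / r₀ := by positivity
  have hPδ0 : 0 < (r / r₀) ^ δ := Real.rpow_pos_of_pos hP0 δ
  have hz1 : 1 ≤ cμ ^ (-Real.log ρ / Real.log 2) := by
    have hzn : 0 ≤ -Real.log ρ / Real.log 2 := by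
      have : 0 ≤ -Real.log ρ := by rw [← hLlog]; linarith
      exact div_nonneg this hlog2.le
    calc (1:ℝ) = cμ ^ (0:ℝ) := (Real.rpow_zero cμ).symm
      _ ≤ cμ ^ (-Real.log ρ / Real.log 2) := Real.rpow_le_rpow_of_exponent_le hc hzn
  have hεa' : a * ρt ≤ ε := hεa
  -- core inequality
  have hcore : ((1 + ε) ^ k)⁻¹ ≤ 2 * (r / r₀) ^ δ := by
    have hlog1ε : ε / 2 ≤ Real.log (1 + ε) := by
      have h1 : Real.log ((1 + ε)⁻¹) ≤ (1 + ε)⁻¹ - 1 :=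
        Real.log_le_sub_one_of_pos (by positivity)
      rw [Real.log_inv] at h1
      have hw : (1 + ε) * (1 + ε)⁻¹ = 1 := mul_inv_cancel₀ (by positivity)
      have hwpos : 0 < (1 + ε)⁻¹ := by positivity
      have hprod : 1 ≤ (1 - ε / 2) * (1 + ε) := by
        have hnn : 0 ≤ ε * (1 - ε) := mul_nonneg hε0.le (by linarith)
        nlinarith [hnn]
      have h2' := mul_le_mul_of_nonneg_right hprod hwpos.le
      rw [one_mul, mul_assoc, hw, mul_one] at h2'
      linarith
    have hexpε : Real.exp (ε / 2) ≤ 1 + ε := by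
      calc Real.exp (ε / 2) ≤ Real.exp (Real.log (1 + ε)) := Real.exp_le_exp.2 hlog1ε
        _ = 1 + ε := Real.exp_log (by positivity)
    have hIk : Real.exp ((k:ℝ) * (ε / 2)) ≤ (1 + ε) ^ k := by
      rw [Real.exp_nat_mul]
      exact pow_le_pow_left₀ (Real.exp_nonneg _) hexpε k
    have hinvIk : ((1 + ε) ^ k)⁻¹ ≤ Real.exp (-((k:ℝ) * (ε / 2))) := by
      rw [Real.exp_neg]
      exact inv_anti₀ (Real.exp_pos _) hIk
    have hlogk : -Real.log (r / r₀) ≤ ((k:ℝ) + 1) * (L + 3 * Real.log 2) := by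
      have hqpos : (0:ℝ) < (ρ / 8) ^ (k + 1) * r₀ := by positivity
      have hloglt : Real.log ((ρ / 8) ^ (k + 1) * r₀) < Real.log r :=
        Real.log_lt_log hqpos hk1
      have hlq : Real.log ((ρ / 8) ^ (k + 1) * r₀) =
          ((k:ℝ) + 1) * Real.log (ρ / 8) + Real.log r₀ := by
        rw [Real.log_mul (by positivity) hr₀.ne', Real.log_pow]
        push_cast
        ring
      have hlogq : Real.log (ρ / 8) = -(L + 3 * Real.log 2) := by
        rw [Real.log_div hρ.ne' (by norm_num), hLlog]
        have h8 : Real.log 8 = 3 * Real.log 2 := by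
          rw [show (8:ℝ) = 2 ^ (3:ℕ) by norm_num, Real.log_pow]; norm_num
        rw [h8]; ring
      have hlogP : Real.log (r / r₀) = Real.log r - Real.log r₀ :=
        Real.log_div hr.ne' hr₀.ne'
      rw [hlq, hlogq] at hloglt
      linarith
    have hdL : δ * (L + 3 * Real.log 2) ≤ ε / 2 := by
      have h4 : L⁻¹ * (L + 3 * Real.log 2) ≤ 4 := by
        rw [mul_add, inv_mul_cancel₀ hL0.ne']
        have hd1 : L⁻¹ * (3 * Real.log 2) ≤ 3 := by
          rw [show L⁻¹ * (3 * Real.log 2) = 3 * (Real.log 2 / L) by ring]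
          have : Real.log 2 / L ≤ 1 := (div_le_one hL0).2 hL2
          linarith
        linarith
      have heq2 : δ * (L + 3 * Real.log 2) = a / 8 * ρt * (L⁻¹ * (L + 3 * Real.log 2)) := by
        rw [hδdef]; ring
      have h5 : a / 8 * ρt * (L⁻¹ * (L + 3 * Real.log 2)) ≤ a / 8 * ρt * 4 :=
        mul_le_mul_of_nonneg_left h4 (by positivity)
      have h6 : a / 8 * ρt * 4 = a * ρt / 2 := by ring
      rw [heq2]
      linarith
    have hexpineq : -((k:ℝ) * (ε / 2)) ≤ Real.log 2 + Real.log (r / r₀) * δ := by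
      have hM0 : (0:ℝ) ≤ (k:ℝ) + 1 := by positivity
      have h7 : -(((k:ℝ) + 1) * (L + 3 * Real.log 2)) * δ ≤ Real.log (r / r₀) * δ :=
        mul_le_mul_of_nonneg_right (by linarith) hδ0
      have h8 : -(((k:ℝ) + 1) * (L + 3 * Real.log 2)) * δ =
          -(((k:ℝ) + 1) * (δ * (L + 3 * Real.log 2))) := by ring
      have h9 : ((k:ℝ) + 1) * (δ * (L + 3 * Real.log 2)) ≤ ((k:ℝ) + 1) * (ε / 2) :=
        mul_le_mul_of_nonneg_left hdL hM0
      have hlog2half : (1:ℝ) / 2 ≤ Real.log 2 := by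
        have := Real.log_two_gt_d9
        linarith
      have hexpand : ((k:ℝ) + 1) * (ε / 2) = (k:ℝ) * (ε / 2) + ε / 2 := by ring
      linarith
    have hPδ : (r / r₀) ^ δ = Real.exp (Real.log (r / r₀) * δ) := by
      rw [Real.rpow_def_of_pos hP0]
    calc ((1 + ε) ^ k)⁻¹ ≤ Real.exp (-((k:ℝ) * (ε / 2))) := hinvIk
      _ ≤ Real.exp (Real.log 2 + Real.log (r / r₀) * δ) := Real.exp_le_exp.2 hexpineq
      _ = 2 * (r / r₀) ^ δ := by
          rw [Real.exp_add, Real.exp_log two_pos, hPδ]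
  have hfin : ((1 + ε) ^ k)⁻¹ * cμ ≤ (2 * (r / r₀) ^ δ) * cμ :=
    mul_le_mul_of_nonneg_right hcore hcμ0.le
  have hkey : 0 ≤ 2 * cμ * (r / r₀) ^ δ * (cμ ^ (-Real.log ρ / Real.log 2) - 1) :=
    mul_nonneg (mul_nonneg (mul_nonneg (by norm_num) hcμ0.le) hPδ0.le) (by linarith)
  linarith [hkey, hfin]

end Calc

set_option maxHeartbeats 1000000 in
/-- If `μ` is doubling with constant `c_μ` and `A` is uniformly
`ρ`-porous with scale `r_p`, then for `x₀ ∈ X` and `0 < r₀ < (ρ/12) min{r_p, r_μ}`: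
`μ((A ∩ B(x₀,r₀))(r)) ≤ C₃ c_μ^{-log ρ / log 2} μ(B(x₀,r₀)) (r/r₀)^δ` for all `0 < r < r₀`,
where `δ = c (log(1/ρ))⁻¹ ρ^t`, `t = log c_μ / log 2`, and `C₃, c > 0` depend only on
`c_μ`. -/
theorem stmt11 (cμ : ℝ) (hc : 1 ≤ cμ) :
    ∃ C₃ c : ℝ, 0 < C₃ ∧ 0 < c ∧
      ∀ (X : Type*) [MetricSpace X] [TopologicalSpace.SeparableSpace X]
        [MeasurableSpace X] [BorelSpace X] (μ : Measure X) (rμ : ℝ), 0 < rμ →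
        IsDoubling μ cμ rμ →
        ∀ (A : Set X) (ρ rp : ℝ), 0 < ρ → ρ ≤ 1 → 0 < rp → UniformlyPorousWith A ρ rp →
        ∀ (x₀ : X) (r₀ : ℝ), 0 < r₀ → r₀ < ρ / 12 * min rp rμ →
        ∀ r : ℝ, 0 < r → r < r₀ →
          μ (Metric.thickening r (A ∩ closedBall x₀ r₀)) ≤
            ENNReal.ofReal (C₃ * cμ ^ (-Real.log ρ / Real.log 2) *
                (r / r₀) ^ (c * (Real.log (1 / ρ))⁻¹ * ρ ^ (Real.log cμ / Real.log 2))) *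
              μ (closedBall x₀ r₀) := by
  classical
  have hcμ0 : (0:ℝ) < cμ := lt_of_lt_of_le one_pos hc
  refine ⟨2 * cμ, (cμ ^ (6:ℕ))⁻¹ / 8, by positivity, by positivity, ?_⟩
  intro X _inst1 _inst2 _inst3 _inst4 μ rμ hrμ hμ A ρ rp hρ hρ1 hrp hA x₀ r₀ hr₀ hr₀' r hr hrr₀
  set A' := A ∩ closedBall x₀ r₀ with hA'def
  rcases Set.eq_empty_or_nonempty A' with hAe | hAne
  · rw [hAe, Metric.thickening_empty]
    simp
  obtain ⟨x₁, hx₁A, _⟩ := hAne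
  -- basic scale facts
  have hmin : 0 < min rp rμ := lt_min hrp hrμ
  have hminrp : min rp rμ ≤ rp := min_le_left _ _
  have hminrμ : min rp rμ ≤ rμ := min_le_right _ _
  have hscale : ρ / 12 * min rp rμ ≤ 1 / 12 * min rp rμ :=
    mul_le_mul_of_nonneg_right (by linarith) hmin.le
  have h12rp : 12 * r₀ < rp := by linarith
  have h12rμ : 12 * r₀ < rμ := by linarith
  -- ρ ≤ 1/2
  have hρhalf : ρ ≤ 1 / 2 :=
    le_trans (hA x₁ hx₁A (rp / 2) (by linarith) (by linarith)) (por_le_half hx₁A (by linarith))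
  -- porosity of A'
  have hA'por : UniformlyPorousWith A' ρ rp := fun x hx r' h1 h2 =>
    le_trans (hA x hx.1 r' h1 h2) (por_mono Set.inter_subset_left x h1)
  -- choose m
  obtain ⟨m, hm1, hm2', hεa⟩ := exists_m hc hρ hρhalf
  set ε : ℝ := (cμ ^ m)⁻¹ with hεdef
  have hε0 : 0 < ε := by positivity
  have hε1 : ε ≤ 1 := inv_le_one_of_one_le₀ (one_le_pow₀ hc)
  -- iteration
  set q : ℝ := ρ / 8 with hqdef
  have hq0 : 0 < q := by positivity
  have hq1 : q < 1 := by rw [hqdef]; linarith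
  have hiter : ∀ k : ℕ, (1 + ENNReal.ofReal ε) ^ k * μ (thickening (q ^ k * r₀) A') ≤
      μ (thickening r₀ A') := by
    intro k
    induction k with
    | zero => simp
    | succ k ih =>
      have hqk : (0:ℝ) < q ^ k := by positivity
      have hqk1 : q ^ k ≤ 1 := pow_le_one₀ hq0.le hq1.le
      have hs0 : 0 < q ^ k * r₀ := by positivity
      have hsr₀ : q ^ k * r₀ ≤ r₀ := by
        have := mul_le_mul_of_nonneg_right hqk1 hr₀.le
        linarith
      have hm2 : (2:ℝ) ^ m * (ρ * (q ^ k * r₀) / 8) < 2 * rμ := by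
        have hh : (2:ℝ) ^ m * (ρ * (q ^ k * r₀) / 8) ≤ 48 / ρ * (ρ * (q ^ k * r₀) / 8) :=
          mul_le_mul_of_nonneg_right hm2' (by positivity)
        have h6 : 48 / ρ * (ρ * (q ^ k * r₀) / 8) = 6 * (q ^ k * r₀) := by
          field_simp
          ring
        linarith
      have hos := one_step hc hμ hρ hρ1 hA'por hs0
        (by linarith : q ^ k * r₀ / 2 < rp) hm1 hm2
      rw [← hεdef] at hos
      have heq : ρ / 8 * (q ^ k * r₀) = q ^ (k + 1) * r₀ := by rw [hqdef]; ring
      rw [heq] at hos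
      calc (1 + ENNReal.ofReal ε) ^ (k + 1) * μ (thickening (q ^ (k + 1) * r₀) A')
          = (1 + ENNReal.ofReal ε) ^ k *
            ((1 + ENNReal.ofReal ε) * μ (thickening (q ^ (k + 1) * r₀) A')) := by ring
        _ ≤ (1 + ENNReal.ofReal ε) ^ k * μ (thickening (q ^ k * r₀) A') :=
            mul_le_mul_right hos _
        _ ≤ μ (thickening r₀ A') := ih
  -- top bound
  have htop : μ (thickening r₀ A') ≤ ENNReal.ofReal cμ * μ (closedBall x₀ r₀) := by
    have hsub : thickening r₀ A' ⊆ closedBall x₀ (2 * r₀) := by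
      intro z hz
      obtain ⟨w, hwA, hdzw⟩ := mem_thickening_iff.1 hz
      have hw : dist w x₀ ≤ r₀ := mem_closedBall.1 hwA.2
      exact mem_closedBall.2 (le_trans (dist_triangle z w x₀) (by linarith))
    exact le_trans (measure_mono hsub) (hμ x₀ r₀ hr₀ (by linarith)).2.1
  -- choose k
  have hex : ∃ n : ℕ, q ^ (n + 1) * r₀ < r := by
    obtain ⟨n, hn⟩ := exists_pow_lt_of_lt_one (show (0:ℝ) < r / r₀ by positivity) hq1
    refine ⟨n, ?_⟩
    have h1 : q ^ n * r₀ < r := (lt_div_iff₀ hr₀).1 hn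
    have h2 : q ^ (n + 1) ≤ q ^ n := by
      calc q ^ (n + 1) = q * q ^ n := by ring
        _ ≤ 1 * q ^ n := mul_le_mul_of_nonneg_right hq1.le (pow_pos hq0 n).le
        _ = q ^ n := one_mul _
    have h3 := mul_le_mul_of_nonneg_right h2 hr₀.le
    linarith
  have hk1 : q ^ (Nat.find hex + 1) * r₀ < r := Nat.find_spec hex
  have hk2 : r ≤ q ^ (Nat.find hex) * r₀ := by
    rcases Nat.eq_zero_or_pos (Nat.find hex) with h0 | hposk
    · rw [h0]; simpa using hrr₀.le
    · have hlt : Nat.find hex - 1 < Nat.find hex := Nat.sub_lt hposk one_pos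
      have hmin' := Nat.find_min hex hlt
      push_neg at hmin'
      rwa [Nat.sub_add_cancel hposk] at hmin'
  set k : ℕ := Nat.find hex with hkdef
  -- ENNReal manipulations
  set e : ℝ≥0∞ := ENNReal.ofReal ε with hedef
  have hone0 : (1:ℝ≥0∞) + e ≠ 0 := by simp
  have honet : (1:ℝ≥0∞) + e ≠ ⊤ := by
    rw [hedef]; exact ENNReal.add_ne_top.2 ⟨ENNReal.one_ne_top, ENNReal.ofReal_ne_top⟩
  have hpow0 : ((1:ℝ≥0∞) + e) ^ k ≠ 0 := pow_ne_zero _ hone0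
  have hpowt : ((1:ℝ≥0∞) + e) ^ k ≠ ⊤ := ENNReal.pow_ne_top honet
  have hfinal1 : μ (thickening r A') ≤
      (((1:ℝ≥0∞) + e) ^ k)⁻¹ * (ENNReal.ofReal cμ * μ (closedBall x₀ r₀)) := by
    have h1 : μ (thickening r A') ≤ μ (thickening (q ^ k * r₀) A') :=
      measure_mono (thickening_mono hk2 A')
    have h2 := le_trans (hiter k) htop
    calc μ (thickening r A')
        = (((1 + e) ^ k)⁻¹ * (1 + e) ^ k) * μ (thickening r A') := by
          rw [ENNReal.inv_mul_cancel hpow0 hpowt, one_mul]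
      _ = ((1 + e) ^ k)⁻¹ * ((1 + e) ^ k * μ (thickening r A')) := by rw [mul_assoc]
      _ ≤ ((1 + e) ^ k)⁻¹ * ((1 + e) ^ k * μ (thickening (q ^ k * r₀) A')) :=
          mul_le_mul_right (mul_le_mul_right h1 _) _
      _ ≤ ((1 + e) ^ k)⁻¹ * (ENNReal.ofReal cμ * μ (closedBall x₀ r₀)) :=
          mul_le_mul_right h2 _
  have hconv : (((1:ℝ≥0∞) + e) ^ k)⁻¹ * ENNReal.ofReal cμ =
      ENNReal.ofReal (((1 + ε) ^ k)⁻¹ * cμ) := by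
    rw [ENNReal.ofReal_mul (by positivity), ENNReal.ofReal_inv_of_pos (by positivity),
      ENNReal.ofReal_pow (by linarith), ENNReal.ofReal_add zero_le_one hε0.le,
      ENNReal.ofReal_one, hedef]
  refine le_trans hfinal1 ?_
  rw [← mul_assoc, hconv]
  refine mul_le_mul_left (ENNReal.ofReal_le_ofReal ?_) _
  have hkq : (ρ / 8) ^ (k + 1) * r₀ < r := by rw [← hqdef]; exact hk1
  exact final_calc k hc hρ hρhalf hr hr₀ hε0 hε1 hεa hkq
end

section
/- Let X be a separable metric space carrying a measure μ which is s-regular on X with constants a_μ, b_μ and scale r_μ. There exist positive constants D_1 and C_4 depending only on a_μ, b_μ and s such that: for any x_0 ∈ X, any set A ⊆ X which is uniformly ρ-porous with porosity scale r_p (0 < ρ ≤ 1), and any 0 < r_0 < D_1 min{r_p, r_μ}, one has μ((A ∩ B(x_0,r_0))(r)) ≤ C_4 μ(B(x_0,r_0)) (r/r_0)^δ for all 0 < r < r_0, where δ = cρ^s and c > 0 depends only on a_μ, b_μ and s. -/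
open Metric MeasureTheory Set Filter
open scoped ENNReal NNReal Topology

private lemma two_pow_rpow (n : ℕ) (s : ℝ) : ((2:ℝ)^n)^s = ((2:ℝ)^s)^n := by
  rw [← Real.rpow_natCast (2:ℝ) n, ← Real.rpow_mul (by norm_num), mul_comm,
    Real.rpow_mul (by norm_num), Real.rpow_natCast]

private lemma tele_sum (f : ℕ → ℝ) (hmono : ∀ k, f (k+1) ≤ f k) (hnn : ∀ k, 0 ≤ f k) (d : ℕ) :
    ∑ i ∈ Finset.range d, (f i - f (i+3)) ≤ 3 * f 0 := by
  have anti : Antitone f := antitone_nat_of_succ_le hmono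
  have key : ∀ d : ℕ, ∑ i ∈ Finset.range d, (f i - f (i+3)) =
      (f 0 + f 1 + f 2) - (f d + f (d+1) + f (d+2)) := by
    intro d
    induction d with
    | zero => simp
    | succ n ih =>
      rw [Finset.sum_range_succ, ih]
      have h1 : n + 1 + 1 = n + 2 := rfl
      have h2 : n + 1 + 2 = n + 3 := rfl
      rw [h1, h2]; ring
  rw [key]
  have h1 : f 1 ≤ f 0 := anti (by norm_num)
  have h2 : f 2 ≤ f 0 := anti (by norm_num)
  have := hnn d; have := hnn (d+1); have := hnn (d+2)
  linarith

private lemma decay_lemma (V : ℕ → ℝ) (P : ℝ) (hP : 3 ≤ P)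
    (hmono : ∀ k, V (k+1) ≤ V k) (hnn : ∀ k, 0 ≤ V k)
    (hA : ∀ k L : ℕ, ∑ i ∈ Finset.Icc (k+1) L, V i ≤ P * V k) (N : ℕ) :
    V N ≤ Real.exp 2 * (P/(P+1))^N * V 0 := by
  have hP0 : (0:ℝ) < P := by linarith
  have hP1 : (0:ℝ) < P + 1 := by linarith
  set β : ℝ := P/(P+1) with hβdef
  have hβ0 : 0 < β := div_pos hP0 hP1
  have hβ1 : β < 1 := by rw [div_lt_one hP1]; linarith
  have anti : Antitone V := antitone_nat_of_succ_le hmono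
  set T : ℕ → ℝ := fun k => ∑ i ∈ Finset.Icc k N, V i with hTdef
  have hTnn : ∀ k, 0 ≤ T k := fun k => Finset.sum_nonneg (fun i _ => hnn i)
  have hTsucc : ∀ k, T (k+1) ≤ β * T k := by
    intro k
    by_cases hk : k ≤ N
    · have hsplit : T k = V k + T (k+1) := by
        simp only [hTdef]
        rw [Finset.Icc_eq_cons_Ioc hk, Finset.sum_cons]
        congr 1
        congr 1
        exact (Finset.Icc_add_one_left_eq_Ioc k N).symm
      have h1 : T (k+1) ≤ P * V k := hA k N
      rw [hβdef, div_mul_eq_mul_div, le_div_iff₀ hP1]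
      nlinarith [hTnn (k+1)]
    · have : T (k+1) = 0 := by
        simp only [hTdef]
        rw [Finset.Icc_eq_empty (by omega), Finset.sum_empty]
      rw [this]
      exact mul_nonneg hβ0.le (hTnn k)
  have hT1iter : ∀ d : ℕ, T (1+d) ≤ β^d * T 1 := by
    intro d
    induction d with
    | zero => simp
    | succ n ih =>
      have : T (1+(n+1)) = T ((1+n)+1) := congrArg T (by omega)
      rw [this]
      calc T ((1+n)+1) ≤ β * T (1+n) := hTsucc (1+n)
        _ ≤ β * (β^n * T 1) := by nlinarith
        _ = β^(n+1) * T 1 := by ring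
  have hT1 : T 1 ≤ P * V 0 := hA 0 N
  -- the inverse-power bound
  have hβinv : ∀ n : ℕ, n ≤ ⌈P⌉₊ → 1 ≤ Real.exp 2 * β^n := by
    intro n hn
    have hβinvle : β⁻¹ ≤ Real.exp (1/P) := by
      have h1 : β⁻¹ = 1 + 1/P := by
        rw [hβdef]; field_simp
      rw [h1]
      have := Real.add_one_le_exp (1/P)
      linarith
    have h2 : β⁻¹^n ≤ Real.exp (1/P) ^ n := by
      apply pow_le_pow_left₀ (by positivity) hβinvle
    have h3 : Real.exp (1/P) ^ n ≤ Real.exp (1/P) ^ (⌈P⌉₊) := by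
      apply pow_le_pow_right₀ (Real.one_le_exp (by positivity)) hn
      -- needs 1 ≤ exp(1/P)
    have h4 : Real.exp (1/P) ^ (⌈P⌉₊) = Real.exp ((⌈P⌉₊ : ℝ) * (1/P)) := (Real.exp_nat_mul _ _).symm
    have h5 : ((⌈P⌉₊:ℝ)) * (1/P) ≤ 2 := by
      have hc : (⌈P⌉₊:ℝ) ≤ P + 1 := le_of_lt (Nat.ceil_lt_add_one hP0.le)
      rw [mul_one_div, div_le_iff₀ hP0]
      nlinarith
    have h6 : β⁻¹^n ≤ Real.exp 2 := by
      calc β⁻¹^n ≤ Real.exp (1/P) ^ n := h2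
        _ ≤ Real.exp (1/P) ^ (⌈P⌉₊) := h3
        _ = Real.exp ((⌈P⌉₊ : ℝ) * (1/P)) := h4
        _ ≤ Real.exp 2 := Real.exp_le_exp.2 h5
    have h7 : β⁻¹^n * β^n = 1 := by
      rw [← mul_pow, inv_mul_cancel₀ (ne_of_gt hβ0), one_pow]
    calc (1:ℝ) = β⁻¹^n * β^n := h7.symm
      _ ≤ Real.exp 2 * β^n := mul_le_mul_of_nonneg_right h6 (pow_pos hβ0 n).le
  set j : ℕ := ⌈P⌉₊ with hjdef
  have hjP : P ≤ (j:ℝ) := Nat.le_ceil P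
  by_cases hNj : N < j
  · have h1 : V N ≤ V 0 := anti (Nat.zero_le N)
    have h2 : 1 ≤ Real.exp 2 * β^N := hβinv N (by omega)
    nlinarith [hnn N, hnn 0, mul_pos (Real.exp_pos 2) (pow_pos hβ0 N)]
  · push_neg at hNj  -- j ≤ N
    have hj0 : 0 < j := Nat.ceil_pos.mpr hP0
    have hcard : (Finset.Icc (N - j + 1) N).card = j := by
      rw [Nat.card_Icc]; omega
    have hlow : (j:ℝ) * V N ≤ T (N - j + 1) := by
      have : ∀ i ∈ Finset.Icc (N - j + 1) N, V N ≤ V i := by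
        intro i hi
        rw [Finset.mem_Icc] at hi
        exact anti hi.2
      calc (j:ℝ) * V N = ∑ _i ∈ Finset.Icc (N - j + 1) N, V N := by
            rw [Finset.sum_const, hcard, nsmul_eq_mul]
        _ ≤ ∑ i ∈ Finset.Icc (N - j + 1) N, V i := Finset.sum_le_sum (fun i hi => this i hi)
    have heq : N - j + 1 = 1 + (N - j) := by omega
    have hup : T (N - j + 1) ≤ β^(N-j) * (P * V 0) := by
      rw [heq]
      calc T (1 + (N-j)) ≤ β^(N-j) * T 1 := hT1iter (N-j)
        _ ≤ β^(N-j) * (P * V 0) := by nlinarith [pow_pos hβ0 (N-j), hT1, hTnn 1]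
    have hVN : V N ≤ β^(N-j) * V 0 := by
      have h1 : (j:ℝ) * V N ≤ β^(N-j) * (P * V 0) := le_trans hlow hup
      have h2 : β^(N-j) * (P * V 0) ≤ (j:ℝ) * (β^(N-j) * V 0) := by
        nlinarith [mul_nonneg (pow_pos hβ0 (N-j)).le (hnn 0), hjP]
      have hj0' : (0:ℝ) < (j:ℝ) := by exact_mod_cast hj0
      exact (mul_le_mul_iff_right₀ hj0').1 (le_trans h1 h2)
    have hsplitpow : β^(N-j) = β^N * β⁻¹^j := by
      have : N - j + j = N := by omega
      rw [← this, pow_add]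
      rw [Nat.add_sub_cancel, mul_assoc, ← mul_pow, mul_inv_cancel₀ (ne_of_gt hβ0), one_pow, mul_one]
    have h2 : β⁻¹^j ≤ Real.exp 2 := by
      have hh := hβinv j le_rfl
      have h7 : β⁻¹^j * β^j = 1 := by
        rw [← mul_pow, inv_mul_cancel₀ (ne_of_gt hβ0), one_pow]
      calc β⁻¹^j = β⁻¹^j * 1 := (mul_one _).symm
        _ ≤ β⁻¹^j * (Real.exp 2 * β^j) := by
            exact mul_le_mul_of_nonneg_left hh (pow_pos (inv_pos.2 hβ0) j).le
        _ = Real.exp 2 * (β⁻¹^j * β^j) := by ring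
        _ = Real.exp 2 := by rw [h7, mul_one]
    calc V N ≤ β^(N-j) * V 0 := hVN
      _ = β^N * β⁻¹^j * V 0 := by rw [hsplitpow]
      _ ≤ β^N * Real.exp 2 * V 0 := by nlinarith [mul_nonneg (pow_pos hβ0 N).le (hnn 0), h2]
      _ = Real.exp 2 * β^N * V 0 := by ring

private lemma exists_maximal_separated {X : Type*} [MetricSpace X] {A : Set X} (hA : A.Nonempty)
    {t : ℝ} (ht : 0 < t) :
    ∃ S : Set X, S ⊆ A ∧ S.Nonempty ∧ (S.Pairwise fun p q => t < dist p q) ∧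
      ∀ x ∈ A, ∃ p ∈ S, dist x p ≤ t := by
  obtain ⟨a₀, ha₀⟩ := hA
  obtain ⟨S, hsub, hmax⟩ := zorn_subset_nonempty
    {S : Set X | S ⊆ A ∧ S.Pairwise fun p q => t < dist p q}
    (by
      intro c hc hchain hne
      refine ⟨⋃₀ c, ⟨?_, ?_⟩, fun s hs => subset_sUnion_of_mem hs⟩
      · exact sUnion_subset fun s hs => (hc hs).1
      · intro p hp q hq hpq
        obtain ⟨sp, hsp, hps⟩ := hp
        obtain ⟨sq, hsq, hqs⟩ := hq
        rcases hchain.total hsp hsq with h | h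
        · exact (hc hsq).2 (h hps) hqs hpq
        · exact (hc hsp).2 hps (h hqs) hpq)
    {a₀} ⟨singleton_subset_iff.2 ha₀, Set.pairwise_singleton _ _⟩
  refine ⟨S, hmax.prop.1, ⟨a₀, hsub rfl⟩, hmax.prop.2, ?_⟩
  intro x hx
  by_contra hcon
  push_neg at hcon
  have hxS : x ∈ S := by
    have hins : insert x S ∈ {S : Set X | S ⊆ A ∧ S.Pairwise fun p q => t < dist p q} := by
      constructor
      · exact insert_subset hx hmax.prop.1
      · intro p hp q hq hpq
        rcases hp with rfl | hp
        · rcases hq with rfl | hq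
          · exact absurd rfl hpq
          · exact hcon q hq
        · rcases hq with rfl | hq
          · rw [dist_comm]; exact hcon p hp
          · exact hmax.prop.2 hp hq hpq
    have := hmax.eq_of_subset hins (subset_insert x S)
    rw [this]; exact mem_insert x S
  have := hcon x hxS
  simp at this
  linarith

set_option maxHeartbeats 4000000 in
/-- If `μ` is `s`-regular on `X`, there are constants `D₁, C₄, c > 0`
depending only on `a_μ, b_μ, s` such that for any `x₀ ∈ X`, any uniformly `ρ`-porous
`A ⊆ X` (scale `r_p`, `0 < ρ ≤ 1`), and any `0 < r₀ < D₁ min{r_p, r_μ}`: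
`μ((A ∩ B(x₀,r₀))(r)) ≤ C₄ μ(B(x₀,r₀)) (r/r₀)^{c ρ^s}` for all `0 < r < r₀`. -/
theorem stmt12 (s a b : ℝ) (hs : 0 < s) (ha : 0 < a) (hab : a ≤ b) :
    ∃ D₁ C₄ c : ℝ, 0 < D₁ ∧ 0 < C₄ ∧ 0 < c ∧
      ∀ (X : Type*) [MetricSpace X] [TopologicalSpace.SeparableSpace X]
        [MeasurableSpace X] [BorelSpace X] (μ : Measure X) (rμ : ℝ), 0 < rμ →
        IsRegularOn μ s (Set.univ : Set X) a b rμ →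
        ∀ (x₀ : X) (A : Set X) (ρ rp : ℝ),
          0 < ρ → ρ ≤ 1 → 0 < rp → UniformlyPorousWith A ρ rp →
        ∀ r₀ : ℝ, 0 < r₀ → r₀ < D₁ * min rp rμ →
        ∀ r : ℝ, 0 < r → r < r₀ →
          μ (Metric.thickening r (A ∩ closedBall x₀ r₀)) ≤
            ENNReal.ofReal (C₄ * (r / r₀) ^ (c * ρ ^ s)) * μ (closedBall x₀ r₀) := by
  have hb : 0 < b := lt_of_lt_of_le ha hab
  have h2s : (1:ℝ) < 2 ^ s := by
    have h := Real.rpow_lt_rpow_of_exponent_lt (x := 2) (by norm_num) hs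
    simpa using h
  have h7s : (0:ℝ) < 7 ^ s := Real.rpow_pos_of_pos (by norm_num) s
  have h32s : (0:ℝ) < 32 ^ s := Real.rpow_pos_of_pos (by norm_num) s
  have h3s : (0:ℝ) < (3:ℝ) ^ s := Real.rpow_pos_of_pos (by norm_num) s
  refine ⟨1/8, Real.exp 3 * (b/a) * 3^s, ((2:ℝ)^s - 1) * a / (6 * 7^s * 32^s * b),
    by norm_num, by positivity, div_pos (mul_pos (by linarith) ha) (by positivity), ?_⟩
  intro X _ _ _ _ μ rμ hrμ0 hreg x₀ A ρ rp hρ0 hρ1 hrp0 hpor r₀ hr₀0 hr₀lt r hr0 hrr₀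
  rcases Set.eq_empty_or_nonempty (A ∩ closedBall x₀ r₀) with hemp | hA₁ne
  · rw [hemp, Metric.thickening_empty, measure_empty]; exact zero_le
  set A₁ := A ∩ closedBall x₀ r₀ with hA₁def
  -- scale facts
  have hr₀rp : 8 * r₀ < rp := by
    have h1 : min rp rμ ≤ rp := min_le_left rp rμ
    linarith
  have hr₀rμ : 8 * r₀ < rμ := by
    have h1 : min rp rμ ≤ rμ := min_le_right rp rμ
    linarith
  set q : ℝ := 2 ^ s with hqdef
  have hq1 : 1 < q := h2s
  have hq0 : 0 < q := lt_trans one_pos hq1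
  have hρs0 : (0:ℝ) < ρ ^ s := Real.rpow_pos_of_pos hρ0 s
  -- m
  set m : ℕ := ⌈Real.logb 2 (4/ρ)⌉₊ with hmdef
  have h4ρ : (1:ℝ) ≤ 4/ρ := by rw [le_div_iff₀ hρ0]; linarith
  have hlogb0 : 0 ≤ Real.logb 2 (4/ρ) := Real.logb_nonneg (by norm_num) h4ρ
  have hm1 : 4/ρ ≤ (2:ℝ)^m := by
    calc 4/ρ = 2 ^ Real.logb 2 (4/ρ) := (Real.rpow_logb (by norm_num) (by norm_num) (by positivity)).symm
      _ ≤ 2 ^ ((m:ℝ)) := Real.rpow_le_rpow_of_exponent_le (by norm_num) (Nat.le_ceil _)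
      _ = (2:ℝ)^m := Real.rpow_natCast 2 m
  have hm2 : ((2:ℝ)^m) ≤ 8/ρ := by
    calc ((2:ℝ)^m) = 2 ^ ((m:ℝ)) := (Real.rpow_natCast 2 m).symm
      _ ≤ 2 ^ (Real.logb 2 (4/ρ) + 1) :=
          Real.rpow_le_rpow_of_exponent_le (by norm_num) (le_of_lt (Nat.ceil_lt_add_one hlogb0))
      _ = (4/ρ) * 2 := by
          rw [Real.rpow_add (by norm_num), Real.rpow_one,
            Real.rpow_logb (by norm_num) (by norm_num) (by positivity)]
      _ = 8/ρ := by ring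
  -- neighborhoods
  have hInfTop : ∀ z : X, Metric.infEDist z A₁ ≠ ⊤ := fun z => Metric.infEdist_ne_top hA₁ne
  have memC : ∀ (δ : ℝ), 0 ≤ δ → ∀ z : X, (z ∈ Metric.cthickening δ A₁ ↔ Metric.infDist z A₁ ≤ δ) := by
    intro δ hδ z
    rw [Metric.mem_cthickening_iff]
    constructor
    · intro h
      have h2 := ENNReal.toReal_mono ENNReal.ofReal_ne_top h
      rw [ENNReal.toReal_ofReal hδ] at h2
      exact h2
    · intro h
      rw [← ENNReal.ofReal_toReal (hInfTop z)]
      exact ENNReal.ofReal_le_ofReal h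
  have htanti : ∀ {n k : ℕ}, n ≤ k → r₀/2^k ≤ r₀/2^n := by
    intro n k h
    exact div_le_div_of_nonneg_left hr₀0.le (by positivity) (pow_le_pow_right₀ one_le_two h)
  set C : ℕ → Set X := fun n => Metric.cthickening (r₀/2^n) A₁ with hCdef
  set V : ℕ → ℝ := fun n => (μ (C n)).toReal with hVdef
  have hCGB : ∀ n, C n ⊆ closedBall x₀ (3*r₀) := by
    intro n z hz
    simp only [hCdef] at hz
    have h1 : Metric.infDist z A₁ ≤ r₀/2^n := (memC (r₀/2^n) (by positivity) z).1 hz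
    have h2 : Metric.infDist z A₁ < 2 * r₀ := by
      have := htanti (Nat.zero_le n)
      simp only [pow_zero, div_one] at this
      linarith
    obtain ⟨x', hx', hdzx⟩ := (Metric.infDist_lt_iff hA₁ne).1 h2
    have hx'B : x' ∈ closedBall x₀ r₀ := hx'.2
    rw [mem_closedBall] at *
    have := dist_triangle z x' x₀
    linarith
  have hμGB : μ (closedBall x₀ (3*r₀)) ≤ ENNReal.ofReal (b * (3*r₀)^s) :=
    (hreg x₀ (mem_univ _) (3*r₀) (by positivity) (by linarith)).2
  have hCfin : ∀ n, μ (C n) ≠ ⊤ := fun n =>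
    ne_top_of_le_ne_top ENNReal.ofReal_ne_top ((measure_mono (hCGB n)).trans hμGB)
  have hVnn : ∀ n, 0 ≤ V n := fun n => ENNReal.toReal_nonneg
  have hVmono : ∀ n, V (n+1) ≤ V n := by
    intro n
    simp only [hVdef, hCdef]
    exact ENNReal.toReal_mono (hCfin n)
      (measure_mono (Metric.cthickening_mono (htanti (Nat.le_succ n)) _))
  have hVanti : Antitone V := antitone_nat_of_succ_le hVmono
  set C₅ : ℝ := 7^s * (b/a) with hC₅def
  have hC₅0 : 0 < C₅ := by positivity
  have hC₅1 : 1 ≤ C₅ := by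
    have h1 : (1:ℝ) ≤ 7^s := Real.one_le_rpow (by norm_num) hs.le
    have h2 : (1:ℝ) ≤ b/a := (one_le_div ha).2 hab
    nlinarith
  set P : ℝ := 3 * C₅ * (q^(m+2)/(q-1)) with hPdef

  have httpos : ∀ i : ℕ, (0:ℝ) < r₀/2^i := fun i => by positivity
  have Vrec : ∀ i0 : ℕ, V (i0+1) ≤ C₅ * ∑ jj ∈ Finset.range m, q^(jj+2) * (V (i0+jj) - V (i0+jj+3)) := by
    intro i0
    set i : ℕ := i0 + 1 with hidef
    set tt : ℝ := r₀/2^i with httdef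
    have htt0 : 0 < tt := httpos i
    have h2i : (1:ℝ) ≤ 2^i := by
      simpa using pow_le_pow_right₀ (one_le_two) (Nat.zero_le i)
    have httr₀ : tt ≤ r₀ := by
      rw [httdef]
      exact div_le_self hr₀0.le h2i
    obtain ⟨S, hS_sub, hS_ne, hS_sep, hS_cov⟩ :=
      exists_maximal_separated hA₁ne (by positivity : (0:ℝ) < 5*tt)
    -- S is finite
    have hSfin : S.Finite := by
      by_contra hinf
      have hinf' : S.Infinite := hinf
      obtain ⟨n, hn⟩ := exists_nat_gt ((b*(3*r₀)^s)/(a*(2*tt)^s))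
      obtain ⟨F, hFsub, hFcard⟩ := Set.Infinite.exists_subset_card_eq hinf' n
      have hdisjF : (↑F : Set X).PairwiseDisjoint (fun p => closedBall p (2*tt)) := by
        intro p hp p' hp' hne
        have hsep := hS_sep (hFsub hp) (hFsub hp') hne
        exact closedBall_disjoint_closedBall (by linarith)
      have hsum := measure_biUnion_finset (μ := μ) hdisjF (fun p _ => measurableSet_closedBall)
      have hsub : (⋃ p ∈ F, closedBall p (2*tt)) ⊆ closedBall x₀ (3*r₀) := by
        intro z hz
        rw [mem_iUnion₂] at hz
        obtain ⟨p, hp, hzp⟩ := hz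
        have hpB : p ∈ closedBall x₀ r₀ := (hS_sub (hFsub hp)).2
        rw [mem_closedBall] at *
        have := dist_triangle z p x₀
        linarith
      have hup : μ (⋃ p ∈ F, closedBall p (2*tt)) ≤ ENNReal.ofReal (b*(3*r₀)^s) :=
        (measure_mono hsub).trans hμGB
      have hlow : ∀ p ∈ F, ENNReal.ofReal (a*(2*tt)^s) ≤ μ (closedBall p (2*tt)) :=
        fun p _ => (hreg p (mem_univ _) (2*tt) (by positivity) (by linarith)).1
      have hle : (n:ℝ) * (a*(2*tt)^s) ≤ b*(3*r₀)^s := by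
        have h1 : ENNReal.ofReal ((n:ℝ) * (a*(2*tt)^s)) ≤ ENNReal.ofReal (b*(3*r₀)^s) := by
          calc ENNReal.ofReal ((n:ℝ) * (a*(2*tt)^s))
              = (n:ℕ) * ENNReal.ofReal (a*(2*tt)^s) := by
                rw [ENNReal.ofReal_mul (by positivity), ENNReal.ofReal_natCast]
            _ = ∑ _p ∈ F, ENNReal.ofReal (a*(2*tt)^s) := by
                rw [Finset.sum_const, hFcard, nsmul_eq_mul]
            _ ≤ ∑ p ∈ F, μ (closedBall p (2*tt)) := Finset.sum_le_sum hlow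
            _ = μ (⋃ p ∈ F, closedBall p (2*tt)) := hsum.symm
            _ ≤ ENNReal.ofReal (b*(3*r₀)^s) := hup
        exact (ENNReal.ofReal_le_ofReal_iff (by positivity)).1 h1
      have hcontra : (n:ℝ) ≤ (b*(3*r₀)^s)/(a*(2*tt)^s) := by
        rw [le_div_iff₀ (by positivity)]
        linarith
      linarith
    set S' : Finset X := hSfin.toFinset with hS'def
    have hS'mem : ∀ p, p ∈ S' ↔ p ∈ S := fun p => Set.Finite.mem_toFinset hSfin
    have httrp : tt < rp := by linarith
    -- porosity data
    have hdata : ∀ p : X, ∃ (y : X) (jj : ℕ), p ∈ S →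
        (jj < m ∧ dist p y ≤ tt ∧ ρ*tt/2 ≤ Metric.infDist y A₁ ∧ Metric.infDist y A₁ ≤ tt ∧
         r₀/2^(i0+3+jj) < Metric.infDist y A₁/2 ∧ Metric.infDist y A₁/2 ≤ r₀/2^(i0+2+jj)) := by
      intro p
      by_cases hp : p ∈ S
      swap
      · exact ⟨p, 0, fun h => absurd h hp⟩
      have hpA : p ∈ A := (hS_sub hp).1
      have hpA₁ : p ∈ A₁ := hS_sub hp
      have hpor' := hpor p hpA tt htt0 httrp
      have hWne : {ρ' : ℝ | 0 ≤ ρ' ∧ ∃ y : X, closedBall y (ρ'*tt) ∩ A = ∅ ∧ ρ'*tt + dist p y ≤ tt}.Nonempty := by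
        by_contra hW
        rw [Set.not_nonempty_iff_eq_empty] at hW
        rw [por, hW, Real.sSup_empty] at hpor'
        linarith
      obtain ⟨ρ', hρ'W, hρ'gt⟩ :=
        exists_lt_of_lt_csSup hWne (lt_of_lt_of_le (by linarith : ρ/2 < ρ) hpor')
      obtain ⟨hρ'0, y, hball, hsum⟩ := hρ'W
      have hdlb : ρ'*tt ≤ Metric.infDist y A₁ := by
        by_contra hlt
        push_neg at hlt
        obtain ⟨z, hzA₁, hzd⟩ := (Metric.infDist_lt_iff hA₁ne).1 hlt
        have hzA : z ∈ A := hzA₁.1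
        have hzmem : z ∈ closedBall y (ρ'*tt) ∩ A :=
          ⟨by rw [mem_closedBall, dist_comm]; exact hzd.le, hzA⟩
        rw [hball] at hzmem
        exact hzmem
      have hdub : Metric.infDist y A₁ ≤ tt := by
        have h1 : Metric.infDist y A₁ ≤ dist y p := Metric.infDist_le_dist_of_mem hpA₁
        rw [dist_comm] at h1
        nlinarith [mul_nonneg hρ'0 htt0.le]
      have hd0 : 0 < Metric.infDist y A₁ := by nlinarith
      have hdρ : ρ*tt/2 ≤ Metric.infDist y A₁ := by nlinarith
      have hex : ∃ k : ℕ, r₀/2^k < Metric.infDist y A₁/2 := by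
        obtain ⟨k, hk⟩ := pow_unbounded_of_one_lt (2*r₀/(Metric.infDist y A₁)) (by norm_num : (1:ℝ) < 2)
        refine ⟨k, ?_⟩
        rw [div_lt_div_iff₀ (by positivity) (by norm_num)]
        rw [div_lt_iff₀ hd0] at hk
        nlinarith [pow_pos (by norm_num : (0:ℝ) < 2) k]
      have hkspec : r₀/2^(Nat.find hex) < Metric.infDist y A₁/2 := Nat.find_spec hex
      have hk_ge : i0+3 ≤ Nat.find hex := by
        by_contra hlt
        push_neg at hlt
        have h1 : r₀/2^(i+1) ≤ r₀/2^(Nat.find hex) := htanti (by omega)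
        have h2 : Metric.infDist y A₁/2 ≤ r₀/2^(i+1) := by
          rw [pow_succ]
          rw [httdef] at hdub
          have : r₀ / (2^i * 2) = (r₀/2^i)/2 := by ring
          rw [this]
          linarith
        linarith
      have hk_le : Nat.find hex ≤ i0+2+m := by
        apply Nat.find_le
        have h1 : r₀/2^(i0+2+m) = tt/(2*2^m) := by
          rw [httdef, hidef, show i0+2+m = (i0+1) + (m+1) from by omega, pow_add, pow_succ]
          ring
        rw [h1]
        have h2m0 : (0:ℝ) < 2^m := by positivity
        have h2 : tt/(2*2^m) ≤ tt*ρ/8 := by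
          rw [div_le_iff₀ (by positivity)]
          have h3 : 8 ≤ ρ * (2*2^m) := by
            have := hm1
            rw [div_le_iff₀ hρ0] at this
            nlinarith
          nlinarith
        nlinarith
      refine ⟨y, Nat.find hex - (i0+3), fun _ => ⟨?_, ?_, ?_, ?_, ?_, ?_⟩⟩
      · omega
      · nlinarith [mul_nonneg hρ'0 htt0.le]
      · exact hdρ
      · exact hdub
      · have heq : i0+3+(Nat.find hex - (i0+3)) = Nat.find hex := by omega
        rw [heq]
        exact hkspec
      · have heq : i0+2+(Nat.find hex - (i0+3)) = Nat.find hex - 1 := by omega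
        rw [heq]
        have hmin := Nat.find_min hex (show Nat.find hex - 1 < Nat.find hex by omega)
        push_neg at hmin
        exact hmin
    choose yf jf hprops using hdata
    have hmem' : ∀ p ∈ S', p ∈ S := fun p hp => (hS'mem p).1 hp
    set d : X → ℝ := fun p => Metric.infDist (yf p) A₁ with hddef
    set H : X → Set X := fun p => closedBall (yf p) (d p / 2) with hHdef
    have hdpos : ∀ p ∈ S', 0 < d p := by
      intro p hp
      have h := (hprops p (hmem' p hp)).2.2.1
      simp only [hddef]
      nlinarith
    have hdub' : ∀ p ∈ S', d p ≤ tt := by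
      intro p hp
      exact (hprops p (hmem' p hp)).2.2.2.1
    have hHsubp : ∀ p ∈ S', H p ⊆ closedBall p (2*tt) := by
      intro p hp z hz
      simp only [hHdef] at hz
      rw [mem_closedBall] at *
      have h1 := (hprops p (hmem' p hp)).2.1
      have h2 := hdub' p hp
      have h3 := dist_triangle z (yf p) p
      have h4 : dist (yf p) p = dist p (yf p) := dist_comm _ _
      linarith
    have hHdisj : (↑S' : Set X).PairwiseDisjoint H := by
      intro p hp p' hp' hne
      have hsep := hS_sep (hmem' p hp) (hmem' p' hp') hne
      exact (closedBall_disjoint_closedBall (by linarith)).mono (hHsubp p hp) (hHsubp p' hp')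
    have hHfin : ∀ p ∈ S', μ (H p) ≠ ⊤ := by
      intro p hp
      have hsub : H p ⊆ closedBall x₀ (3*r₀) := by
        intro z hz
        have hz2 := hHsubp p hp hz
        have hpB : p ∈ closedBall x₀ r₀ := (hS_sub (hmem' p hp)).2
        rw [mem_closedBall] at *
        have := dist_triangle z p x₀
        linarith
      exact ne_top_of_le_ne_top ENNReal.ofReal_ne_top ((measure_mono hsub).trans hμGB)
    have hHlow : ∀ p ∈ S', a * (r₀/2^(i0+3+jf p))^s ≤ (μ (H p)).toReal := by
      intro p hp
      have hd0 := hdpos p hp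
      have hreg' := (hreg (yf p) (mem_univ _) (d p/2) (by positivity)
        (by
          have := hdub' p hp
          linarith)).1
      have h1 : a*(r₀/2^(i0+3+jf p))^s ≤ a*(d p/2)^s := by
        apply mul_le_mul_of_nonneg_left ?_ ha.le
        apply Real.rpow_le_rpow (by positivity) ?_ hs.le
        exact le_of_lt ((hprops p (hmem' p hp)).2.2.2.2.1)
      have h2 : a*(d p/2)^s ≤ (μ (H p)).toReal := by
        calc a*(d p/2)^s = (ENNReal.ofReal (a*(d p/2)^s)).toReal :=
              (ENNReal.toReal_ofReal (by positivity)).symm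
          _ ≤ (μ (H p)).toReal := ENNReal.toReal_mono (hHfin p hp) hreg'
      linarith
    have hband : ∀ p ∈ S', H p ⊆ C (i0 + jf p) \ C (i0 + jf p + 3) := by
      intro p hp z hz
      have hprop := hprops p (hmem' p hp)
      simp only [hHdef] at hz
      rw [mem_closedBall] at hz
      have hinf_ub : Metric.infDist z A₁ ≤ 3*(d p)/2 := by
        have h := Metric.infDist_le_infDist_add_dist (x := z) (y := yf p) (s := A₁)
        simp only [hddef] at *
        linarith
      have hinf_lb : d p - d p/2 ≤ Metric.infDist z A₁ := by
        have h := Metric.infDist_le_infDist_add_dist (x := yf p) (y := z) (s := A₁)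
        rw [dist_comm] at h
        simp only [hddef] at *
        linarith
      constructor
      · simp only [hCdef]
        rw [memC _ (by positivity) z]
        have hd2 := hprop.2.2.2.2.2
        have hquad : 4*(r₀/2^(i0+2+jf p)) = r₀/2^(i0+jf p) := by
          rw [show i0+2+jf p = (i0+jf p)+2 from by omega, pow_add]
          ring
        have hd2' : d p / 2 ≤ r₀/2^(i0+2+jf p) := hd2
        have hr2 : (0:ℝ) < r₀/2^(i0+2+jf p) := httpos _
        calc Metric.infDist z A₁ ≤ 3*(d p)/2 := hinf_ub
          _ ≤ 3*(r₀/2^(i0+2+jf p)) := by linarith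
          _ ≤ 4*(r₀/2^(i0+2+jf p)) := by linarith
          _ = r₀/2^(i0+jf p) := hquad
      · intro hzmem
        simp only [hCdef] at hzmem
        rw [memC _ (by positivity) z] at hzmem
        have hd3 := hprop.2.2.2.2.1
        rw [show i0 + jf p + 3 = i0+3+jf p from by omega] at hzmem
        linarith
    have hcov : C i ⊆ ⋃ p ∈ S', closedBall p (7*tt) := by
      intro z hz
      simp only [hCdef] at hz
      have h1 : Metric.infDist z A₁ ≤ tt := (memC tt htt0.le z).1 hz
      have h2 : Metric.infDist z A₁ < 2*tt := lt_of_le_of_lt h1 (by linarith)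
      obtain ⟨x', hx'A₁, hzx'⟩ := (Metric.infDist_lt_iff hA₁ne).1 h2
      obtain ⟨p, hpS, hx'p⟩ := hS_cov x' hx'A₁
      rw [mem_iUnion₂]
      refine ⟨p, (hS'mem p).2 hpS, ?_⟩
      rw [mem_closedBall]
      have := dist_triangle z x' p
      linarith
    have hballfin : ∀ p ∈ S', μ (closedBall p (7*tt)) ≠ ⊤ := by
      intro p hp
      exact ne_top_of_le_ne_top ENNReal.ofReal_ne_top
        (hreg p (mem_univ _) (7*tt) (by positivity) (by linarith)).2
    have hballub : ∀ p ∈ S', (μ (closedBall p (7*tt))).toReal ≤ C₅ * (q^(jf p + 2) * (μ (H p)).toReal) := by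
      intro p hp
      have h1 : (μ (closedBall p (7*tt))).toReal ≤ b*(7*tt)^s :=
        ENNReal.toReal_le_of_le_ofReal (by positivity)
          (hreg p (mem_univ _) (7*tt) (by positivity) (by linarith)).2
      have hsplit : tt = 2^(jf p + 2) * (r₀/2^(i0+3+jf p)) := by
        have h2ne : ((2:ℝ)^(jf p + 2)) ≠ 0 := by positivity
        have hpowsplit : (2:ℝ)^(i0+3+jf p) = 2^(i0+1) * 2^(jf p + 2) := by
          rw [← pow_add]
          congr 1
          omega
        rw [hpowsplit, ← div_div, mul_comm ((2:ℝ)^(jf p+2)) _, div_mul_cancel₀ _ h2ne, httdef, hidef]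
      have h2 : b*(7*tt)^s = C₅ * (q^(jf p+2) * (a*(r₀/2^(i0+3+jf p))^s)) := by
        rw [hsplit, show (7:ℝ)*(2^(jf p + 2) * (r₀/2^(i0+3+jf p))) = 7*(2^(jf p+2)*(r₀/2^(i0+3+jf p))) from rfl]
        rw [Real.mul_rpow (by norm_num) (by positivity), Real.mul_rpow (by positivity) (by positivity)]
        rw [two_pow_rpow (jf p + 2) s, hC₅def, hqdef]
        field_simp
      have h3 : a*(r₀/2^(i0+3+jf p))^s ≤ (μ (H p)).toReal := hHlow p hp
      calc (μ (closedBall p (7*tt))).toReal ≤ b*(7*tt)^s := h1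
        _ = C₅ * (q^(jf p+2) * (a*(r₀/2^(i0+3+jf p))^s)) := h2
        _ ≤ C₅ * (q^(jf p+2) * (μ (H p)).toReal) := by
            apply mul_le_mul_of_nonneg_left ?_ hC₅0.le
            apply mul_le_mul_of_nonneg_left h3 (by positivity)
    have hchain1 : V i ≤ ∑ p ∈ S', (μ (closedBall p (7*tt))).toReal := by
      have h1 : μ (C i) ≤ ∑ p ∈ S', μ (closedBall p (7*tt)) :=
        (measure_mono hcov).trans (measure_biUnion_finset_le S' _)
      have h2 : (∑ p ∈ S', μ (closedBall p (7*tt))) ≠ ⊤ :=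
        ENNReal.sum_ne_top.2 hballfin
      calc V i = (μ (C i)).toReal := rfl
        _ ≤ (∑ p ∈ S', μ (closedBall p (7*tt))).toReal := ENNReal.toReal_mono h2 h1
        _ = ∑ p ∈ S', (μ (closedBall p (7*tt))).toReal := ENNReal.toReal_sum hballfin
    have hchain2 : ∑ p ∈ S', (μ (closedBall p (7*tt))).toReal
        ≤ C₅ * ∑ p ∈ S', q^(jf p+2)*(μ (H p)).toReal := by
      rw [Finset.mul_sum]
      exact Finset.sum_le_sum hballub
    have hmapsto : ∀ p ∈ S', jf p ∈ Finset.range m := by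
      intro p hp
      rw [Finset.mem_range]
      exact (hprops p (hmem' p hp)).1
    have hfiber : ∑ p ∈ S', q^(jf p+2)*(μ (H p)).toReal
        = ∑ jj ∈ Finset.range m, ∑ p ∈ S'.filter (fun p => jf p = jj), q^(jf p+2)*(μ (H p)).toReal :=
      (Finset.sum_fiberwise_of_maps_to hmapsto _).symm
    have hfiber2 : ∀ jj ∈ Finset.range m,
        ∑ p ∈ S'.filter (fun p => jf p = jj), q^(jf p+2)*(μ (H p)).toReal
          ≤ q^(jj+2) * (V (i0+jj) - V (i0+jj+3)) := by
      intro jj _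
      have heqterm : ∀ p ∈ S'.filter (fun p => jf p = jj),
          q^(jf p+2)*(μ (H p)).toReal = q^(jj+2)*(μ (H p)).toReal := by
        intro p hp
        rw [Finset.mem_filter] at hp
        rw [hp.2]
      rw [Finset.sum_congr rfl heqterm, ← Finset.mul_sum]
      apply mul_le_mul_of_nonneg_left ?_ (by positivity)
      have hsubS : S'.filter (fun p => jf p = jj) ⊆ S' := Finset.filter_subset _ _
      have hdisj' : (↑(S'.filter (fun p => jf p = jj)) : Set X).PairwiseDisjoint H :=
        hHdisj.subset (by exact_mod_cast Finset.coe_subset.2 hsubS)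
      have hsum : ∑ p ∈ S'.filter (fun p => jf p = jj), μ (H p)
          = μ (⋃ p ∈ S'.filter (fun p => jf p = jj), H p) :=
        (measure_biUnion_finset (μ := μ) hdisj' (fun p _ => measurableSet_closedBall)).symm
      have hUsub : (⋃ p ∈ S'.filter (fun p => jf p = jj), H p) ⊆ C (i0+jj) \ C (i0+jj+3) := by
        intro z hz
        rw [mem_iUnion₂] at hz
        obtain ⟨p, hp, hzp⟩ := hz
        have hpf := hp
        rw [Finset.mem_filter] at hpf
        have hzb := hband p hpf.1 hzp
        rw [hpf.2] at hzb
        exact hzb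
      have hCsubset : C (i0+jj+3) ⊆ C (i0+jj) := by
        simp only [hCdef]
        exact Metric.cthickening_mono (htanti (by omega)) A₁
      have hdiff : μ (C (i0+jj) \ C (i0+jj+3)) = μ (C (i0+jj)) - μ (C (i0+jj+3)) := by
        apply measure_diff hCsubset ?_ (hCfin _)
        simp only [hCdef]
        exact Metric.isClosed_cthickening.measurableSet.nullMeasurableSet
      calc ∑ p ∈ S'.filter (fun p => jf p = jj), (μ (H p)).toReal
          = (∑ p ∈ S'.filter (fun p => jf p = jj), μ (H p)).toReal :=
            (ENNReal.toReal_sum (fun p hp => hHfin p (hsubS hp))).symm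
        _ = (μ (⋃ p ∈ S'.filter (fun p => jf p = jj), H p)).toReal := by rw [hsum]
        _ ≤ (μ (C (i0+jj) \ C (i0+jj+3))).toReal := by
            apply ENNReal.toReal_mono ?_ (measure_mono hUsub)
            rw [hdiff]
            exact ENNReal.sub_ne_top (hCfin _)
        _ = V (i0+jj) - V (i0+jj+3) := by
            rw [hdiff, ENNReal.toReal_sub_of_le (measure_mono hCsubset) (hCfin _)]
    calc V (i0+1) = V i := rfl
      _ ≤ ∑ p ∈ S', (μ (closedBall p (7*tt))).toReal := hchain1
      _ ≤ C₅ * ∑ p ∈ S', q^(jf p+2)*(μ (H p)).toReal := hchain2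
      _ = C₅ * ∑ jj ∈ Finset.range m, ∑ p ∈ S'.filter (fun p => jf p = jj), q^(jf p+2)*(μ (H p)).toReal := by
          rw [hfiber]
      _ ≤ C₅ * ∑ jj ∈ Finset.range m, q^(jj+2)*(V (i0+jj) - V (i0+jj+3)) := by
          apply mul_le_mul_of_nonneg_left (Finset.sum_le_sum hfiber2) hC₅0.le
  
  -- geometric sum bound and P
  have hq1' : (0:ℝ) < q - 1 := by linarith
  have hgeo : (∑ jj ∈ Finset.range m, q^(jj+2)) ≤ q^(m+2)/(q-1) := by
    have h1 : (∑ jj ∈ Finset.range m, q^(jj+2)) = q^2 * ∑ jj ∈ Finset.range m, q^jj := by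
      rw [Finset.mul_sum]
      apply Finset.sum_congr rfl
      intro jj _
      rw [pow_add]
      ring
    rw [h1, geom_sum_eq (ne_of_gt hq1)]
    have h2 : q^2 * ((q^m-1)/(q-1)) = (q^2*(q^m-1))/(q-1) := (mul_div_assoc _ _ _).symm
    rw [h2]
    apply div_le_div_of_nonneg_right ?_ hq1'.le
    have h3 : q^(m+2) = q^m*q^2 := by rw [pow_add]
    nlinarith [pow_pos hq0 m, pow_pos hq0 2]
  have hP3 : 3 ≤ P := by
    have hfrac1 : 1 ≤ q^(m+2)/(q-1) := by
      rw [le_div_iff₀ hq1']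
      have h1 : q ≤ q^(m+2) := by
        calc q = q^1 := (pow_one q).symm
          _ ≤ q^(m+2) := pow_le_pow_right₀ hq1.le (by omega)
      linarith
    rw [hPdef]
    nlinarith
  have hP0 : 0 < P := by linarith
  -- Claim A
  have claimA : ∀ k L : ℕ, ∑ n ∈ Finset.Icc (k+1) L, V n ≤ P * V k := by
    intro k L
    rcases lt_or_ge L (k+1) with hL | hL
    · rw [Finset.Icc_eq_empty (by omega), Finset.sum_empty]
      exact mul_nonneg hP0.le (hVnn k)
    rw [← Finset.Ico_add_one_right_eq_Icc, Finset.sum_Ico_eq_sum_range]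
    calc ∑ ii ∈ Finset.range (L+1-(k+1)), V (k+1+ii)
        ≤ ∑ ii ∈ Finset.range (L+1-(k+1)),
            (C₅ * ∑ jj ∈ Finset.range m, q^(jj+2) * (V (k+ii+jj) - V (k+ii+jj+3))) := by
          apply Finset.sum_le_sum
          intro ii _
          have h1 : V (k+1+ii) = V ((k+ii)+1) := congrArg V (by omega)
          rw [h1]
          exact Vrec (k+ii)
      _ = C₅ * ∑ jj ∈ Finset.range m, ∑ ii ∈ Finset.range (L+1-(k+1)),
            q^(jj+2) * (V (k+ii+jj) - V (k+ii+jj+3)) := by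
          rw [← Finset.mul_sum, Finset.sum_comm]
      _ ≤ C₅ * ∑ jj ∈ Finset.range m, q^(jj+2) * (3 * V k) := by
          apply mul_le_mul_of_nonneg_left ?_ hC₅0.le
          apply Finset.sum_le_sum
          intro jj _
          rw [← Finset.mul_sum]
          apply mul_le_mul_of_nonneg_left ?_ (by positivity)
          have hcongr : ∀ ii ∈ Finset.range (L+1-(k+1)), (V (k+ii+jj) - V (k+ii+jj+3))
              = ((fun n => V (k+jj+n)) ii - (fun n => V (k+jj+n)) (ii+3)) := by
            intro ii _
            simp only
            rw [show k+ii+jj = k+jj+ii from by omega]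
            rw [show k+jj+ii+3 = k+jj+(ii+3) from by omega]
          rw [Finset.sum_congr rfl hcongr]
          have htel := tele_sum (fun n => V (k+jj+n)) (fun n => hVmono (k+jj+n))
            (fun n => hVnn _) (L+1-(k+1))
          have h0 : V (k+jj+0) ≤ V k := hVanti (by omega)
          calc ∑ ii ∈ Finset.range (L+1-(k+1)),
                ((fun n => V (k+jj+n)) ii - (fun n => V (k+jj+n)) (ii+3))
              ≤ 3 * V (k+jj+0) := htel
            _ ≤ 3 * V k := by linarith
      _ = 3 * C₅ * (∑ jj ∈ Finset.range m, q^(jj+2)) * V k := by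
          rw [← Finset.sum_mul]
          ring
      _ ≤ 3 * C₅ * (q^(m+2)/(q-1)) * V k := by
          apply mul_le_mul_of_nonneg_right ?_ (hVnn k)
          apply mul_le_mul_of_nonneg_left hgeo (by positivity)
      _ = P * V k := by rw [hPdef]
  have hdecay := decay_lemma V P hP3 hVmono hVnn claimA
  -- relate 1/(P+1) to ρ^s
  set x : ℝ := 1/(P+1) with hxdef
  have hx0 : 0 < x := by rw [hxdef]; exact div_pos one_pos (by linarith)
  have hx1 : x ≤ 1 := by
    rw [hxdef, div_le_one (by linarith)]
    linarith
  have hq2m : q^(m+2) ≤ 32^s/ρ^s := by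
    have h2m2 : ((2:ℝ)^(m+2)) ≤ 32/ρ := by
      have hsplit : ((2:ℝ)^(m+2)) = 2^m * 4 := by rw [pow_add]; norm_num
      have h32ρ : (8/ρ)*4 = 32/ρ := by ring
      rw [hsplit]
      nlinarith [hm2]
    have h1 : q^(m+2) = ((2:ℝ)^(m+2))^s := by rw [hqdef, two_pow_rpow]
    rw [h1]
    calc ((2:ℝ)^(m+2))^s ≤ (32/ρ)^s := Real.rpow_le_rpow (by positivity) h2m2 hs.le
      _ = 32^s/ρ^s := Real.div_rpow (by norm_num) hρ0.le s
  have hEE0 : 0 ≤ (q - 1) * a / (6 * 7^s * 32^s * b) := by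
    apply div_nonneg (mul_nonneg (by linarith) ha.le) (by positivity)
  have hxρ : (q - 1) * a / (6 * 7^s * 32^s * b) * ρ^s ≤ x := by
    rw [hxdef, le_div_iff₀ (by linarith : (0:ℝ) < P+1)]
    have hPb : P ≤ 3*C₅*((32^s/ρ^s)/(q-1)) := by
      rw [hPdef]
      apply mul_le_mul_of_nonneg_left ?_ (by positivity)
      exact div_le_div_of_nonneg_right hq2m hq1'.le
    have kk : (q - 1) * a / (6 * 7^s * 32^s * b) * ρ^s * (2*(3*C₅*((32^s/ρ^s)/(q-1)))) = 1 := by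
      rw [hC₅def]
      field_simp
      ring
    calc (q - 1) * a / (6 * 7^s * 32^s * b) * ρ^s * (P+1)
        ≤ (q - 1) * a / (6 * 7^s * 32^s * b) * ρ^s * (2*(3*C₅*((32^s/ρ^s)/(q-1)))) := by
          apply mul_le_mul_of_nonneg_left (by linarith) (mul_nonneg hEE0 hρs0.le)
      _ = 1 := kk
  -- final scale N
  set N : ℕ := ⌊Real.logb 2 (r₀/r)⌋₊ with hNdef
  have hr₀r1 : 1 ≤ r₀/r := by rw [le_div_iff₀ hr0]; linarith
  have hlogN0 : 0 ≤ Real.logb 2 (r₀/r) := Real.logb_nonneg (by norm_num) hr₀r1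
  have h2N : ((2:ℝ)^N) ≤ r₀/r := by
    calc ((2:ℝ)^N) = 2^((N:ℝ)) := (Real.rpow_natCast 2 N).symm
      _ ≤ 2 ^ Real.logb 2 (r₀/r) :=
          Real.rpow_le_rpow_of_exponent_le (by norm_num) (Nat.floor_le hlogN0)
      _ = r₀/r := Real.rpow_logb (by norm_num) (by norm_num) (by positivity)
  have hrtN : r ≤ r₀/2^N := by
    rw [le_div_iff₀ (by positivity)]
    rw [le_div_iff₀ hr0] at h2N
    nlinarith
  have hT_sub : Metric.thickening r A₁ ⊆ C N := by
    simp only [hCdef]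
    exact (Metric.thickening_subset_cthickening r A₁).trans (Metric.cthickening_mono hrtN A₁)
  have hμT : μ (Metric.thickening r A₁) ≤ μ (C N) := measure_mono hT_sub
  have hTfin : μ (Metric.thickening r A₁) ≠ ⊤ := ne_top_of_le_ne_top (hCfin N) hμT
  have hBfin : μ (closedBall x₀ r₀) ≠ ⊤ :=
    ne_top_of_le_ne_top ENNReal.ofReal_ne_top (hreg x₀ (mem_univ _) r₀ hr₀0 (by linarith)).2
  set β : ℝ := P/(P+1) with hβdef
  have hβ0 : 0 < β := div_pos hP0 (by linarith)
  have hA1 : β ≤ Real.exp (-x) := by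
    have h := Real.add_one_le_exp (-x)
    have hβx : β = 1 - x := by rw [hβdef, hxdef]; field_simp; ring
    rw [hβx]
    linarith
  have hA2 : β^N ≤ Real.exp (-x)^N := pow_le_pow_left₀ hβ0.le hA1 N
  have hA3 : Real.exp (-x)^N = Real.exp ((N:ℝ) * (-x)) := (Real.exp_nat_mul _ N).symm
  have hNlb : Real.logb 2 (r₀/r) - 1 ≤ (N:ℝ) := by
    have h := Nat.lt_floor_add_one (Real.logb 2 (r₀/r))
    rw [hNdef]
    push_cast
    linarith
  have hA4 : (N:ℝ)*(-x) ≤ x - x*Real.logb 2 (r₀/r) := by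
    nlinarith [mul_nonneg hx0.le (by linarith : (0:ℝ) ≤ (N:ℝ) - (Real.logb 2 (r₀/r) - 1))]
  have hlog2pos : 0 < Real.log 2 := Real.log_pos (by norm_num)
  have hA6 : Real.exp (-(x * Real.logb 2 (r₀/r))) = (r/r₀)^(x/Real.log 2) := by
    rw [Real.rpow_def_of_pos (by positivity)]
    congr 1
    rw [Real.logb]
    have hlogdiv : Real.log (r/r₀) = - Real.log (r₀/r) := by
      rw [← Real.log_inv]
      congr 1
      rw [inv_div]
    rw [hlogdiv]
    ring
  have hA7 : (r/r₀)^(x/Real.log 2) ≤ (r/r₀)^((q - 1) * a / (6 * 7^s * 32^s * b) * ρ^s) := by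
    apply Real.rpow_le_rpow_of_exponent_ge (by positivity) ?_ ?_
    · rw [div_le_one hr₀0]; linarith
    · have hlog2lt1 : Real.log 2 < 1 := by
        have h := Real.log_two_lt_d9
        linarith
      have hxx : x ≤ x / Real.log 2 := by
        rw [le_div_iff₀ hlog2pos]
        nlinarith
      linarith
  have hβN : β^N ≤ Real.exp 1 * (r/r₀)^((q - 1) * a / (6 * 7^s * 32^s * b) * ρ^s) := by
    calc β^N ≤ Real.exp ((N:ℝ)*(-x)) := by rw [← hA3]; exact hA2
      _ ≤ Real.exp (x - x*Real.logb 2 (r₀/r)) := Real.exp_le_exp.2 hA4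
      _ = Real.exp x * Real.exp (-(x*Real.logb 2 (r₀/r))) := by
          rw [← Real.exp_add]
          ring_nf
      _ = Real.exp x * (r/r₀)^(x/Real.log 2) := by rw [hA6]
      _ ≤ Real.exp 1 * (r/r₀)^(x/Real.log 2) := by
          apply mul_le_mul_of_nonneg_right (Real.exp_le_exp.2 hx1) (by positivity)
      _ ≤ Real.exp 1 * (r/r₀)^((q - 1) * a / (6 * 7^s * 32^s * b) * ρ^s) := by
          apply mul_le_mul_of_nonneg_left hA7 (Real.exp_pos 1).le
  have hV0b : V 0 ≤ (b/a)*3^s * (μ (closedBall x₀ r₀)).toReal := by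
    have h1 : V 0 ≤ (μ (closedBall x₀ (3*r₀))).toReal := by
      apply ENNReal.toReal_mono (ne_top_of_le_ne_top ENNReal.ofReal_ne_top hμGB)
      exact measure_mono (hCGB 0)
    have h2 : (μ (closedBall x₀ (3*r₀))).toReal ≤ b*(3*r₀)^s :=
      ENNReal.toReal_le_of_le_ofReal (by positivity) hμGB
    have h3 : a * r₀^s ≤ (μ (closedBall x₀ r₀)).toReal := by
      have hr := (hreg x₀ (mem_univ _) r₀ hr₀0 (by linarith)).1
      calc a*r₀^s = (ENNReal.ofReal (a*r₀^s)).toReal := (ENNReal.toReal_ofReal (by positivity)).symm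
        _ ≤ (μ (closedBall x₀ r₀)).toReal := ENNReal.toReal_mono hBfin hr
    have h4 : b*(3*r₀)^s = (b/a)*3^s*(a*r₀^s) := by
      rw [Real.mul_rpow (by norm_num) hr₀0.le]
      field_simp
    calc V 0 ≤ b*(3*r₀)^s := le_trans h1 h2
      _ = (b/a)*3^s*(a*r₀^s) := h4
      _ ≤ (b/a)*3^s*(μ (closedBall x₀ r₀)).toReal := by
          apply mul_le_mul_of_nonneg_left h3 (by positivity)
  have hVN := hdecay N
  have hreal : (μ (Metric.thickening r A₁)).toReal ≤
      Real.exp 3 * (b/a) * 3^s * ((r/r₀)^((q - 1) * a / (6 * 7^s * 32^s * b) * ρ^s))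
        * (μ (closedBall x₀ r₀)).toReal := by
    have h0 : (μ (Metric.thickening r A₁)).toReal ≤ V N := ENNReal.toReal_mono (hCfin N) hμT
    have hR0 : (0:ℝ) ≤ (r/r₀)^((q - 1) * a / (6 * 7^s * 32^s * b) * ρ^s) := by positivity
    have h5 : V N ≤ Real.exp 2 * (Real.exp 1 * ((r/r₀)^((q - 1) * a / (6 * 7^s * 32^s * b) * ρ^s))) * V 0 := by
      calc V N ≤ Real.exp 2 * β^N * V 0 := hVN
        _ ≤ Real.exp 2 * (Real.exp 1 * ((r/r₀)^((q - 1) * a / (6 * 7^s * 32^s * b) * ρ^s))) * V 0 := by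
            apply mul_le_mul_of_nonneg_right ?_ (hVnn 0)
            apply mul_le_mul_of_nonneg_left hβN (Real.exp_pos 2).le
    calc (μ (Metric.thickening r A₁)).toReal ≤ V N := h0
      _ ≤ Real.exp 2 * (Real.exp 1 * ((r/r₀)^((q - 1) * a / (6 * 7^s * 32^s * b) * ρ^s))) * V 0 := h5
      _ = Real.exp 3 * ((r/r₀)^((q - 1) * a / (6 * 7^s * 32^s * b) * ρ^s)) * V 0 := by
          rw [← mul_assoc, ← Real.exp_add]
          norm_num
      _ ≤ Real.exp 3 * ((r/r₀)^((q - 1) * a / (6 * 7^s * 32^s * b) * ρ^s))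
            * ((b/a)*3^s*(μ (closedBall x₀ r₀)).toReal) := by
          apply mul_le_mul_of_nonneg_left hV0b (by positivity)
      _ = Real.exp 3 * (b/a) * 3^s * ((r/r₀)^((q - 1) * a / (6 * 7^s * 32^s * b) * ρ^s))
            * (μ (closedBall x₀ r₀)).toReal := by ring
  calc μ (Metric.thickening r A₁)
      = ENNReal.ofReal ((μ (Metric.thickening r A₁)).toReal) := (ENNReal.ofReal_toReal hTfin).symm
    _ ≤ ENNReal.ofReal (Real.exp 3 * (b/a) * 3^s * ((r/r₀)^((q - 1) * a / (6 * 7^s * 32^s * b) * ρ^s))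
          * (μ (closedBall x₀ r₀)).toReal) := ENNReal.ofReal_le_ofReal hreal
    _ = ENNReal.ofReal (Real.exp 3 * (b/a) * 3^s * ((r/r₀)^((q - 1) * a / (6 * 7^s * 32^s * b) * ρ^s)))
          * ENNReal.ofReal ((μ (closedBall x₀ r₀)).toReal) := by
        rw [← ENNReal.ofReal_mul (by positivity)]
    _ = ENNReal.ofReal (Real.exp 3 * (b/a) * 3^s * ((r/r₀)^((q - 1) * a / (6 * 7^s * 32^s * b) * ρ^s)))
          * μ (closedBall x₀ r₀) := by
        rw [ENNReal.ofReal_toReal hBfin]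
end

section
/- Let X be a separable metric space carrying a doubling measure μ, and let N ⊆ X be a set such that for every s > dim_P(X) and every x ∈ X∖N one has lim_{r↓0} μ(B(x,r))/r^s = ∞. Let 0 < λ < dim_P(X). If A ⊆ X∖N satisfies limsup_{r↓0} μ(A(r))/r^λ < ∞, then dim_P(A) ≤ dim_P(X) − λ, where dim_P denotes the packing dimension. -/
open Metric MeasureTheory Set Filter
open scoped ENNReal NNReal Topology

/-- `covNum A lam r = inf {k * r^lam : A is covered by k closed balls of radius r}`,
with `inf ∅ = ∞`. -/
noncomputable def covNum {X : Type*} [MetricSpace X] (A : Set X) (lam r : ℝ) : ℝ≥0∞ :=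
  sInf {m : ℝ≥0∞ | ∃ (k : ℕ) (c : Fin k → X),
    A ⊆ ⋃ i, closedBall (c i) r ∧ m = (k : ℝ≥0∞) * ENNReal.ofReal (r ^ lam)}

/-- The upper Minkowski dimension: `inf {λ ≥ 0 : limsup_{r↓0} covNum A λ r < ∞}`
(`= ∞` if there is no such `λ`). -/
noncomputable def dimM {X : Type*} [MetricSpace X] (A : Set X) : ℝ≥0∞ :=
  ⨅ (l : ℝ≥0) (_ : Filter.limsup (fun r => covNum A (l : ℝ) r)
      (nhdsWithin (0 : ℝ) (Set.Ioi 0)) < ⊤), (l : ℝ≥0∞)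

/-- The packing dimension:
`inf {sup_i dimM (C i) : A ⊆ ⋃ i C i, each C i bounded}`. -/
noncomputable def dimP {X : Type*} [MetricSpace X] (A : Set X) : ℝ≥0∞ :=
  ⨅ (C : ℕ → Set X) (_ : A ⊆ ⋃ i, C i) (_ : ∀ i, Bornology.IsBounded (C i)),
    ⨆ i, dimM (C i)

lemma covNum_le_of_cover {X : Type*} [MetricSpace X] {A : Set X} {l r : ℝ} {k : ℕ}
    (c : Fin k → X) (h : A ⊆ ⋃ i, closedBall (c i) r) :
    covNum A l r ≤ (k : ℝ≥0∞) * ENNReal.ofReal (r ^ l) :=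
  sInf_le ⟨k, c, h, rfl⟩

lemma exists_cover_bound {X : Type*} [MetricSpace X] [MeasurableSpace X] [BorelSpace X]
    (μ : Measure X) (A' : Set X) (r : ℝ) (hr : 0 < r) (b M : ℝ≥0∞)
    (hb0 : b ≠ 0) (hbt : b ≠ ⊤) (hM : M ≠ ⊤)
    (hlow : ∀ x ∈ A', b ≤ μ (closedBall x (r / 2)))
    (hup : ∀ F : Finset X, ↑F ⊆ A' → ((F : Set X).Pairwise fun a c => r < dist a c) →
      μ (⋃ x ∈ F, closedBall x (r / 2)) ≤ M) :
    ∃ (k : ℕ) (c : Fin k → X), A' ⊆ ⋃ i, closedBall (c i) r ∧ (k : ℝ≥0∞) * b ≤ M := by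
  have hchain : ∀ c ⊆ {T : Set X | T ⊆ A' ∧ T.Pairwise fun a c => r < dist a c},
      IsChain (· ⊆ ·) c → ∃ ub ∈ {T : Set X | T ⊆ A' ∧ T.Pairwise fun a c => r < dist a c},
        ∀ s ∈ c, s ⊆ ub := by
    intro c hcS hc
    refine ⟨⋃₀ c, ⟨sUnion_subset fun t ht => (hcS ht).1, ?_⟩,
      fun s hs => subset_sUnion_of_mem hs⟩
    intro a ha b hb hab
    obtain ⟨ta, hta, haa⟩ := ha
    obtain ⟨tb, htb, hbb⟩ := hb
    rcases hc.total hta htb with h | h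
    · exact (hcS htb).2 (h haa) hbb hab
    · exact (hcS hta).2 haa (h hbb) hab
  obtain ⟨T, hTmax⟩ := zorn_subset
      {T : Set X | T ⊆ A' ∧ T.Pairwise fun a c => r < dist a c} hchain
  obtain ⟨hTA, hTsep⟩ := hTmax.prop
  have key : ∀ F : Finset X, ↑F ⊆ T → (F.card : ℝ≥0∞) * b ≤ M := by
    intro F hF
    have hdisj : (F : Set X).PairwiseDisjoint fun x => closedBall x (r / 2) := by
      intro a ha c hc hac
      refine closedBall_disjoint_closedBall ?_
      have := hTsep (hF ha) (hF hc) hac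
      linarith
    have hsum : μ (⋃ x ∈ F, closedBall x (r / 2)) = ∑ x ∈ F, μ (closedBall x (r / 2)) :=
      measure_biUnion_finset hdisj fun x _ => measurableSet_closedBall
    have h1 : (F.card : ℝ≥0∞) * b ≤ ∑ x ∈ F, μ (closedBall x (r / 2)) := by
      calc (F.card : ℝ≥0∞) * b = ∑ _x ∈ F, b := by
            rw [Finset.sum_const, nsmul_eq_mul]
        _ ≤ _ := Finset.sum_le_sum fun x hx => hlow x (hTA (hF hx))
    refine h1.trans ?_
    rw [← hsum]
    exact hup F (hF.trans hTA) (hTsep.mono hF)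
  have hTfin : T.Finite := by
    rw [← Set.not_infinite]
    intro hinf
    obtain ⟨n, hn⟩ := ENNReal.exists_nat_gt (ENNReal.div_lt_top hM hb0).ne
    obtain ⟨t, htT, htfin, htn⟩ := hinf.exists_subset_ncard_eq n
    have hcard : (htfin.toFinset.card : ℝ≥0∞) * b ≤ M := by
      refine key htfin.toFinset ?_
      rw [htfin.coe_toFinset]; exact htT
    rw [show htfin.toFinset.card = n by rw [← htn, Set.ncard_eq_toFinset_card _ htfin]] at hcard
    have : M < (n : ℝ≥0∞) * b := (ENNReal.div_lt_iff (Or.inl hb0) (Or.inl hbt)).mp hn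
    exact absurd hcard this.not_ge
  refine ⟨hTfin.toFinset.card, fun i => (hTfin.toFinset.equivFin.symm i : X), ?_, ?_⟩
  · intro x hx
    have hex : ∃ t ∈ T, dist x t ≤ r := by
      by_contra hcon
      push_neg at hcon
      have hxT : x ∉ T := fun hxT => absurd (by simpa using hr.le : dist x x ≤ r) (hcon x hxT).not_ge
      have hins : insert x T ∈ {T : Set X | T ⊆ A' ∧ T.Pairwise fun a c => r < dist a c} := by
        constructor
        · exact insert_subset hx hTA
        · refine @Set.Pairwise.insert_of_symm _ _ _ _ ⟨?_⟩ hTsep ?_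
          · intro a b hab; rwa [dist_comm]
          · intro b hb _; exact hcon b hb
      have := hTmax.2 hins (subset_insert x T)
      exact hxT (this (mem_insert x T))
    obtain ⟨t, ht, hdist⟩ := hex
    have htm : t ∈ hTfin.toFinset := by rwa [Set.Finite.mem_toFinset]
    refine mem_iUnion.2 ⟨hTfin.toFinset.equivFin ⟨t, htm⟩, ?_⟩
    simp only [Equiv.symm_apply_apply]
    exact hdist
  · refine key hTfin.toFinset ?_
    rw [hTfin.coe_toFinset]

lemma dimP_empty_le {X : Type*} [MetricSpace X] (a : ℝ≥0∞) : dimP (∅ : Set X) ≤ a := by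
  have hM : dimM (∅ : Set X) ≤ ((0 : ℝ≥0) : ℝ≥0∞) := by
    refine iInf₂_le 0 ?_
    have hcov : ∀ r : ℝ, covNum (∅ : Set X) ((0 : ℝ≥0) : ℝ) r = 0 := by
      intro r
      have := covNum_le_of_cover (A := (∅ : Set X)) (l := ((0 : ℝ≥0) : ℝ)) (r := r)
        (k := 0) Fin.elim0 (by simp)
      simpa using this
    have : Filter.limsup (fun r => covNum (∅ : Set X) ((0 : ℝ≥0) : ℝ) r)
        (nhdsWithin (0 : ℝ) (Set.Ioi 0)) ≤ 0 :=
      limsup_le_of_le (by isBoundedDefault) (Eventually.of_forall fun r => (hcov r).le)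
    exact lt_of_le_of_lt this ENNReal.zero_lt_top
  calc dimP (∅ : Set X) ≤ ⨆ _ : ℕ, dimM (∅ : Set X) := by
        refine iInf_le_of_le (fun _ => ∅) (iInf_le_of_le (by simp) (iInf_le_of_le
          (fun _ => Bornology.isBounded_empty) le_rfl))
    _ ≤ a := iSup_le fun _ => le_trans hM (by simp)

lemma dimP_le_aux {X : Type*} [MetricSpace X] [MeasurableSpace X] [BorelSpace X]
    (μ : Measure X) (A : Set X) (s lam : ℝ) (hlam0 : 0 < lam) (hslam : lam < s)
    (hpt : ∀ x ∈ A, Filter.Tendsto (fun r : ℝ => μ (closedBall x r) / ENNReal.ofReal (r ^ s))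
      (nhdsWithin (0 : ℝ) (Set.Ioi 0)) (nhds ⊤))
    (hA : Filter.limsup
        (fun r : ℝ => μ (Metric.thickening r A) / ENNReal.ofReal (r ^ lam))
        (nhdsWithin (0 : ℝ) (Set.Ioi 0)) < ⊤) :
    dimP A ≤ ENNReal.ofReal (s - lam) := by
  rcases A.eq_empty_or_nonempty with rfl | ⟨x₀, hx₀⟩
  · exact dimP_empty_le _
  set L := Filter.limsup
      (fun r : ℝ => μ (Metric.thickening r A) / ENNReal.ofReal (r ^ lam))
      (nhdsWithin (0 : ℝ) (Set.Ioi 0)) with hL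
  set K : ℝ≥0∞ := L + 1 with hKdef
  have hKtop : K ≠ ⊤ := by
    simp [hKdef, ENNReal.add_eq_top, hA.ne]
  have hLK : L < K := ENNReal.lt_add_right hA.ne one_ne_zero
  have hev : ∀ᶠ r : ℝ in nhdsWithin (0 : ℝ) (Set.Ioi 0),
      μ (Metric.thickening r A) / ENNReal.ofReal (r ^ lam) < K :=
    eventually_lt_of_limsup_lt hLK
  -- the sets S m
  set S : ℕ → Set X := fun m =>
    {x ∈ A | ∀ r : ℝ, 0 < r → r < 1 / (m + 1) → ENNReal.ofReal (r ^ s) ≤ μ (closedBall x r)}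
    with hSdef
  have hcovS : A ⊆ ⋃ m, S m := by
    intro x hx
    have h1 : ∀ᶠ r : ℝ in nhdsWithin (0 : ℝ) (Set.Ioi 0),
        (1 : ℝ≥0∞) ≤ μ (closedBall x r) / ENNReal.ofReal (r ^ s) :=
      (hpt x hx).eventually (eventually_ge_nhds ENNReal.one_lt_top)
    rw [eventually_iff, mem_nhdsGT_iff_exists_Ioo_subset] at h1
    obtain ⟨u, hu, hsub⟩ := h1
    obtain ⟨m, hm⟩ := exists_nat_gt (1 / u)
    refine mem_iUnion.2 ⟨m, hx, fun r hr0 hrm => ?_⟩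
    have hu0 : (0 : ℝ) < u := hu
    have hru : r < u := by
      have h2 : 1 / u < (m : ℝ) + 1 := hm.trans (by linarith)
      have : 1 / ((m : ℝ) + 1) < u := by
        rw [div_lt_iff₀ (by positivity)]
        rw [div_lt_iff₀ hu0] at h2
        linarith [h2]
      linarith
    have := hsub ⟨hr0, hru⟩
    rw [Set.mem_setOf_eq] at this
    have hrs : ENNReal.ofReal (r ^ s) ≠ 0 := by
      simp [ENNReal.ofReal_eq_zero, not_le, Real.rpow_pos_of_pos hr0]
    calc ENNReal.ofReal (r ^ s) = 1 * ENNReal.ofReal (r ^ s) := (one_mul _).symm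
      _ ≤ μ (closedBall x r) := (ENNReal.le_div_iff_mul_le (Or.inl hrs)
          (Or.inl ENNReal.ofReal_ne_top)).mp this
  -- the key covering estimate
  have hdimM : ∀ (m j : ℕ), dimM (S m ∩ closedBall x₀ j) ≤ ENNReal.ofReal (s - lam) := by
    intro m j
    set A' := S m ∩ closedBall x₀ (j : ℝ) with hA'
    set l : ℝ≥0 := Real.toNNReal (s - lam) with hldef
    have hl : (l : ℝ) = s - lam := Real.coe_toNNReal _ (by linarith)
    have hbound : ∀ᶠ r : ℝ in nhdsWithin (0 : ℝ) (Set.Ioi 0),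
        covNum A' (l : ℝ) r ≤ K * ENNReal.ofReal ((2 : ℝ) ^ s) := by
      have hsmall : Set.Ioo (0 : ℝ) (2 / (m + 1)) ∈ nhdsWithin (0 : ℝ) (Set.Ioi 0) :=
        Ioo_mem_nhdsGT_of_mem ⟨le_refl 0, by positivity⟩
      filter_upwards [hev, hsmall, self_mem_nhdsWithin] with r hKr hrm hr0'
      have hr0 : (0 : ℝ) < r := hr0'
      have hr2 : 0 < r / 2 := by linarith
      have hrhalf : r / 2 < 1 / (m + 1) := by
        have := hrm.2
        rw [lt_div_iff₀ (by positivity)] at this ⊢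
        linarith
      -- apply the covering lemma
      have hup : ∀ F : Finset X, ↑F ⊆ A' → ((F : Set X).Pairwise fun a c => r < dist a c) →
          μ (⋃ x ∈ F, closedBall x (r / 2)) ≤ K * ENNReal.ofReal (r ^ lam) := by
        intro F hF hFsep
        have hsub2 : (⋃ x ∈ F, closedBall x (r / 2)) ⊆ Metric.thickening r A := by
          intro y hy
          obtain ⟨x, hxF, hyx⟩ := by simpa using hy
          rw [Metric.mem_thickening_iff]
          exact ⟨x, (hF hxF).1.1, lt_of_le_of_lt hyx (by linarith)⟩
        refine (measure_mono hsub2).trans ?_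
        have hrl : ENNReal.ofReal (r ^ lam) ≠ 0 := by
          simp [ENNReal.ofReal_eq_zero, not_le, Real.rpow_pos_of_pos hr0]
        exact (ENNReal.div_le_iff hrl ENNReal.ofReal_ne_top).mp hKr.le
      obtain ⟨k, c, hcov, hkb⟩ := exists_cover_bound μ A' r hr0
          (ENNReal.ofReal ((r / 2) ^ s)) (K * ENNReal.ofReal (r ^ lam))
          (by simp [ENNReal.ofReal_eq_zero, not_le, Real.rpow_pos_of_pos hr2])
          ENNReal.ofReal_ne_top
          (ENNReal.mul_ne_top hKtop ENNReal.ofReal_ne_top)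
          (fun x hx => hx.1.2 (r / 2) hr2 hrhalf)
          hup
      have h2 : covNum A' (l : ℝ) r ≤ (k : ℝ≥0∞) * ENNReal.ofReal (r ^ (s - lam)) := by
        rw [← hl]; exact covNum_le_of_cover c hcov
      refine h2.trans ?_
      have hmul := mul_le_mul_left hkb (ENNReal.ofReal ((2 : ℝ) ^ s / r ^ lam))
      have hrl0 : (0 : ℝ) < r ^ lam := Real.rpow_pos_of_pos hr0 _
      have h2s0 : (0 : ℝ) < (2 : ℝ) ^ s := Real.rpow_pos_of_pos (by norm_num) _
      have heq1 : (r / 2) ^ s * ((2 : ℝ) ^ s / r ^ lam) = r ^ (s - lam) := by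
        rw [Real.div_rpow hr0.le (by norm_num : (0:ℝ) ≤ 2), Real.rpow_sub hr0]
        field_simp
      have heq2 : r ^ lam * ((2 : ℝ) ^ s / r ^ lam) = (2 : ℝ) ^ s := by
        field_simp
      calc (k : ℝ≥0∞) * ENNReal.ofReal (r ^ (s - lam))
          = (k : ℝ≥0∞) * ENNReal.ofReal ((r / 2) ^ s) *
            ENNReal.ofReal ((2 : ℝ) ^ s / r ^ lam) := by
            rw [mul_assoc, ← ENNReal.ofReal_mul (Real.rpow_nonneg hr2.le _), heq1]
        _ ≤ K * ENNReal.ofReal (r ^ lam) * ENNReal.ofReal ((2 : ℝ) ^ s / r ^ lam) := hmul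
        _ = K * ENNReal.ofReal ((2 : ℝ) ^ s) := by
            rw [mul_assoc, ← ENNReal.ofReal_mul (Real.rpow_nonneg hr0.le _), heq2]
    have hlim : Filter.limsup (fun r => covNum A' (l : ℝ) r)
        (nhdsWithin (0 : ℝ) (Set.Ioi 0)) < ⊤ := by
      refine lt_of_le_of_lt (limsup_le_of_le (by isBoundedDefault) hbound) ?_
      exact ENNReal.mul_lt_top hKtop.lt_top ENNReal.ofReal_lt_top
    have := iInf₂_le (f := fun (l : ℝ≥0) (_ : Filter.limsup (fun r => covNum A' (l : ℝ) r)
        (nhdsWithin (0 : ℝ) (Set.Ioi 0)) < ⊤) => (l : ℝ≥0∞)) l hlim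
    rw [hA'] at this ⊢
    refine this.trans_eq ?_
    rfl
  -- assemble
  set C : ℕ → Set X := fun n => S n.unpair.1 ∩ closedBall x₀ (n.unpair.2 : ℝ) with hCdef
  have hsub : A ⊆ ⋃ n, C n := by
    intro x hx
    obtain ⟨m, hm⟩ := mem_iUnion.mp (hcovS hx)
    obtain ⟨j, hj⟩ := exists_nat_ge (dist x x₀)
    refine mem_iUnion.2 ⟨Nat.pair m j, ?_⟩
    simp only [hCdef, Nat.unpair_pair]
    exact ⟨hm, by rwa [Metric.mem_closedBall]⟩
  have hbd : ∀ n, Bornology.IsBounded (C n) :=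
    fun n => Metric.isBounded_closedBall.subset inter_subset_right
  calc dimP A ≤ ⨆ n, dimM (C n) :=
        iInf_le_of_le C (iInf_le_of_le hsub (iInf_le_of_le hbd le_rfl))
    _ ≤ ENNReal.ofReal (s - lam) := iSup_le fun n => hdimM _ _

/-- Let `μ` be doubling on a separable metric space `X` and let
`N ⊆ X` be such that for every `s > dim_P X` and `x ∈ X ∖ N`, `μ(B(x,r))/r^s → ∞` as
`r ↓ 0`. If `0 < λ < dim_P X` and `A ⊆ X ∖ N` satisfies
`limsup_{r↓0} μ(A(r))/r^λ < ∞`, then `dim_P A ≤ dim_P X − λ`. -/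
theorem stmt14 {X : Type*} [MetricSpace X] [TopologicalSpace.SeparableSpace X]
    [MeasurableSpace X] [BorelSpace X] (μ : Measure X) (cμ rμ : ℝ)
    (hc : 1 ≤ cμ) (hr : 0 < rμ) (hdoub : IsDoubling μ cμ rμ)
    (N : Set X)
    (hN : ∀ s : ℝ, dimP (Set.univ : Set X) < ENNReal.ofReal s →
      ∀ x ∈ Nᶜ,
        Filter.Tendsto (fun r : ℝ => μ (closedBall x r) / ENNReal.ofReal (r ^ s))
          (nhdsWithin (0 : ℝ) (Set.Ioi 0)) (nhds ⊤))
    (lam : ℝ) (hlam0 : 0 < lam) (hlam : ENNReal.ofReal lam < dimP (Set.univ : Set X))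
    (A : Set X) (hAN : A ⊆ Nᶜ)
    (hA : Filter.limsup
        (fun r : ℝ => μ (Metric.thickening r A) / ENNReal.ofReal (r ^ lam))
        (nhdsWithin (0 : ℝ) (Set.Ioi 0)) < ⊤) :
    dimP A ≤ dimP (Set.univ : Set X) - ENNReal.ofReal lam := by
  set D := dimP (Set.univ : Set X) with hD
  by_cases hDtop : D = ⊤
  · rw [hDtop, ENNReal.top_sub ENNReal.ofReal_ne_top]
    exact le_top
  · set d := D.toReal with hd
    have hofd : ENNReal.ofReal d = D := ENNReal.ofReal_toReal hDtop
    have hd0 : 0 < d := by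
      by_contra h
      push_neg at h
      rw [← hofd, ENNReal.ofReal_eq_zero.mpr h] at hlam
      exact absurd hlam (by simp)
    have hlamd : lam < d := by
      rw [← hofd] at hlam
      exact (ENNReal.ofReal_lt_ofReal_iff hd0).mp hlam
    refine ENNReal.le_of_forall_pos_le_add fun ε hε hfin => ?_
    set s : ℝ := d + ε with hs
    have hslt : D < ENNReal.ofReal s := by
      rw [← hofd]
      exact (ENNReal.ofReal_lt_ofReal_iff (by positivity)).mpr (by
        have : (0:ℝ) < ε := hε
        linarith)
    have hmain : dimP A ≤ ENNReal.ofReal (s - lam) :=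
      dimP_le_aux μ A s lam hlam0 (by have : (0:ℝ) < ε := hε; linarith)
        (fun x hx => hN s hslt x (hAN hx)) hA
    refine hmain.trans ?_
    have h1 : ENNReal.ofReal (s - lam) = ENNReal.ofReal (d - lam) + ENNReal.ofReal ε := by
      rw [← ENNReal.ofReal_add (by linarith) (by positivity)]
      rw [hs]; ring_nf
    rw [h1, ENNReal.ofReal_sub _ hlam0.le, hofd, ENNReal.ofReal_coe_nnreal]
end

section
/- Let X be a complete separable metric space carrying a measure μ which is s-regular on X with constants a_μ, b_μ and scale r_μ, and let 0 < t < s. Then for every z ∈ X and every 0 < R < r_μ there exists a measure ν with support contained in B(z,2R) such that ν(B(z,2R)) = R^t and a_ν r^t ≤ ν(B(x,r)) ≤ b_ν r^t for all x in the support of ν and all 0 < r < R, where the constants a_ν > 0 and b_ν > 0 depend only on s, t, a_μ and b_μ. -/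
open Metric MeasureTheory Set Filter
open scoped ENNReal NNReal Topology

/-- The support of a measure: points all of whose neighbourhoods have positive measure. -/
def sptMeas {X : Type*} [MetricSpace X] [MeasurableSpace X] (ν : Measure X) : Set X :=
  {x : X | ∀ r : ℝ, 0 < r → 0 < ν (Metric.ball x r)}

section Stmt15AuxSection
open TopologicalSpace
open scoped Classical
namespace Stmt15Aux

variable (N : ℕ) [NeZero N]

local instance : TopologicalSpace (ZMod N) := ⊥
local instance : DiscreteTopology (ZMod N) := ⟨rfl⟩
local instance : MeasurableSpace (ZMod N) := ⊤
local instance : BorelSpace (ZMod N) := ⟨(borel_eq_top_of_discrete (α := ZMod N)).symm⟩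
local instance : IsTopologicalAddGroup (ZMod N) :=
  { continuous_add := continuous_of_discreteTopology
    continuous_neg := continuous_of_discreteTopology }

abbrev G := ℕ → ZMod N

noncomputable def P : Measure (G N) := Measure.addHaarMeasure (⊤ : PositiveCompacts (G N))

instance : (P N).IsAddLeftInvariant := by unfold P; infer_instance

lemma P_univ : P N Set.univ = 1 := by
  have := Measure.addHaarMeasure_self (K₀ := (⊤ : PositiveCompacts (G N)))
  simpa [P, PositiveCompacts.coe_top] using this

/-- level-`k` cylinder -/
def Cyl (k : ℕ) (u : Fin k → ZMod N) : Set (G N) := {ω | ∀ j : Fin k, ω j = u j}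

omit [NeZero N] in
lemma measurableSet_cyl (k : ℕ) (u : Fin k → ZMod N) : MeasurableSet (Cyl N k u) := by
  have : Cyl N k u = ⋂ j : Fin k, (fun ω : G N => ω j) ⁻¹' {u j} := by
    ext ω; simp [Cyl]
  rw [this]
  exact MeasurableSet.iInter fun j => (measurable_pi_apply _) (MeasurableSet.singleton _)

omit [NeZero N] in
lemma cyl_disjoint {k : ℕ} {u u' : Fin k → ZMod N} (h : u ≠ u') :
    Disjoint (Cyl N k u) (Cyl N k u') := by
  rw [Set.disjoint_left]
  rintro ω hω hω'
  exact h (funext fun j => (hω j).symm.trans (hω' j))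

omit [NeZero N] in
lemma iUnion_cyl (k : ℕ) : ⋃ u : Fin k → ZMod N, Cyl N k u = Set.univ := by
  ext ω; simp only [Set.mem_iUnion, Set.mem_univ, iff_true]
  exact ⟨fun j => ω j, fun j => rfl⟩

lemma P_cyl_eq (k : ℕ) (u u' : Fin k → ZMod N) : P N (Cyl N k u) = P N (Cyl N k u') := by
  classical
  set v : G N := fun j => if h : j < k then u ⟨j, h⟩ - u' ⟨j, h⟩ else 0 with hv
  have hvj : ∀ j : Fin k, v (j : ℕ) = u j - u' j := by
    intro j; simp [hv, j.isLt]
  have : Cyl N k u' = (fun ω => v + ω) ⁻¹' (Cyl N k u) := by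
    ext ω
    simp only [Cyl, Set.mem_preimage, Set.mem_setOf_eq, Pi.add_apply]
    constructor
    · intro h j
      rw [hvj j, h j]
      exact sub_add_cancel _ _
    · intro h j
      have hj := h j
      rw [hvj j] at hj
      linear_combination hj
  rw [this]
  exact (measure_preimage_add (P N) v (Cyl N k u)).symm

lemma P_cyl (k : ℕ) (u : Fin k → ZMod N) : P N (Cyl N k u) = ((N : ℝ≥0∞) ^ k)⁻¹ := by
  classical
  have hcard : (Fintype.card (Fin k → ZMod N) : ℝ≥0∞) = (N : ℝ≥0∞) ^ k := by
    simp [ZMod.card]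
  have hmu := measure_iUnion (μ := P N)
    (fun i j hij => cyl_disjoint N hij) (fun u' => measurableSet_cyl N k u')
  rw [iUnion_cyl, P_univ, tsum_fintype] at hmu
  have hsum : (N : ℝ≥0∞) ^ k * P N (Cyl N k u) = 1 := by
    calc (N : ℝ≥0∞) ^ k * P N (Cyl N k u)
        = ∑ u' : Fin k → ZMod N, P N (Cyl N k u') := by
          rw [Finset.sum_congr rfl (fun u' _ => P_cyl_eq N k u' u), Finset.sum_const,
            Finset.card_univ, nsmul_eq_mul, hcard]
      _ = 1 := hmu.symm
  have hN : ((N : ℝ≥0∞) ^ k) ≠ 0 := by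
    simp [Nat.pos_of_ne_zero (NeZero.ne N), NeZero.ne N]
  have hNt : ((N : ℝ≥0∞) ^ k) ≠ ⊤ := ENNReal.pow_ne_top (ENNReal.natCast_ne_top N)
  have := congrArg (fun x => ((N : ℝ≥0∞) ^ k)⁻¹ * x) hsum
  simpa [← mul_assoc, ENNReal.inv_mul_cancel hN hNt] using this


variable {X : Type*} [MetricSpace X] [MeasurableSpace X] [BorelSpace X]

/-- Counting lemma: disjoint balls with measure ≥ α inside a set of measure ≤ β. -/
lemma card_sep_le (μ : Measure X) (Y : Finset X) (ρ' α β : ℝ) (hα : 0 < α) (hβ0 : 0 ≤ β) (Z : Set X)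
    (hsep : ∀ y ∈ Y, ∀ y' ∈ Y, y ≠ y' → 2 * ρ' < dist y y')
    (hlow : ∀ y ∈ Y, ENNReal.ofReal α ≤ μ (closedBall y ρ'))
    (hsub : ∀ y ∈ Y, closedBall y ρ' ⊆ Z)
    (hβ : μ Z ≤ ENNReal.ofReal β) :
    (Y.card : ℝ) * α ≤ β := by
  have hdisj : (↑Y : Set X).Pairwise (Function.onFun Disjoint fun y => closedBall y ρ') := by
    intro y hy y' hy' hne
    exact closedBall_disjoint_closedBall (by linarith [hsep y hy y' hy' hne])
  have h1 : (Y.card : ℝ≥0∞) * ENNReal.ofReal α ≤ μ Z := by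
    calc (Y.card : ℝ≥0∞) * ENNReal.ofReal α = ∑ _y ∈ Y, ENNReal.ofReal α := by
          rw [Finset.sum_const, nsmul_eq_mul]
      _ ≤ ∑ y ∈ Y, μ (closedBall y ρ') := Finset.sum_le_sum hlow
      _ = μ (⋃ y ∈ Y, closedBall y ρ') :=
          (measure_biUnion_finset hdisj (fun y _ => measurableSet_closedBall)).symm
      _ ≤ μ Z := measure_mono (by simpa using fun y hy => hsub y hy)
  have h2 : (Y.card : ℝ≥0∞) * ENNReal.ofReal α ≤ ENNReal.ofReal β := h1.trans hβ
  have h3 : ENNReal.ofReal ((Y.card : ℝ) * α) ≤ ENNReal.ofReal β := by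
    rwa [ENNReal.ofReal_mul (by positivity), ENNReal.ofReal_natCast]
  exact (ENNReal.ofReal_le_ofReal_iff hβ0).mp h3

/-- Packing lemma: `N` points in `closedBall x (ρ/4)` that are `4δρ`-separated. -/
lemma packing (μ : Measure X) (s aa bb rμ : ℝ) (ha : 0 < aa) (hab : aa ≤ bb) (hs : 0 < s)
    (hrμ : 0 < rμ) (hreg : IsRegularOn μ s Set.univ aa bb rμ)
    (N : ℕ) (δ : ℝ) (hδ0 : 0 < δ) (hδ : δ ≤ 1/8)
    (hN : (N : ℝ) * (bb * (16 * δ) ^ s) ≤ aa) :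
    ∀ x : X, ∀ ρ : ℝ, 0 < ρ → ρ < rμ →
      ∃ y : Fin N → X, (∀ i, y i ∈ closedBall x (ρ/4)) ∧
        ∀ i j, i ≠ j → 4 * δ * ρ < dist (y i) (y j) := by
  intro x ρ hρ hρμ
  have hb : 0 < bb := lt_of_lt_of_le ha hab
  -- the card bound for separated sets
  have hcard : ∀ Y : Finset X, (↑Y : Set X) ⊆ closedBall x (ρ/4) →
      (∀ y ∈ Y, ∀ y' ∈ Y, y ≠ y' → 4 * δ * ρ < dist y y') →
      (Y.card : ℝ) * (aa * (2*δ*ρ) ^ s) ≤ bb * (ρ/2) ^ s := by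
    intro Y hYsub hYsep
    refine card_sep_le μ Y (2*δ*ρ) _ _ (by positivity) (by positivity) (closedBall x (ρ/2)) ?_ ?_ ?_ ?_
    · intro y hy y' hy' hne; rw [show 2*(2*δ*ρ) = 4*δ*ρ by ring]; exact hYsep y hy y' hy' hne
    · intro y _
      exact (hreg y trivial (2*δ*ρ) (by positivity) (by nlinarith)).1
    · intro y hy p hp
      have h1 : dist y x ≤ ρ/4 := hYsub hy
      have h2 : dist p y ≤ 2*δ*ρ := hp
      have : dist p x ≤ ρ/2 := by
        calc dist p x ≤ dist p y + dist y x := dist_triangle _ _ _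
          _ ≤ 2*δ*ρ + ρ/4 := by linarith
          _ ≤ ρ/2 := by nlinarith
      exact this
    · exact (hreg x trivial (ρ/2) (by positivity) (by linarith)).2
  -- so all separated sets have card ≤ M₀
  set M₀ : ℕ := ⌊bb * (ρ/2) ^ s / (aa * (2*δ*ρ) ^ s)⌋₊ with hM₀
  have hcardM : ∀ Y : Finset X, (↑Y : Set X) ⊆ closedBall x (ρ/4) →
      (∀ y ∈ Y, ∀ y' ∈ Y, y ≠ y' → 4 * δ * ρ < dist y y') → Y.card ≤ M₀ := by
    intro Y h1 h2
    have := hcard Y h1 h2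
    have hpos : (0:ℝ) < aa * (2*δ*ρ) ^ s := by positivity
    have : (Y.card : ℝ) ≤ bb * (ρ/2) ^ s / (aa * (2*δ*ρ) ^ s) := by
      rw [le_div_iff₀ hpos]; linarith
    exact Nat.le_floor this
  -- take a separated set of maximal cardinality
  set Q : ℕ → Prop := fun n => ∃ Y : Finset X, (↑Y : Set X) ⊆ closedBall x (ρ/4) ∧
      (∀ y ∈ Y, ∀ y' ∈ Y, y ≠ y' → 4 * δ * ρ < dist y y') ∧ Y.card = n with hQ
  have hQ0 : Q 0 := ⟨∅, by simp, by simp, rfl⟩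
  set n₀ := Nat.findGreatest Q M₀ with hn₀
  have hQn : Q n₀ := Nat.findGreatest_spec (m := 0) (Nat.zero_le _) hQ0
  obtain ⟨Y, hYsub, hYsep, hYcard⟩ := hQn
  -- maximality ⇒ covering
  have hcov : closedBall x (ρ/4) ⊆ ⋃ y ∈ Y, closedBall y (4*δ*ρ) := by
    intro p hp
    by_contra hcon
    simp only [Set.mem_iUnion, mem_closedBall, not_exists, not_le] at hcon
    have hpY : p ∉ Y := fun h => by
      have h0 := hcon p h; rw [dist_self] at h0; nlinarith
    set Y' := insert p Y with hY'
    have hsub' : (↑Y' : Set X) ⊆ closedBall x (ρ/4) := by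
      rw [hY']; push_cast [Finset.coe_insert]
      exact Set.insert_subset hp hYsub
    have hsep' : ∀ y ∈ Y', ∀ y' ∈ Y', y ≠ y' → 4*δ*ρ < dist y y' := by
      intro y hy y' hy' hne
      rcases Finset.mem_insert.mp hy with rfl | hy₂ <;>
        rcases Finset.mem_insert.mp hy' with rfl | hy₂'
      · exact absurd rfl hne
      · exact hcon y' hy₂'
      · rw [dist_comm]; exact hcon y hy₂
      · exact hYsep y hy₂ y' hy₂' hne
    have hcard' : Y'.card = n₀ + 1 := by
      rw [hY', Finset.card_insert_of_notMem hpY, hYcard]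
    have hle : n₀ + 1 ≤ M₀ := hcard' ▸ hcardM Y' hsub' hsep'
    exact Nat.findGreatest_is_greatest (Nat.lt_succ_self n₀) hle ⟨Y', hsub', hsep', hcard'⟩
  -- covering ⇒ lower bound on the cardinality
  have hlow2 : aa * (ρ/4) ^ s ≤ (Y.card : ℝ) * (bb * (4*δ*ρ) ^ s) := by
    have h1 : ENNReal.ofReal (aa * (ρ/4) ^ s) ≤ μ (closedBall x (ρ/4)) :=
      (hreg x trivial (ρ/4) (by positivity) (by linarith)).1
    have h2 : μ (closedBall x (ρ/4)) ≤ ∑ y ∈ Y, μ (closedBall y (4*δ*ρ)) :=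
      (measure_mono hcov).trans (measure_biUnion_finset_le Y _)
    have h3 : ∑ y ∈ Y, μ (closedBall y (4*δ*ρ)) ≤
        (Y.card : ℝ≥0∞) * ENNReal.ofReal (bb * (4*δ*ρ) ^ s) := by
      calc ∑ y ∈ Y, μ (closedBall y (4*δ*ρ))
          ≤ ∑ _y ∈ Y, ENNReal.ofReal (bb * (4*δ*ρ) ^ s) :=
            Finset.sum_le_sum fun y _ =>
              (hreg y trivial (4*δ*ρ) (by positivity) (by nlinarith)).2
        _ = (Y.card : ℝ≥0∞) * ENNReal.ofReal (bb * (4*δ*ρ) ^ s) := by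
            rw [Finset.sum_const, nsmul_eq_mul]
    have h4 : ENNReal.ofReal (aa * (ρ/4) ^ s) ≤
        (Y.card : ℝ≥0∞) * ENNReal.ofReal (bb * (4*δ*ρ) ^ s) := (h1.trans h2).trans h3
    rw [show ((Y.card : ℕ) : ℝ≥0∞) = ENNReal.ofReal ((Y.card : ℕ) : ℝ) by simp,
      ← ENNReal.ofReal_mul (by positivity)] at h4
    exact (ENNReal.ofReal_le_ofReal_iff (by positivity)).mp h4
  have hNcard : N ≤ Y.card := by
    have hkey : (16 * δ) ^ s * (ρ/4) ^ s = (4*δ*ρ) ^ s := by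
      rw [← Real.mul_rpow (by positivity) (by positivity)]
      ring_nf
    have hb4 : (0:ℝ) < bb * (4*δ*ρ) ^ s := by positivity
    have : (N : ℝ) * (bb * (4*δ*ρ) ^ s) ≤ (Y.card : ℝ) * (bb * (4*δ*ρ) ^ s) := by
      calc (N : ℝ) * (bb * (4*δ*ρ) ^ s) = (N : ℝ) * (bb * (16*δ) ^ s) * (ρ/4) ^ s := by
            rw [← hkey]; ring
        _ ≤ aa * (ρ/4) ^ s := by
            have h4s : (0:ℝ) ≤ (ρ/4) ^ s := by positivity
            nlinarith
        _ ≤ (Y.card : ℝ) * (bb * (4*δ*ρ) ^ s) := hlow2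
    exact_mod_cast le_of_mul_le_mul_right this hb4
  obtain ⟨Z, hZY, hZcard⟩ := Finset.exists_subset_card_eq hNcard
  set e := Z.equivFinOfCardEq hZcard with he
  refine ⟨fun i => (e.symm i : X), fun i => hYsub (hZY (e.symm i).2), ?_⟩
  intro i j hij
  have hne : ((e.symm i : X)) ≠ ((e.symm j : X)) := by
    intro hcontra
    exact hij (by
      have := Subtype.ext (p := fun z => z ∈ Z) hcontra
      have := e.symm.injective this
      simpa using this)
  exact hYsep _ (hZY (e.symm i).2) _ (hZY (e.symm j).2) hne


section Main
variable {X : Type*} [MetricSpace X] [CompleteSpace X] [MeasurableSpace X] [BorelSpace X]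

set_option maxHeartbeats 2000000 in
lemma main (μ : Measure X) (s t aa bb rμ : ℝ) (ht : 0 < t) (hts : t < s) (ha : 0 < aa)
    (hab : aa ≤ bb) (hrμ : 0 < rμ) (hreg : IsRegularOn μ s Set.univ aa bb rμ)
    (N : ℕ) [NeZero N] (hN2 : 2 ≤ N) (δ : ℝ) (hδdef : δ = (N : ℝ) ^ (-1/t)) (hδ : δ ≤ 1/8)
    (hNpack : (N : ℝ) * (bb * (16 * δ) ^ s) ≤ aa)
    (z : X) (R : ℝ) (hR : 0 < R) (hRμ : R < rμ) :
    ∃ ν : Measure X,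
      sptMeas ν ⊆ closedBall z (2*R) ∧
      ν (closedBall z (2*R)) = ENNReal.ofReal (R ^ t) ∧
      ∀ x ∈ sptMeas ν, ∀ r : ℝ, 0 < r → r < R →
        ENNReal.ofReal ((δ/2) ^ t * r ^ t) ≤ ν (closedBall x r) ∧
          ν (closedBall x r) ≤ ENNReal.ofReal ((bb/aa * 3 ^ s * δ ^ (t-s) + 3 ^ t) * r ^ t) := by
  classical
  have hs : 0 < s := ht.trans hts
  have hb : 0 < bb := lt_of_lt_of_le ha hab
  have hN0 : (0:ℝ) < N := by positivity
  have hδ0 : 0 < δ := by rw [hδdef]; positivity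
  have hδ1 : δ < 1 := lt_of_le_of_lt hδ (by norm_num)
  have hδt : δ ^ t = (N : ℝ)⁻¹ := by
    rw [hδdef, ← Real.rpow_mul hN0.le]
    rw [show -1/t * t = -1 by field_simp, Real.rpow_neg_one]
  -- the packing choice function
  choose F hF1 hF2 using packing μ s aa bb rμ ha hab hs hrμ hreg N δ hδ0 hδ hNpack
  have hρ0 : ∀ k : ℕ, 0 < R * δ ^ k := fun k => by positivity
  have hρμ : ∀ k : ℕ, R * δ ^ k < rμ := fun k =>
    lt_of_le_of_lt (by nlinarith [pow_le_one₀ hδ0.le hδ1.le (n := k), hR.le]) hRμ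
  -- the coding tree of centres
  set ι : ZMod N → Fin N := fun i => ⟨ZMod.val i, ZMod.val_lt i⟩ with hι
  have hιinj : Function.Injective ι := by
    intro i j hij
    exact ZMod.val_injective N (congrArg Fin.val hij)
  set cseq : G N → ℕ → X := fun ω => Nat.rec z
    (fun k c => F c (R * δ ^ k) (hρ0 k) (hρμ k) (ι (ω k))) with hcseq
  have hstep : ∀ ω : G N, ∀ k, cseq ω (k+1) = F (cseq ω k) (R * δ ^ k) (hρ0 k) (hρμ k) (ι (ω k)) :=
    fun ω k => rfl
  have hmem : ∀ ω : G N, ∀ k, dist (cseq ω (k+1)) (cseq ω k) ≤ R * δ ^ k / 4 := by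
    intro ω k
    rw [hstep]
    exact hF1 (cseq ω k) (R * δ ^ k) (hρ0 k) (hρμ k) (ι (ω k))
  have hpre : ∀ ω ω' : G N, ∀ k, (∀ j < k, ω j = ω' j) → cseq ω k = cseq ω' k := by
    intro ω ω' k
    induction k with
    | zero => intro _; rfl
    | succ k ih =>
      intro h
      rw [hstep, hstep, ih (fun j hj => h j (Nat.lt_succ_of_lt hj)), h k (Nat.lt_succ_self k)]
  have hgeo : ∀ ω : G N, ∀ k m, dist (cseq ω (k+m)) (cseq ω k) ≤ R * δ ^ k / 2 * (1 - δ ^ m) := by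
    intro ω k m
    induction m with
    | zero => simp
    | succ m ih =>
      calc dist (cseq ω (k+(m+1))) (cseq ω k)
          ≤ dist (cseq ω (k+m+1)) (cseq ω (k+m)) + dist (cseq ω (k+m)) (cseq ω k) :=
            dist_triangle _ _ _
        _ ≤ R * δ ^ (k+m) / 4 + R * δ ^ k / 2 * (1 - δ ^ m) := add_le_add (hmem ω (k+m)) ih
        _ ≤ R * δ ^ k / 2 * (1 - δ ^ (m+1)) := by
            rw [pow_add, pow_succ]
            have h1 : (0:ℝ) < δ ^ m := by positivity
            have h2 : (0:ℝ) < δ ^ k := by positivity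
            nlinarith [mul_nonneg (mul_nonneg hR.le h2.le) h1.le, hδ, hR]
  have htail : ∀ ω : G N, ∀ k m, k ≤ m → dist (cseq ω m) (cseq ω k) ≤ R * δ ^ k / 2 := by
    intro ω k m hkm
    obtain ⟨m', rfl⟩ := Nat.exists_eq_add_of_le hkm
    refine (hgeo ω k m').trans ?_
    have h1 : (0:ℝ) < δ ^ m' := by positivity
    have h2 : (0:ℝ) < δ ^ k := by positivity
    nlinarith [mul_nonneg (mul_nonneg hR.le h2.le) h1.le]
  -- the limit map
  have hcauchy : ∀ ω : G N, CauchySeq (cseq ω) := by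
    intro ω
    apply cauchySeq_of_le_tendsto_0 (fun k => R * δ ^ k)
    · intro n m K hKn hKm
      calc dist (cseq ω n) (cseq ω m)
          ≤ dist (cseq ω n) (cseq ω K) + dist (cseq ω m) (cseq ω K) := dist_triangle_right _ _ _
        _ ≤ R * δ ^ K / 2 + R * δ ^ K / 2 := add_le_add (htail ω K n hKn) (htail ω K m hKm)
        _ = R * δ ^ K := by ring
    · simpa using (tendsto_pow_atTop_nhds_zero_of_lt_one hδ0.le hδ1).const_mul R
  have hlim := fun ω : G N => cauchySeq_tendsto_of_complete (hcauchy ω)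
  set π : G N → X := fun ω => (hlim ω).choose with hπdef
  have hπ : ∀ ω : G N, Tendsto (cseq ω) atTop (𝓝 (π ω)) := fun ω => (hlim ω).choose_spec
  have hπk : ∀ ω : G N, ∀ k, dist (π ω) (cseq ω k) ≤ R * δ ^ k / 2 := by
    intro ω k
    refine le_of_tendsto (Tendsto.dist (hπ ω) tendsto_const_nhds) ?_
    filter_upwards [eventually_ge_atTop k] with m hm using htail ω k m hm
  have hπz : ∀ ω : G N, dist (π ω) z ≤ R / 2 := by
    intro ω
    have := hπk ω 0
    simpa [show cseq ω 0 = z from rfl] using this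
  -- separation of branches
  have hsepk : ∀ ω ω' : G N, ∀ k j, j < k → (∀ i < j, ω i = ω' i) → ω j ≠ ω' j →
      3 * (R * δ ^ k) ≤ dist (cseq ω k) (cseq ω' k) := by
    intro ω ω' k j hjk hagree hne
    have hbase : 4 * (R * δ ^ (j+1)) < dist (cseq ω (j+1)) (cseq ω' (j+1)) := by
      rw [hstep, hstep, hpre ω ω' j (fun i hi => hagree i hi)]
      have h := hF2 (cseq ω' j) (R * δ ^ j) (hρ0 j) (hρμ j) (ι (ω j)) (ι (ω' j))
        (fun h => hne (hιinj h))
      calc 4 * (R * δ ^ (j+1)) = 4 * δ * (R * δ ^ j) := by ring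
        _ < _ := h
    have h1 := htail ω (j+1) k hjk
    have h2 := htail ω' (j+1) k hjk
    have h3 : dist (cseq ω (j+1)) (cseq ω' (j+1)) ≤
        dist (cseq ω (j+1)) (cseq ω k) + dist (cseq ω k) (cseq ω' k) +
          dist (cseq ω' k) (cseq ω' (j+1)) := dist_triangle4 _ _ _ _
    rw [dist_comm (cseq ω (j+1)) (cseq ω k), dist_comm (cseq ω' k) (cseq ω' (j+1))] at h3
    rw [dist_comm (cseq ω' k) (cseq ω' (j+1))] at h2
    have h4 : δ ^ k ≤ δ ^ (j+1) := pow_le_pow_of_le_one hδ0.le hδ1.le hjk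
    nlinarith
  -- centres of words
  set extd : ∀ k : ℕ, (Fin k → ZMod N) → G N :=
    fun k u j => if h : j < k then u ⟨j, h⟩ else 0 with hext
  set ctr : ∀ k : ℕ, (Fin k → ZMod N) → X := fun k u => cseq (extd k u) k with hctr
  have hctrcyl : ∀ k (u : Fin k → ZMod N), ∀ ω ∈ Cyl N k u, cseq ω k = ctr k u := by
    intro k u ω hω
    refine hpre _ _ k (fun j hj => ?_)
    have h1 := hω ⟨j, hj⟩
    simp only [hext, hj, dif_pos]
    exact h1
  have hctrsep : ∀ k (u u' : Fin k → ZMod N), u ≠ u' →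
      3 * (R * δ ^ k) ≤ dist (ctr k u) (ctr k u') := by
    intro k u u' hne
    have hex : ∃ n, extd k u n ≠ extd k u' n := by
      by_contra hcon
      push_neg at hcon
      refine hne (funext fun j => ?_)
      have h1 := hcon (j : ℕ)
      simpa [hext, j.isLt] using h1
    set j₀ := Nat.find hex with hj₀def
    have hj₀ : extd k u j₀ ≠ extd k u' j₀ := Nat.find_spec hex
    have hmin : ∀ i < j₀, extd k u i = extd k u' i :=
      fun i hi => not_not.mp (Nat.find_min hex hi)
    have hj₀k : j₀ < k := by
      by_contra hcon
      push_neg at hcon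
      apply hj₀
      simp [hext, Nat.not_lt.mpr hcon]
    exact hsepk (extd k u) (extd k u') k j₀ hj₀k hmin hj₀
  -- measurability of the limit map
  have hcontk : ∀ k, Continuous (fun ω : G N => cseq ω k) := by
    intro k
    rw [continuous_iff_continuousAt]
    intro ω
    have hUeq : {ω' : G N | ∀ j < k, ω' j = ω j} =
        ⋂ j ∈ Finset.range k, (fun ω' : G N => ω' j) ⁻¹' {ω j} := by
      ext ω'; simp
    have hU : IsOpen {ω' : G N | ∀ j < k, ω' j = ω j} := by
      rw [hUeq]
      exact isOpen_biInter_finset fun j _ =>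
        (continuous_apply j).isOpen_preimage _ (isOpen_discrete _)
    have hmemU : ω ∈ {ω' : G N | ∀ j < k, ω' j = ω j} := fun j _ => rfl
    exact Filter.EventuallyEq.continuousAt
      (Filter.eventuallyEq_of_mem (hU.mem_nhds hmemU) (fun ω' hω' => hpre ω' ω k hω'))
  have hπmeas : Measurable π := by
    apply measurable_of_tendsto_metrizable (fun k => (hcontk k).measurable)
    rw [tendsto_pi_nhds]
    exact fun ω => hπ ω
  -- the measure
  set ν : Measure X := ENNReal.ofReal (R ^ t) • Measure.map π (P N) with hν
  have hν_apply : ∀ A : Set X, MeasurableSet A →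
      ν A = ENNReal.ofReal (R ^ t) * P N (π ⁻¹' A) := by
    intro A hA
    rw [hν, Measure.smul_apply, Measure.map_apply hπmeas hA, smul_eq_mul]
  have hνuniv : ν Set.univ = ENNReal.ofReal (R ^ t) := by
    rw [hν_apply _ MeasurableSet.univ, Set.preimage_univ, P_univ, mul_one]
  have hPδ : ∀ k (u : Fin k → ZMod N), P N (Cyl N k u) = ENNReal.ofReal ((δ ^ k) ^ t) := by
    intro k u
    rw [P_cyl]
    have h1 : ((δ:ℝ) ^ k) ^ t = ((N:ℝ)⁻¹) ^ k := by
      rw [← Real.rpow_natCast δ k, ← Real.rpow_mul hδ0.le, mul_comm,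
        Real.rpow_mul hδ0.le, hδt, Real.rpow_natCast]
    rw [h1, ENNReal.ofReal_pow (by positivity), ENNReal.ofReal_inv_of_pos hN0,
      ENNReal.ofReal_natCast, ← ENNReal.inv_pow]
  refine ⟨ν, ?_, ?_, ?_⟩
  · -- support is inside the ball
    intro x hx
    by_contra hcon
    rw [mem_closedBall, not_le] at hcon
    set r := dist x z - R with hrdef
    have hr0 : 0 < r := by rw [hrdef]; nlinarith
    have hdisj : π ⁻¹' (ball x r) = ∅ := by
      ext ω
      simp only [Set.mem_preimage, mem_ball, Set.mem_empty_iff_false, iff_false, not_lt]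
      have h1 := hπz ω
      have h2 : dist x z ≤ dist x (π ω) + dist (π ω) z := dist_triangle _ _ _
      rw [dist_comm x (π ω)] at h2
      rw [hrdef]
      nlinarith
    have hxr := hx r hr0
    rw [hν_apply _ measurableSet_ball, hdisj] at hxr
    simp at hxr
  · -- total mass
    have hsub : π ⁻¹' (closedBall z (2*R)) = Set.univ := by
      ext ω
      simp only [Set.mem_preimage, mem_closedBall, Set.mem_univ, iff_true]
      have := hπz ω
      nlinarith
    rw [hν_apply _ measurableSet_closedBall, hsub, P_univ, mul_one]
  · -- the regularity estimates
    intro x hx r hr hrR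
    constructor
    · -- LOWER BOUND
      have hpos := hx (r/4) (by positivity)
      have hne : (π ⁻¹' ball x (r/4)).Nonempty := by
        by_contra hcon
        rw [Set.not_nonempty_iff_eq_empty] at hcon
        rw [hν_apply _ measurableSet_ball, hcon] at hpos
        simp at hpos
      obtain ⟨ω, hω⟩ := hne
      have hex : ∃ k : ℕ, R * δ ^ k ≤ r / 2 := by
        obtain ⟨n, hn⟩ := exists_pow_lt_of_lt_one (x := r/(2*R)) (by positivity) hδ1
        refine ⟨n, ?_⟩
        rw [lt_div_iff₀ (by positivity)] at hn
        nlinarith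
      set k := Nat.find hex with hkdef
      have hk : R * δ ^ k ≤ r / 2 := Nat.find_spec hex
      have hklow : δ * r / 2 ≤ R * δ ^ k := by
        rcases Nat.eq_zero_or_pos k with hk0 | hkpos
        · rw [hk0, pow_zero, mul_one]
          nlinarith
        · have hmin := Nat.find_min hex (show k - 1 < k from Nat.sub_lt hkpos one_pos)
          rw [not_le] at hmin
          have hkk : k = (k-1) + 1 := (Nat.succ_pred_eq_of_pos hkpos).symm
          rw [hkk, pow_succ, ← mul_assoc]
          nlinarith [hmin]
      set u : Fin k → ZMod N := fun j => ω (j : ℕ) with hu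
      have hωcyl : ω ∈ Cyl N k u := fun j => rfl
      have hsubcyl : Cyl N k u ⊆ π ⁻¹' (closedBall x r) := by
        intro ω' hω'
        have h1 : cseq ω' k = cseq ω k :=
          (hctrcyl k u ω' hω').trans (hctrcyl k u ω hωcyl).symm
        have h2 : dist (π ω') (π ω) ≤ R * δ ^ k := by
          calc dist (π ω') (π ω)
              ≤ dist (π ω') (cseq ω' k) + dist (π ω) (cseq ω k) := by
                rw [h1]; exact dist_triangle_right _ _ _
            _ ≤ R * δ ^ k / 2 + R * δ ^ k / 2 := add_le_add (hπk ω' k) (hπk ω k)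
            _ = R * δ ^ k := by ring
        have h3 : dist (π ω) x < r / 4 := hω
        simp only [Set.mem_preimage, mem_closedBall]
        calc dist (π ω') x ≤ dist (π ω') (π ω) + dist (π ω) x := dist_triangle _ _ _
          _ ≤ R * δ ^ k + r / 4 := add_le_add h2 h3.le
          _ ≤ r := by nlinarith
      have hlb : ENNReal.ofReal (R ^ t) * P N (Cyl N k u) ≤ ν (closedBall x r) := by
        rw [hν_apply _ measurableSet_closedBall]
        exact mul_le_mul_right (measure_mono hsubcyl) _
      rw [hPδ k u, ← ENNReal.ofReal_mul (by positivity)] at hlb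
      refine le_trans (ENNReal.ofReal_le_ofReal ?_) hlb
      have h5 : (δ/2) ^ t * r ^ t = (δ * r / 2) ^ t := by
        rw [← Real.mul_rpow (by positivity) hr.le]; ring_nf
      have h6 : R ^ t * (δ ^ k) ^ t = (R * δ ^ k) ^ t := by
        rw [← Real.mul_rpow hR.le (by positivity)]
      rw [h5, h6]
      exact Real.rpow_le_rpow (by positivity) hklow ht.le
    · -- UPPER BOUND
      rcases le_or_gt rμ (3*r) with hcase | hcase
      · -- trivial case : r is comparable to R
        have h1 : ν (closedBall x r) ≤ ENNReal.ofReal (R ^ t) := by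
          rw [← hνuniv]
          exact measure_mono (Set.subset_univ _)
        refine h1.trans (ENNReal.ofReal_le_ofReal ?_)
        have hR3 : R ≤ 3*r := le_of_lt (lt_of_lt_of_le hRμ hcase)
        have h2 : R ^ t ≤ (3*r) ^ t := Real.rpow_le_rpow hR.le hR3 ht.le
        have h3 : ((3:ℝ)*r) ^ t = 3 ^ t * r ^ t := Real.mul_rpow (by norm_num) hr.le
        have h4 : (0:ℝ) ≤ bb/aa * 3 ^ s * δ ^ (t-s) * r ^ t := by positivity
        nlinarith
      · -- main case
        have hex : ∃ k : ℕ, R * δ ^ k ≤ r := by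
          obtain ⟨n, hn⟩ := exists_pow_lt_of_lt_one (x := r/R) (by positivity) hδ1
          refine ⟨n, ?_⟩
          rw [lt_div_iff₀ (by positivity)] at hn
          nlinarith
        set k := Nat.find hex with hkdef
        have hk : R * δ ^ k ≤ r := Nat.find_spec hex
        have hk1 : 0 < k := by
          rcases Nat.eq_zero_or_pos k with hk0 | hkpos
          · exfalso; rw [hk0, pow_zero, mul_one] at hk; linarith
          · exact hkpos
        have hklow : δ * r < R * δ ^ k := by
          have hmin := Nat.find_min hex (show k - 1 < k from Nat.sub_lt hk1 one_pos)
          rw [not_le] at hmin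
          have hkk : k = (k-1) + 1 := (Nat.succ_pred_eq_of_pos hk1).symm
          rw [hkk, pow_succ, ← mul_assoc]
          nlinarith [hmin]
        set W : Finset (Fin k → ZMod N) :=
          Finset.univ.filter (fun u => dist (ctr k u) x ≤ 3/2 * r) with hW
        have hcover : π ⁻¹' (closedBall x r) ⊆ ⋃ u ∈ W, Cyl N k u := by
          intro ω hω
          set u : Fin k → ZMod N := fun j => ω (j : ℕ) with hu
          have hcyl : ω ∈ Cyl N k u := fun j => rfl
          have hWu : u ∈ W := by
            rw [hW, Finset.mem_filter]
            refine ⟨Finset.mem_univ _, ?_⟩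
            have h1 : ctr k u = cseq ω k := (hctrcyl k u ω hcyl).symm
            have h2 : dist (π ω) x ≤ r := hω
            have h3 := hπk ω k
            rw [h1]
            calc dist (cseq ω k) x ≤ dist (cseq ω k) (π ω) + dist (π ω) x := dist_triangle _ _ _
              _ ≤ R * δ ^ k / 2 + r := by
                  rw [dist_comm]
                  exact add_le_add h3 h2
              _ ≤ 3/2 * r := by nlinarith
          exact Set.mem_biUnion hWu hcyl
        have hmeasW : P N (π ⁻¹' closedBall x r) ≤
            (W.card : ℝ≥0∞) * ENNReal.ofReal ((δ ^ k) ^ t) := by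
          calc P N (π ⁻¹' closedBall x r) ≤ P N (⋃ u ∈ W, Cyl N k u) := measure_mono hcover
            _ ≤ ∑ u ∈ W, P N (Cyl N k u) := measure_biUnion_finset_le _ _
            _ = (W.card : ℝ≥0∞) * ENNReal.ofReal ((δ ^ k) ^ t) := by
                rw [Finset.sum_congr rfl (fun u _ => hPδ k u), Finset.sum_const, nsmul_eq_mul]
        have hinj : Set.InjOn (ctr k) ↑W := by
          intro u hu u' hu' heq
          by_contra hne
          have hsep := hctrsep k u u' hne
          rw [heq, dist_self] at hsep
          nlinarith [hρ0 k]
        set Y := W.image (ctr k) with hY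
        have hYcard : Y.card = W.card := Finset.card_image_of_injOn hinj
        have hcard : (W.card : ℝ) * (aa * (R * δ ^ k) ^ s) ≤ bb * (3*r) ^ s := by
          rw [← hYcard]
          refine card_sep_le μ Y (R * δ ^ k) _ _ (by positivity) (by positivity)
            (closedBall x (3*r)) ?_ ?_ ?_ ?_
          · intro y hy y' hy' hne
            obtain ⟨v, hv, rfl⟩ := Finset.mem_image.mp hy
            obtain ⟨v', hv', rfl⟩ := Finset.mem_image.mp hy'
            have hvne : v ≠ v' := fun h => hne (by rw [h])
            have := hctrsep k v v' hvne
            nlinarith [hρ0 k]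
          · intro y _
            exact (hreg y trivial (R * δ ^ k) (hρ0 k) (hρμ k)).1
          · intro y hy p hp
            obtain ⟨v, hv, rfl⟩ := Finset.mem_image.mp hy
            have h1 : dist (ctr k v) x ≤ 3/2 * r := (Finset.mem_filter.mp hv).2
            have h2 : dist p (ctr k v) ≤ R * δ ^ k := hp
            rw [mem_closedBall]
            calc dist p x ≤ dist p (ctr k v) + dist (ctr k v) x := dist_triangle _ _ _
              _ ≤ R * δ ^ k + 3/2 * r := add_le_add h2 h1
              _ ≤ 3 * r := by nlinarith
          · exact (hreg x trivial (3*r) (by positivity) hcase).2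
        have hcardR : (W.card : ℝ) ≤ bb * (3*r) ^ s / (aa * (R * δ ^ k) ^ s) := by
          rw [le_div_iff₀ (by positivity)]
          linarith
        have hreal : (W.card : ℝ) * (R ^ t * (δ ^ k) ^ t) ≤
            (bb/aa * 3 ^ s * δ ^ (t-s) + 3 ^ t) * r ^ t := by
          set q := R * δ ^ k with hq
          have hq0 : (0:ℝ) < q := hρ0 k
          have hA : R ^ t * (δ ^ k) ^ t = q ^ t := by
            rw [hq, ← Real.mul_rpow hR.le (by positivity)]
          rw [hA]
          have hqt : (0:ℝ) ≤ q ^ t := by positivity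
          have step1 : (W.card : ℝ) * q ^ t ≤ bb * (3*r) ^ s / (aa * q ^ s) * q ^ t :=
            mul_le_mul_of_nonneg_right hcardR hqt
          have hqts : q ^ (t-s) * q ^ s = q ^ t := by
            rw [← Real.rpow_add hq0]
            norm_num
          have step2 : bb * (3*r) ^ s / (aa * q ^ s) * q ^ t
              = bb/aa * (3*r) ^ s * q ^ (t-s) := by
            rw [← hqts]
            field_simp
          have step3 : q ^ (t-s) ≤ (δ * r) ^ (t-s) :=
            Real.rpow_le_rpow_of_nonpos (by positivity) hklow.le (by linarith)
          have step4 : bb/aa * (3*r) ^ s * q ^ (t-s) ≤ bb/aa * (3*r) ^ s * (δ*r) ^ (t-s) := by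
            have : (0:ℝ) ≤ bb/aa * (3*r) ^ s := by positivity
            nlinarith
          have step5 : bb/aa * (3*r) ^ s * (δ*r) ^ (t-s) = bb/aa * 3 ^ s * δ ^ (t-s) * r ^ t := by
            rw [Real.mul_rpow (by norm_num) hr.le, Real.mul_rpow hδ0.le hr.le,
              show bb/aa * (3 ^ s * r ^ s) * (δ ^ (t-s) * r ^ (t-s))
                = bb/aa * 3 ^ s * δ ^ (t-s) * (r ^ s * r ^ (t-s)) by ring,
              ← Real.rpow_add hr]
            ring_nf
          have hlast : (0:ℝ) ≤ 3 ^ t * r ^ t := by positivity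
          nlinarith [step1, step2, step3, step4, step5]
        rw [hν_apply _ measurableSet_closedBall]
        calc ENNReal.ofReal (R ^ t) * P N (π ⁻¹' closedBall x r)
            ≤ ENNReal.ofReal (R ^ t) * ((W.card : ℝ≥0∞) * ENNReal.ofReal ((δ ^ k) ^ t)) :=
              mul_le_mul_right hmeasW _
          _ = ENNReal.ofReal ((W.card : ℝ) * (R ^ t * (δ ^ k) ^ t)) := by
              rw [← ENNReal.ofReal_natCast, ← ENNReal.ofReal_mul (Nat.cast_nonneg W.card),
                ← ENNReal.ofReal_mul (Real.rpow_nonneg hR.le t)]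
              congr 1
              ring
          _ ≤ ENNReal.ofReal ((bb/aa * 3 ^ s * δ ^ (t-s) + 3 ^ t) * r ^ t) :=
              ENNReal.ofReal_le_ofReal hreal

end Main

lemma choose_N (s t a b : ℝ) (ht : 0 < t) (hts : t < s) (ha : 0 < a) (hab : a ≤ b) :
    ∃ (N : ℕ) (_ : NeZero N) (δ : ℝ), 2 ≤ N ∧ δ = (N : ℝ) ^ (-1/t) ∧ δ ≤ 1/8 ∧
      (N : ℝ) * (b * (16 * δ) ^ s) ≤ a ∧ 0 < δ := by
  have hb : 0 < b := lt_of_lt_of_le ha hab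
  have hst : 0 < s - t := by linarith
  set C0 : ℝ := 16 ^ s * b / a with hC0
  have hC0pos : 0 < C0 := by rw [hC0]; positivity
  obtain ⟨N, hNgt⟩ := exists_nat_gt (max (max ((8:ℝ) ^ t) (C0 ^ (t/(s-t)))) 2)
  have hN2 : 2 ≤ N := by
    have h2 : (2:ℝ) ≤ N := le_of_lt (lt_of_le_of_lt (le_max_right _ _) hNgt)
    exact_mod_cast h2
  haveI : NeZero N := ⟨by omega⟩
  have hN0 : (0:ℝ) < N := by
    have : (0:ℕ) < N := by omega
    exact_mod_cast this
  set δ : ℝ := (N:ℝ) ^ (-1/t) with hδdef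
  have hδ0 : 0 < δ := Real.rpow_pos_of_pos hN0 _
  have h8 : (8:ℝ) ^ t ≤ N :=
    le_of_lt (lt_of_le_of_lt ((le_max_left _ _).trans (le_max_left _ _)) hNgt)
  have hC : C0 ^ (t/(s-t)) ≤ N :=
    le_of_lt (lt_of_le_of_lt ((le_max_right _ _).trans (le_max_left _ _)) hNgt)
  have hδ8 : δ ≤ 1/8 := by
    have h1 : (8:ℝ) = ((8:ℝ) ^ t) ^ (1/t) := by
      rw [← Real.rpow_mul (by norm_num), mul_one_div, div_self ht.ne', Real.rpow_one]
    have h2 : ((8:ℝ) ^ t) ^ (1/t) ≤ (N:ℝ) ^ (1/t) :=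
      Real.rpow_le_rpow (by positivity) h8 (by positivity)
    have h3 : (8:ℝ) ≤ (N:ℝ) ^ (1/t) := le_of_eq_of_le h1 h2
    have h4 : δ = ((N:ℝ) ^ ((1:ℝ)/t))⁻¹ := by
      rw [hδdef, ← Real.rpow_neg hN0.le, neg_div]
    rw [h4, show (1:ℝ)/8 = 8⁻¹ by norm_num]
    exact inv_anti₀ (by norm_num) h3
  have hNs : C0 ≤ (N:ℝ) ^ ((s-t)/t) := by
    calc C0 = (C0 ^ (t/(s-t))) ^ ((s-t)/t) := by
          rw [← Real.rpow_mul hC0pos.le, show t/(s-t) * ((s-t)/t) = 1 by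
            field_simp, Real.rpow_one]
      _ ≤ (N:ℝ) ^ ((s-t)/t) := Real.rpow_le_rpow (by positivity) hC (by positivity)
  have hNpack : (N : ℝ) * (b * (16 * δ) ^ s) ≤ a := by
    have e1 : ((16:ℝ) * δ) ^ s = 16 ^ s * δ ^ s := Real.mul_rpow (by norm_num) hδ0.le
    have e2 : δ ^ s = (N:ℝ) ^ (-(s/t)) := by
      rw [hδdef, ← Real.rpow_mul hN0.le, show -1/t*s = -(s/t) by ring]
    have e3 : (N:ℝ) * (N:ℝ) ^ (-(s/t)) = ((N:ℝ) ^ ((s-t)/t))⁻¹ := by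
      have h5 : (N:ℝ) * (N:ℝ) ^ (-(s/t)) = (N:ℝ) ^ (1 + -(s/t)) := by
        rw [Real.rpow_add hN0, Real.rpow_one]
      rw [h5, show 1 + -(s/t) = -((s-t)/t) by field_simp; ring, Real.rpow_neg hN0.le]
    calc (N:ℝ) * (b * (16*δ) ^ s)
        = b * 16 ^ s * ((N:ℝ) * δ ^ s) := by rw [e1]; ring
      _ = b * 16 ^ s / (N:ℝ) ^ ((s-t)/t) := by
          rw [e2, e3]
          exact (div_eq_mul_inv _ _).symm
      _ ≤ b * 16 ^ s / C0 := by
          exact div_le_div_of_nonneg_left (by positivity) hC0pos hNs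
      _ = a := by
          rw [hC0]
          field_simp
  exact ⟨N, inferInstance, δ, hN2, hδdef, hδ8, hNpack, hδ0⟩

end Stmt15Aux
end Stmt15AuxSection

/-- If `X` is complete, separable and `μ` is `s`-regular on `X`, and
`0 < t < s`, then for every `z ∈ X` and `0 < R < r_μ` there is a measure `ν` supported in
`B(z,2R)` with `ν(B(z,2R)) = R^t` and `a_ν r^t ≤ ν(B(x,r)) ≤ b_ν r^t` for all
`x ∈ spt ν` and `0 < r < R`, where `a_ν, b_ν > 0` depend only on `s, t, a_μ, b_μ`. -/
theorem stmt15 (s t a b : ℝ) (ht : 0 < t) (hts : t < s) (ha : 0 < a) (hab : a ≤ b) :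
    ∃ aν bν : ℝ, 0 < aν ∧ 0 < bν ∧
      ∀ (X : Type*) [MetricSpace X] [TopologicalSpace.SeparableSpace X] [CompleteSpace X]
        [MeasurableSpace X] [BorelSpace X] (μ : Measure X) (rμ : ℝ), 0 < rμ →
        IsRegularOn μ s (Set.univ : Set X) a b rμ →
        ∀ (z : X) (R : ℝ), 0 < R → R < rμ →
          ∃ ν : Measure X,
            sptMeas ν ⊆ closedBall z (2 * R) ∧
            ν (closedBall z (2 * R)) = ENNReal.ofReal (R ^ t) ∧
            ∀ x ∈ sptMeas ν, ∀ r : ℝ, 0 < r → r < R →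
              ENNReal.ofReal (aν * r ^ t) ≤ ν (closedBall x r) ∧
                ν (closedBall x r) ≤ ENNReal.ofReal (bν * r ^ t) := by
  obtain ⟨N, hNZ, δ, hN2, hδdef, hδ8, hNpack, hδ0⟩ := Stmt15Aux.choose_N s t a b ht hts ha hab
  haveI := hNZ
  have hb : 0 < b := lt_of_lt_of_le ha hab
  have haν : 0 < (δ/2) ^ t := Real.rpow_pos_of_pos (by linarith) t
  have hbν : 0 < b/a * 3 ^ s * δ ^ (t-s) + 3 ^ t := by
    have h1 : (0:ℝ) < 3 ^ t := Real.rpow_pos_of_pos (by norm_num) t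
    have h3 : (0:ℝ) < 3 ^ s := Real.rpow_pos_of_pos (by norm_num) s
    have h4 : (0:ℝ) < δ ^ (t-s) := Real.rpow_pos_of_pos hδ0 (t-s)
    have h2 : (0:ℝ) ≤ b/a * 3 ^ s * δ ^ (t-s) :=
      mul_nonneg (mul_nonneg (div_nonneg hb.le ha.le) h3.le) h4.le
    linarith
  refine ⟨(δ/2) ^ t, b/a * 3 ^ s * δ ^ (t-s) + 3 ^ t, haν, hbν, ?_⟩
  intro X _ _ _ _ _ μ rμ hrμ hreg z R hR hRrμ
  exact Stmt15Aux.main μ s t a b rμ ht hts ha hab hrμ hreg N hN2 δ hδdef hδ8 hNpack z R hR hRrμ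
end

section
/- Let X be a nonempty complete separable metric space carrying a measure μ which is s-regular on X. Then for every 0 < t < s there exists a nonempty t-regular set F ⊆ X. -/
open Metric MeasureTheory Set Filter
open scoped ENNReal NNReal Topology

set_option maxHeartbeats 1000000

/-- the `j`-th base-`N` digit of `x`. -/
noncomputable def dgt (N : ℕ) (x : ℝ) (j : ℕ) : ℕ := ⌊x * (N:ℝ) ^ (j+1)⌋₊ % N

/-- the integer with base-`N` digits `w 0, ..., w (n-1)`. -/
def kval (N n : ℕ) (w : ℕ → ℕ) : ℕ := ∑ j ∈ Finset.range n, w j * N ^ (n - 1 - j)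

lemma kval_succ (N n : ℕ) (w : ℕ → ℕ) :
    kval N (n+1) w = N * kval N n w + w n := by
  unfold kval
  rw [Finset.sum_range_succ]
  have : ∀ j ∈ Finset.range n, w j * N ^ (n + 1 - 1 - j) = N * (w j * N ^ (n - 1 - j)) := by
    intro j hj
    rw [Finset.mem_range] at hj
    have : n + 1 - 1 - j = (n - 1 - j) + 1 := by omega
    rw [this, pow_succ]; ring
  rw [Finset.sum_congr rfl this, ← Finset.mul_sum]
  simp

lemma kval_lt (N n : ℕ) (w : ℕ → ℕ) (hN : 0 < N) (hw : ∀ j, w j < N) :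
    kval N n w < N ^ n := by
  induction n with
  | zero => simp [kval]
  | succ n ih =>
    rw [kval_succ, pow_succ, mul_comm (N ^ n) N]
    have h1 := hw n
    calc N * kval N n w + w n < N * (kval N n w + 1) := by rw [Nat.mul_succ]; omega
      _ ≤ N * N ^ n := Nat.mul_le_mul_left _ (by omega)

lemma dgt_iff (N : ℕ) (hN : 0 < N) (x : ℝ) (hx0 : 0 ≤ x) (hx1 : x < 1)
    (w : ℕ → ℕ) (hw : ∀ j, w j < N) (n : ℕ) :
    (∀ j < n, dgt N x j = w j) ↔ ⌊x * (N:ℝ) ^ n⌋₊ = kval N n w := by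
  induction n with
  | zero =>
    simp only [Nat.not_lt_zero, IsEmpty.forall_iff, forall_const, true_iff]
    simp [kval, Nat.floor_eq_zero, hx1]
  | succ n ih =>
    rw [Nat.forall_lt_succ_right, ih, kval_succ]
    have hNR : (0:ℝ) < (N:ℝ) := by exact_mod_cast hN
    have hdiv : ⌊x * (N:ℝ) ^ (n+1)⌋₊ / N = ⌊x * (N:ℝ) ^ n⌋₊ := by
      rw [← Nat.floor_div_natCast]
      congr 1
      field_simp [pow_succ]
      ring
    set m := ⌊x * (N:ℝ) ^ (n+1)⌋₊ with hm
    have hmod : m % N < N := Nat.mod_lt _ hN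
    have hdm : N * (m / N) + m % N = m := Nat.div_add_mod m N
    unfold dgt
    rw [← hm]
    constructor
    · rintro ⟨h1, h2⟩
      rw [← h2, ← h1, ← hdiv]
      omega
    · intro h
      have hq : m / N = ⌊x * (N:ℝ) ^ n⌋₊ := hdiv
      have hwn := hw n
      constructor
      · -- from m = N * k + w n deduce floor = k
        have : m / N = kval N n w := by
          rw [h]
          rw [Nat.mul_add_div hN]
          have : w n / N = 0 := Nat.div_eq_of_lt hwn
          omega
        rw [← hq, this]
      · have : m % N = w n := by
          rw [h]
          rw [Nat.mul_add_mod]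
          exact Nat.mod_eq_of_lt hwn
        exact this

lemma digit_set_eq (N : ℕ) (hN : 0 < N) (w : ℕ → ℕ) (hw : ∀ j, w j < N) (n : ℕ) :
    {x : ℝ | x ∈ Ico (0:ℝ) 1 ∧ ∀ j < n, dgt N x j = w j}
      = Ico ((kval N n w : ℝ) / (N:ℝ)^n) ((kval N n w + 1 : ℝ) / (N:ℝ)^n) := by
  have hNR : (0:ℝ) < (N:ℝ) ^ n := by positivity
  have hk : kval N n w < N ^ n := kval_lt N n w hN hw
  ext x
  simp only [mem_setOf_eq, mem_Ico]
  constructor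
  · rintro ⟨⟨hx0, hx1⟩, hd⟩
    have := (dgt_iff N hN x hx0 hx1 w hw n).mp hd
    have h1 : (kval N n w : ℝ) ≤ x * (N:ℝ)^n := by
      rw [← this]; exact Nat.floor_le (by positivity)
    have h2 : x * (N:ℝ)^n < kval N n w + 1 := by
      rw [← this]; exact Nat.lt_floor_add_one _
    constructor
    · rw [div_le_iff₀ hNR]; linarith
    · rw [lt_div_iff₀ hNR]; linarith
  · rintro ⟨h1, h2⟩
    have hx0 : 0 ≤ x := by
      have : (0:ℝ) ≤ (kval N n w : ℝ) / (N:ℝ)^n := by positivity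
      linarith
    have hx1 : x < 1 := by
      have hle : ((kval N n w : ℝ) + 1) / (N:ℝ)^n ≤ 1 := by
        rw [div_le_one hNR]
        have : (kval N n w : ℝ) + 1 ≤ (N:ℝ)^n := by
          have : ((kval N n w + 1 : ℕ) : ℝ) ≤ ((N^n : ℕ) : ℝ) := by exact_mod_cast hk
          push_cast at this ⊢; linarith
        linarith
      linarith
    refine ⟨⟨hx0, hx1⟩, ?_⟩
    rw [dgt_iff N hN x hx0 hx1 w hw n]
    rw [Nat.floor_eq_iff (by positivity)]
    rw [div_le_iff₀ hNR] at h1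
    rw [lt_div_iff₀ hNR] at h2
    constructor
    · linarith
    · push_cast; linarith

lemma volume_digit_set (N : ℕ) (hN : 0 < N) (w : ℕ → ℕ) (hw : ∀ j, w j < N) (n : ℕ) :
    volume {x : ℝ | x ∈ Ico (0:ℝ) 1 ∧ ∀ j < n, dgt N x j = w j}
      = ENNReal.ofReal (((N:ℝ)^n)⁻¹) := by
  rw [digit_set_eq N hN w hw n, Real.volume_Ico]
  congr 1
  have hNR : (0:ℝ) < (N:ℝ) ^ n := by positivity
  field_simp
  ring

lemma dgt_measurable (N j : ℕ) : Measurable fun x : ℝ => dgt N x j := by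
  unfold dgt
  have h : Measurable fun x : ℝ => x * ((N:ℝ) ^ (j+1)) := measurable_mul_const _
  exact (measurable_from_top (f := fun m : ℕ => m % N)).comp (Nat.measurable_floor.comp h)

lemma packing {X : Type*} [MetricSpace X] [MeasurableSpace X]
    (μ : Measure X) (s aa bb rm : ℝ)
    (hreg : ∀ x : X, ∀ r : ℝ, 0 < r → r < rm →
      ENNReal.ofReal (aa * r ^ s) ≤ μ (closedBall x r) ∧
        μ (closedBall x r) ≤ ENNReal.ofReal (bb * r ^ s))
    (N : ℕ) (x : X) (R r' : ℝ) (hR : 0 < R) (hRm : R < rm) (hr' : 0 < r') (hr'm : r' < rm)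
    (hb : 0 < bb)
    (hcount : (N:ℝ) * (bb * r' ^ s) ≤ aa * R ^ s) :
    ∃ f : Fin N → X, (∀ i, dist (f i) x ≤ R) ∧ ∀ i j, i ≠ j → r' < dist (f i) (f j) := by
  suffices h : ∀ k, k ≤ N → ∃ f : Fin k → X,
      (∀ i, dist (f i) x ≤ R) ∧ ∀ i j, i ≠ j → r' < dist (f i) (f j) from h N le_rfl
  intro k hk
  induction k with
  | zero => exact ⟨fun i => i.elim0, fun i => i.elim0, fun i => i.elim0⟩
  | succ k ih =>
    obtain ⟨f, hf1, hf2⟩ := ih (by omega)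
    have hnsub : ¬ (closedBall x R ⊆ ⋃ i : Fin k, closedBall (f i) r') := by
      intro hsub
      have hmU : μ (⋃ i : Fin k, closedBall (f i) r')
          ≤ (k : ℝ≥0∞) * ENNReal.ofReal (bb * r' ^ s) := by
        calc μ (⋃ i : Fin k, closedBall (f i) r')
            ≤ ∑ i : Fin k, μ (closedBall (f i) r') := measure_iUnion_fintype_le _ _
          _ ≤ ∑ _i : Fin k, ENNReal.ofReal (bb * r' ^ s) :=
              Finset.sum_le_sum fun i _ => (hreg _ _ hr' hr'm).2
          _ = (k : ℝ≥0∞) * ENNReal.ofReal (bb * r' ^ s) := by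
              simp [Finset.sum_const, nsmul_eq_mul]
      have h3 : ENNReal.ofReal (aa * R ^ s) ≤ (k : ℝ≥0∞) * ENNReal.ofReal (bb * r' ^ s) :=
        le_trans (hreg x R hR hRm).1 (le_trans (measure_mono hsub) hmU)
      have hpos : (0:ℝ) < bb * r' ^ s := by positivity
      have h4 : (k : ℝ≥0∞) * ENNReal.ofReal (bb * r' ^ s)
          = ENNReal.ofReal ((k:ℝ) * (bb * r' ^ s)) := by
        rw [← ENNReal.ofReal_natCast k, ← ENNReal.ofReal_mul (Nat.cast_nonneg k)]
      rw [h4] at h3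
      have h5 : aa * R ^ s ≤ (k:ℝ) * (bb * r' ^ s) :=
        (ENNReal.ofReal_le_ofReal_iff (by positivity)).mp h3
      have hkN : (k:ℝ) + 1 ≤ (N:ℝ) := by exact_mod_cast hk
      nlinarith
    obtain ⟨z, hz, hzU⟩ := not_subset.mp hnsub
    have hzf : ∀ i, r' < dist z (f i) := by
      intro i
      by_contra hcon
      exact hzU (mem_iUnion.mpr ⟨i, mem_closedBall.mpr (le_of_not_gt hcon)⟩)
    refine ⟨Fin.snoc f z, ?_, ?_⟩
    · intro i
      refine Fin.lastCases ?_ ?_ i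
      · simpa using hz
      · intro j; simpa using hf1 j
    · intro i j hij
      rcases Fin.eq_castSucc_or_eq_last i with ⟨i', rfl⟩ | rfl <;>
        rcases Fin.eq_castSucc_or_eq_last j with ⟨j', rfl⟩ | rfl
      · rw [Fin.snoc_castSucc, Fin.snoc_castSucc]
        exact hf2 i' j' fun h => hij (congrArg Fin.castSucc h)
      · rw [Fin.snoc_castSucc, Fin.snoc_last, dist_comm]
        exact hzf i'
      · rw [Fin.snoc_castSucc, Fin.snoc_last]
        exact hzf j'
      · exact absurd rfl hij

/-- A set `F` is `t`-regular if some measure `ν` is `t`-regular on `F`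
(with some constants) and `ν(X ∖ F) = 0`. -/
def IsRegularSet {X : Type*} [MetricSpace X] [MeasurableSpace X] (F : Set X) (t : ℝ) : Prop :=
  ∃ (ν : Measure X) (a b rν : ℝ), 0 < a ∧ a ≤ b ∧ 0 < rν ∧
    IsRegularOn ν t F a b rν ∧ ν Fᶜ = 0

/-- If `X` is a nonempty complete separable metric space carrying an
`s`-regular measure, then for every `0 < t < s` there is a nonempty `t`-regular set
`F ⊆ X`. -/
theorem stmt16 {X : Type*} [MetricSpace X] [Nonempty X] [CompleteSpace X]
    [TopologicalSpace.SeparableSpace X] [MeasurableSpace X] [BorelSpace X]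
    (μ : Measure X) (s a b rμ : ℝ) (hs : 0 < s) (ha : 0 < a) (hab : a ≤ b) (hrμ : 0 < rμ)
    (hreg : IsRegularOn μ s (Set.univ : Set X) a b rμ)
    (t : ℝ) (ht : 0 < t) (hts : t < s) :
    ∃ F : Set X, F.Nonempty ∧ IsRegularSet F t := by
  classical
  obtain ⟨x₀⟩ := ‹Nonempty X›
  have hb : 0 < b := lt_of_lt_of_le ha hab
  -- ### Choice of the branching number N and the ratio δ
  set β : ℝ := s / t - 1 with hβdef
  have hβ : 0 < β := by
    have : 1 < s / t := (one_lt_div ht).mpr hts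
    simp [hβdef]; linarith
  set K : ℝ := (b / a) * (12:ℝ) ^ s with hKdef
  have hK : 0 < K := by positivity
  set M : ℝ := max (max 2 ((12:ℝ) ^ t)) (K ^ (1/β)) with hMdef
  set N : ℕ := ⌈M⌉₊ with hNdef
  have hMN : M ≤ (N:ℝ) := Nat.le_ceil M
  have hN2 : (2:ℝ) ≤ (N:ℝ) :=
    le_trans (le_trans (le_max_left _ _) (le_max_left _ _)) hMN
  have hN0 : 0 < N := by exact_mod_cast lt_of_lt_of_le two_pos hN2
  have hNR : (0:ℝ) < (N:ℝ) := by positivity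
  set δ : ℝ := (N:ℝ) ^ (-(1/t)) with hδdef
  have hδpos : 0 < δ := Real.rpow_pos_of_pos hNR _
  have hδt : δ ^ t = (N:ℝ)⁻¹ := by
    rw [hδdef, ← Real.rpow_mul hNR.le]
    rw [show -(1/t)*t = -1 by field_simp]
    exact Real.rpow_neg_one _
  have hδ12 : δ ≤ 1/12 := by
    have h12 : (12:ℝ)^t ≤ (N:ℝ) :=
      le_trans (le_trans (le_max_right _ _) (le_max_left _ _)) hMN
    have h2 : (12:ℝ) ≤ (N:ℝ)^(1/t) := by
      calc (12:ℝ) = ((12:ℝ)^t)^(1/t) := by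
            rw [← Real.rpow_mul (by norm_num), mul_one_div, div_self ht.ne', Real.rpow_one]
        _ ≤ (N:ℝ)^(1/t) := Real.rpow_le_rpow (by positivity) h12 (by positivity)
    rw [hδdef, Real.rpow_neg hNR.le]
    have := inv_anti₀ (by norm_num : (0:ℝ) < 12) h2
    calc ((N:ℝ)^(1/t))⁻¹ ≤ (12:ℝ)⁻¹ := this
      _ = 1/12 := by norm_num
  have hδ1 : δ < 1 := by linarith
  have hNs : (N:ℝ) * (b * (12*δ) ^ s) ≤ a := by
    have hKN : K ≤ (N:ℝ) ^ β := by
      have h1 : K ^ (1/β) ≤ (N:ℝ) := le_trans (le_max_right _ _) hMN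
      calc K = (K ^ (1/β)) ^ β := by
            rw [← Real.rpow_mul hK.le, one_div_mul_cancel hβ.ne', Real.rpow_one]
        _ ≤ (N:ℝ) ^ β := Real.rpow_le_rpow (by positivity) h1 hβ.le
    have hδs : δ ^ s = ((N:ℝ) ^ β)⁻¹ * (N:ℝ)⁻¹ := by
      rw [hδdef, ← Real.rpow_mul hNR.le]
      rw [show -(1/t)*s = -β + (-1) by rw [hβdef]; field_simp; ring]
      rw [Real.rpow_add hNR, Real.rpow_neg hNR.le, Real.rpow_neg_one]
    have hNβpos : (0:ℝ) < (N:ℝ) ^ β := Real.rpow_pos_of_pos hNR _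
    calc (N:ℝ) * (b * (12*δ)^s) = (N:ℝ) * (b * ((12:ℝ)^s * δ^s)) := by
          rw [Real.mul_rpow (by norm_num) hδpos.le]
      _ = b * (12:ℝ)^s * ((N:ℝ)^β)⁻¹ * ((N:ℝ) * (N:ℝ)⁻¹) := by rw [hδs]; ring
      _ = b * (12:ℝ)^s * ((N:ℝ)^β)⁻¹ := by rw [mul_inv_cancel₀ hNR.ne']; ring
      _ ≤ b * (12:ℝ)^s * K⁻¹ := by
          apply mul_le_mul_of_nonneg_left (inv_anti₀ hK hKN) (by positivity)
      _ = a := by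
          rw [hKdef]
          have h12s : (0:ℝ) < (12:ℝ)^s := by positivity
          field_simp
  -- ### scales
  set ρ : ℝ := min rμ 1 / 2 with hρdef
  have hρpos : 0 < ρ := by rw [hρdef]; positivity
  have hρ1 : ρ ≤ 1/2 := by rw [hρdef]; simp; linarith [min_le_right rμ 1]
  have hρrμ : ρ < rμ := by rw [hρdef]; rcases min_le_left rμ 1 with h; linarith [hrμ]
  set ρn : ℕ → ℝ := fun n => ρ * δ ^ n with hρn
  have hρnpos : ∀ n, 0 < ρn n := fun n => by rw [hρn]; positivity
  have hρnsucc : ∀ n, ρn (n+1) = δ * ρn n := fun n => by rw [hρn]; ring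
  have hρnle : ∀ n, ρn n ≤ ρ := fun n => by
    rw [hρn]
    calc ρ * δ ^ n ≤ ρ * 1 := by
          apply mul_le_mul_of_nonneg_left _ hρpos.le
          exact pow_le_one₀ hδpos.le hδ1.le
      _ = ρ := mul_one ρ
  have hρnrμ : ∀ n, ρn n < rμ := fun n => lt_of_le_of_lt (hρnle n) hρrμ
  have hρmono : ∀ {m n : ℕ}, m ≤ n → ρn n ≤ ρn m := by
    intro m n h
    exact mul_le_mul_of_nonneg_left (pow_le_pow_of_le_one hδpos.le hδ1.le h) hρpos.le
  -- ### children via packing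
  have hpack : ∀ (n : ℕ) (x : X), ∃ f : Fin N → X,
      (∀ i, dist (f i) x ≤ ρn n / 2) ∧
        ∀ i j, i ≠ j → 6 * ρn (n+1) < dist (f i) (f j) := by
    intro n x
    apply packing μ s a b rμ (fun x r h1 h2 => hreg x (mem_univ x) r h1 h2) N x
    · linarith [hρnpos n]
    · linarith [hρnrμ n, hrμ]
    · linarith [hρnpos (n+1)]
    · -- 6 * ρn (n+1) < rμ
      have := hρnsucc n
      have h6 : 6 * ρn (n+1) ≤ ρn n / 2 := by
        rw [this]; nlinarith [hρnpos n]
      linarith [hρnrμ n, hρnpos n]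
    · exact hb
    · -- count
      have hrw : 6 * ρn (n+1) = (12*δ) * (ρn n / 2) := by rw [hρnsucc n]; ring
      rw [hrw, Real.mul_rpow (by positivity) (by positivity)]
      calc (N:ℝ) * (b * ((12*δ)^s * (ρn n / 2)^s))
          = ((N:ℝ) * (b * (12*δ)^s)) * (ρn n / 2)^s := by ring
        _ ≤ a * (ρn n / 2)^s := by
            apply mul_le_mul_of_nonneg_right hNs (by positivity)
  choose c hc1 hc2 using hpack
  -- ### the tree of nodes
  set node : List (Fin N) → X :=
    fun w => List.rec (motive := fun _ => X) x₀ (fun i w' ih => c w'.length ih i) w with hnode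
  have node_cons : ∀ (i : Fin N) w, node (i :: w) = c w.length (node w) i := fun _ _ => rfl
  set word : (ℕ → Fin N) → ℕ → List (Fin N) :=
    fun ω n => Nat.rec [] (fun k ih => ω k :: ih) n with hword
  have word_succ : ∀ ω n, word ω (n+1) = ω n :: word ω n := fun _ _ => rfl
  have word_len : ∀ ω n, (word ω n).length = n := by
    intro ω n; induction n with
    | zero => rfl
    | succ n ih => rw [word_succ]; simp [ih]
  have hstep : ∀ ω n, dist (node (word ω (n+1))) (node (word ω n)) ≤ ρn n / 2 := by
    intro ω n
    rw [word_succ, node_cons]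
    rw [word_len]
    exact hc1 n (node (word ω n)) (ω n)
  have hchain : ∀ ω n k, dist (node (word ω n)) (node (word ω (n+k))) ≤ ρn n := by
    intro ω n k
    induction k generalizing n with
    | zero => simpa using (hρnpos n).le
    | succ k ih =>
      have h1 : n + (k+1) = (n+1) + k := by omega
      rw [h1]
      calc dist (node (word ω n)) (node (word ω ((n+1)+k)))
          ≤ dist (node (word ω n)) (node (word ω (n+1)))
            + dist (node (word ω (n+1))) (node (word ω ((n+1)+k))) := dist_triangle _ _ _
        _ ≤ ρn n / 2 + ρn (n+1) := by
            have := hstep ω n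
            rw [dist_comm] at this
            exact add_le_add this (ih (n+1))
        _ ≤ ρn n := by
            rw [hρnsucc n]; nlinarith [hρnpos n]
  have hcau : ∀ ω, ∃ y, Tendsto (fun n => node (word ω n)) atTop (𝓝 y) := by
    intro ω
    apply cauchySeq_tendsto_of_complete
    apply cauchySeq_of_le_geometric δ (ρ/2) hδ1
    intro n
    rw [dist_comm]
    calc dist (node (word ω (n+1))) (node (word ω n)) ≤ ρn n / 2 := hstep ω n
      _ = ρ/2 * δ ^ n := by rw [hρn]; ring
  choose π hπ using hcau
  have hdistπ : ∀ ω n, dist (node (word ω n)) (π ω) ≤ ρn n := by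
    intro ω n
    have hten : Tendsto (fun k => dist (node (word ω n)) (node (word ω (k+n)))) atTop
        (𝓝 (dist (node (word ω n)) (π ω))) := by
      apply Tendsto.dist tendsto_const_nhds
      exact (hπ ω).comp (tendsto_add_atTop_nat n)
    refine le_of_tendsto hten (Eventually.of_forall fun k => ?_)
    rw [Nat.add_comm]
    exact hchain ω n k
  have hword_eq : ∀ ω ω' n, (∀ k < n, ω k = ω' k) → word ω n = word ω' n := by
    intro ω ω' n h
    induction n with
    | zero => rfl
    | succ n ih =>
      rw [word_succ, word_succ, h n (by omega), ih (fun k hk => h k (by omega))]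
  have hclose : ∀ ω ω' n, (∀ k < n, ω k = ω' k) → dist (π ω) (π ω') ≤ 2 * ρn n := by
    intro ω ω' n h
    have hw := hword_eq ω ω' n h
    calc dist (π ω) (π ω') ≤ dist (π ω) (node (word ω n)) + dist (node (word ω' n)) (π ω') := by
          rw [hw]; exact dist_triangle _ _ _
      _ ≤ ρn n + ρn n := by
          rw [dist_comm]
          exact add_le_add (hdistπ ω n) (hdistπ ω' n)
      _ = 2 * ρn n := by ring
  have hsep : ∀ ω ω' k, (∀ j < k, ω j = ω' j) → ω k ≠ ω' k →
      4 * ρn (k+1) ≤ dist (π ω) (π ω') := by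
    intro ω ω' k hagree hne
    have hw : word ω k = word ω' k := hword_eq ω ω' k hagree
    have hsib : 6 * ρn (k+1) < dist (node (word ω (k+1))) (node (word ω' (k+1))) := by
      rw [word_succ, word_succ, node_cons, node_cons, word_len, word_len, hw]
      exact hc2 k (node (word ω' k)) (ω k) (ω' k) hne
    have h1 := hdistπ ω (k+1)
    have h2 := hdistπ ω' (k+1)
    have htri : dist (node (word ω (k+1))) (node (word ω' (k+1)))
        ≤ ρn (k+1) + dist (π ω) (π ω') + ρn (k+1) := by
      calc dist (node (word ω (k+1))) (node (word ω' (k+1)))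
          ≤ dist (node (word ω (k+1))) (π ω) + dist (π ω) (π ω')
            + dist (π ω') (node (word ω' (k+1))) := dist_triangle4 _ _ _ _
        _ ≤ ρn (k+1) + dist (π ω) (π ω') + ρn (k+1) := by
            rw [dist_comm (π ω')]
            exact add_le_add (add_le_add h1 le_rfl) h2
    linarith
  -- ### the set F
  set F : Set X := Set.range π with hF
  have hπcont : Continuous π := by
    rw [continuous_iff_continuousAt]
    intro ω
    rw [ContinuousAt, Metric.tendsto_nhds]
    intro ε hε
    obtain ⟨n, hn⟩ : ∃ n : ℕ, δ ^ n < ε / (2 * ρ) :=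
      exists_pow_lt_of_lt_one (by positivity) hδ1
    have hopen : IsOpen {ω' : ℕ → Fin N | ∀ k < n, ω' k = ω k} := by
      have : {ω' : ℕ → Fin N | ∀ k < n, ω' k = ω k}
          = ⋂ k ∈ Finset.range n, (fun ω' : ℕ → Fin N => ω' k) ⁻¹' {ω k} := by
        ext ω'; simp [Finset.mem_range]
      rw [this]
      exact isOpen_biInter_finset fun k _ =>
        (continuous_apply k).isOpen_preimage _ (isOpen_discrete _)
    filter_upwards [hopen.mem_nhds (fun k _ => rfl)] with ω' hω'
    calc dist (π ω') (π ω) ≤ 2 * ρn n := hclose ω' ω n hω'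
      _ = 2 * ρ * δ ^ n := by rw [hρn]; ring
      _ < 2 * ρ * (ε / (2*ρ)) := by
          apply mul_lt_mul_of_pos_left hn (by positivity)
      _ = ε := by field_simp
  have hFclosed : IsClosed F := (isCompact_range hπcont).isClosed
  -- ### digits map
  set e : ℝ → ℕ → Fin N := fun x j => ⟨dgt N x j % N, Nat.mod_lt _ hN0⟩ with he
  have hecoe : ∀ x j, ((e x j : ℕ)) = dgt N x j := by
    intro x j
    simp [he, Nat.mod_eq_of_lt (Nat.mod_lt _ hN0 : dgt N x j % N < N)]
    exact Nat.mod_eq_of_lt (Nat.mod_lt _ hN0)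
  have hemeas : Measurable e := by
    apply measurable_pi_lambda
    intro j
    exact (measurable_from_top
      (f := fun m : ℕ => (⟨m % N, Nat.mod_lt _ hN0⟩ : Fin N))).comp (dgt_measurable N j)
  set g : ℝ → X := fun x => π (e x) with hg
  have hgmeas : Measurable g := hπcont.measurable.comp hemeas
  set ν : Measure X := Measure.map g (volume.restrict (Ico (0:ℝ) 1)) with hνdef
  have hνapp : ∀ S : Set X, MeasurableSet S → ν S = volume (g ⁻¹' S ∩ Ico (0:ℝ) 1) := by
    intro S hS
    rw [hνdef, Measure.map_apply hgmeas hS, Measure.restrict_apply (hgmeas hS)]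
  have hνF : ν Fᶜ = 0 := by
    rw [hνapp _ hFclosed.measurableSet.compl]
    have hempty : g ⁻¹' Fᶜ = ∅ := by
      ext x'
      simp only [mem_preimage, mem_compl_iff, mem_empty_iff_false, iff_false, not_not, hF]
      exact mem_range_self _
    rw [hempty, empty_inter, measure_empty]
  have hAvol : ∀ (ω : ℕ → Fin N) (n : ℕ),
      volume {x' : ℝ | x' ∈ Ico (0:ℝ) 1 ∧ ∀ j < n, dgt N x' j = (ω j : ℕ)}
        = ENNReal.ofReal (((N:ℝ)^n)⁻¹) :=
    fun ω n => volume_digit_set N hN0 _ (fun j => (ω j).isLt) n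
  have hNn : ∀ k : ℕ, ((N:ℝ)^k)⁻¹ = (δ^k)^t := by
    intro k
    rw [← inv_pow, ← hδt, ← Real.rpow_natCast (δ^t) k, ← Real.rpow_natCast δ k,
      ← Real.rpow_mul hδpos.le, ← Real.rpow_mul hδpos.le, mul_comm]
  have hδtpos : 0 < δ ^ t := Real.rpow_pos_of_pos hδpos _
  have hρtpos : 0 < ρ ^ t := Real.rpow_pos_of_pos hρpos _
  have hρδtpos : 0 < (ρ*δ) ^ t := Real.rpow_pos_of_pos (by positivity) _
  set Aν : ℝ := (δ^t)^2 / ρ^t with hAνdef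
  set Bν : ℝ := ((ρ*δ)^t)⁻¹ with hBνdef
  refine ⟨F, ⟨π (fun _ => ⟨0, hN0⟩), mem_range_self _⟩, ν, Aν, Bν, ρ*δ,
    by positivity, ?_, by positivity, ?_, hνF⟩
  · -- Aν ≤ Bν
    have hδt1 : δ^t ≤ 1 := Real.rpow_le_one hδpos.le hδ1.le ht.le
    rw [hAνdef, hBνdef, Real.mul_rpow hρpos.le hδpos.le, inv_eq_one_div,
      div_le_div_iff₀ hρtpos (by positivity)]
    have h3 : (δ^t)^3 ≤ 1 := pow_le_one₀ hδtpos.le hδt1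
    nlinarith [hδtpos, hρtpos, h3]
  · -- regularity
    intro x hxF r hr hrν
    obtain ⟨ω, rfl⟩ := hxF
    have hρn1 : ρn 1 = ρ * δ := by rw [hρn]; ring
    have hex : ∃ m, ρn m ≤ r := by
      obtain ⟨m, hm⟩ := exists_pow_lt_of_lt_one (show (0:ℝ) < r/ρ by positivity) hδ1
      refine ⟨m, le_of_lt ?_⟩
      show ρ * δ ^ m < r
      rw [lt_div_iff₀ hρpos] at hm
      linarith
    set m₀ := Nat.find hex with hm₀def
    have hm₀ : ρn m₀ ≤ r := Nat.find_spec hex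
    have hm₀2 : 2 ≤ m₀ := by
      by_contra hcon
      push_neg at hcon
      have h1 : ρn 1 ≤ ρn m₀ := hρmono (by omega)
      rw [hρn1] at h1
      linarith
    set n := m₀ - 1 with hndef
    have hn1 : 1 ≤ n := by omega
    have hup : ρn (n+1) ≤ r := by rw [show n+1 = m₀ by omega]; exact hm₀
    have hlow : r < ρn n := not_le.mp (Nat.find_min hex (show n < m₀ by omega))
    constructor
    · -- lower bound
      have hsub : {x' : ℝ | x' ∈ Ico (0:ℝ) 1 ∧ ∀ j < n+2, dgt N x' j = (ω j : ℕ)}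
          ⊆ g ⁻¹' (closedBall (π ω) r) ∩ Ico (0:ℝ) 1 := by
        rintro x' ⟨hx'I, hx'd⟩
        have hagree : ∀ j < n+2, e x' j = ω j := fun j hj =>
          Fin.ext (by rw [hecoe]; exact hx'd j hj)
        refine ⟨?_, hx'I⟩
        simp only [mem_preimage, mem_closedBall, hg]
        calc dist (π (e x')) (π ω) ≤ 2 * ρn (n+2) := hclose _ _ _ hagree
          _ ≤ ρn (n+1) := by rw [hρnsucc (n+1)]; nlinarith [hρnpos (n+1)]
          _ ≤ r := hup
      have hreal : Aν * r^t ≤ ((N:ℝ)^(n+2))⁻¹ := by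
        have hr_t : r^t ≤ ρ^t * ((N:ℝ)^n)⁻¹ := by
          have h1 : r^t ≤ (ρn n)^t := Real.rpow_le_rpow hr.le hlow.le ht.le
          have h2 : (ρn n)^t = ρ^t * (δ^n)^t := by
            rw [hρn]; exact Real.mul_rpow hρpos.le (by positivity)
          rw [hNn n, ← h2]; exact h1
        calc Aν * r^t ≤ Aν * (ρ^t * ((N:ℝ)^n)⁻¹) :=
              mul_le_mul_of_nonneg_left hr_t (by positivity)
          _ = ((N:ℝ)^n)⁻¹ * (δ^t)^2 := by rw [hAνdef]; field_simp
          _ = ((N:ℝ)^(n+2))⁻¹ := by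
              rw [pow_add, mul_inv, hδt, inv_pow]
      calc ENNReal.ofReal (Aν * r^t) ≤ ENNReal.ofReal (((N:ℝ)^(n+2))⁻¹) :=
            ENNReal.ofReal_le_ofReal hreal
        _ = volume {x' : ℝ | x' ∈ Ico (0:ℝ) 1 ∧ ∀ j < n+2, dgt N x' j = (ω j : ℕ)} :=
            (hAvol ω (n+2)).symm
        _ ≤ volume (g ⁻¹' (closedBall (π ω) r) ∩ Ico (0:ℝ) 1) := measure_mono hsub
        _ = ν (closedBall (π ω) r) := (hνapp _ measurableSet_closedBall).symm
    · -- upper bound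
      have hsub : g ⁻¹' (closedBall (π ω) r) ∩ Ico (0:ℝ) 1
          ⊆ {x' : ℝ | x' ∈ Ico (0:ℝ) 1 ∧ ∀ j < n, dgt N x' j = (ω j : ℕ)} := by
        rintro x' ⟨hx'B, hx'I⟩
        refine ⟨hx'I, ?_⟩
        by_contra hcon
        push_neg at hcon
        obtain ⟨j₀, hj₀n, hj₀⟩ := hcon
        have hexk : ∃ k, e x' k ≠ ω k :=
          ⟨j₀, fun h => hj₀ (by rw [← hecoe x' j₀, h])⟩
        have hkmin : ∀ j < Nat.find hexk, e x' j = ω j :=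
          fun j hj => not_not.mp (Nat.find_min hexk hj)
        have hkn : Nat.find hexk < n :=
          lt_of_le_of_lt (Nat.find_min' hexk fun h => hj₀ (by rw [← hecoe x' j₀, h])) hj₀n
        have hd : 4 * ρn (Nat.find hexk + 1) ≤ dist (π (e x')) (π ω) :=
          hsep _ _ _ hkmin (Nat.find_spec hexk)
        have hdB : dist (π (e x')) (π ω) ≤ r := by
          have := hx'B
          simpa [hg, mem_preimage, mem_closedBall] using this
        have hmono2 : ρn n ≤ ρn (Nat.find hexk + 1) := hρmono (by omega)
        linarith [hρnpos (Nat.find hexk + 1)]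
      have hreal : ((N:ℝ)^n)⁻¹ ≤ Bν * r^t := by
        have h1 : (ρ*δ)^t * ((N:ℝ)^n)⁻¹ ≤ r^t := by
          have heq : (ρ*δ) * δ^n = ρn (n+1) := by
            show (ρ*δ) * δ^n = ρ * δ^(n+1)
            rw [pow_succ]; ring
          calc (ρ*δ)^t * ((N:ℝ)^n)⁻¹ = (ρ*δ)^t * (δ^n)^t := by rw [hNn n]
            _ = ((ρ*δ) * δ^n)^t := (Real.mul_rpow (by positivity) (by positivity)).symm
            _ = (ρn (n+1))^t := by rw [heq]
            _ ≤ r^t := Real.rpow_le_rpow (hρnpos _).le hup ht.le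
        calc ((N:ℝ)^n)⁻¹ = ((ρ*δ)^t)⁻¹ * ((ρ*δ)^t * ((N:ℝ)^n)⁻¹) := by
              field_simp
          _ ≤ ((ρ*δ)^t)⁻¹ * r^t :=
              mul_le_mul_of_nonneg_left h1 (inv_nonneg.mpr hρδtpos.le)
          _ = Bν * r^t := by rw [hBνdef]
      calc ν (closedBall (π ω) r)
          = volume (g ⁻¹' (closedBall (π ω) r) ∩ Ico (0:ℝ) 1) :=
            hνapp _ measurableSet_closedBall
        _ ≤ volume {x' : ℝ | x' ∈ Ico (0:ℝ) 1 ∧ ∀ j < n, dgt N x' j = (ω j : ℕ)} :=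
            measure_mono hsub
        _ = ENNReal.ofReal (((N:ℝ)^n)⁻¹) := hAvol ω n
        _ ≤ ENNReal.ofReal (Bν * r^t) := ENNReal.ofReal_le_ofReal hreal
end
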